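/- arXiv:2406.02330 — 7 statements merged into one kernel-verified Lean document; each statement's English description precedes it below -/
import Mathlib

section
/- Let H be an infinite-dimensional separable complex Hilbert space and U a bounded linear operator on H such that every bounded linear operator on H is similar to a scalar multiple of the restriction of U to some closed U-invariant subspace (i.e., U is universal). Then every bounded linear operator on H has a nontrivial closed invariant subspace if and only if every minimal nontrivial closed invariant subspace of U is one-dimensional. -/
open Complex

section Aux

/-- An orthonormal set in a separable inner product space is countable. -/
private lemma aux_countable {E : Type*} [NormedAddCommGroup E] [InnerProductSpace ℂ E]
    [TopologicalSpace.SeparableSpace E] {w : Set E}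
    (hw : Orthonormal ℂ ((↑) : w → E)) : w.Countable := by
  obtain ⟨D, hDc, hDd⟩ := TopologicalSpace.exists_countable_dense E
  haveI := hDc.to_subtype
  have key : ∀ v : w, ∃ d ∈ D, dist (v : E) d < 1/2 :=
    fun v => hDd.exists_dist_lt (v : E) (by norm_num)
  choose f hfD hfd using key
  have hinj : Function.Injective fun v : w => (⟨f v, hfD v⟩ : D) := by
    intro v v' h
    simp only [Subtype.mk.injEq] at h
    by_contra hne
    have hd1 := hfd v
    have hd2 := hfd v'
    rw [h] at hd1
    have h2 : dist (v : E) (v' : E) < 1 := by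
      have ht := dist_triangle (v : E) (f v') (v' : E)
      have hc : dist (f v') (v' : E) = dist (v' : E) (f v') := dist_comm _ _
      linarith
    have hnorm : ‖(v : E) - (v' : E)‖ ^ 2 = 2 := by
      rw [norm_sub_sq (𝕜 := ℂ) (v:E) (v':E)]
      rw [hw.2 hne, hw.1 v, hw.1 v']
      norm_num
    rw [dist_eq_norm] at h2
    nlinarith [norm_nonneg ((v : E) - (v' : E))]
  have : Countable ↥w := hinj.countable
  exact Set.countable_coe_iff.mp this

/-- An infinite-dimensional separable Hilbert space has a Hilbert basis indexed by `ℕ`. -/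
private lemma aux_basis (E : Type*) [NormedAddCommGroup E] [InnerProductSpace ℂ E]
    [CompleteSpace E] [TopologicalSpace.SeparableSpace E] (h : ¬ FiniteDimensional ℂ E) :
    Nonempty (HilbertBasis ℕ ℂ E) := by
  obtain ⟨w, b, hb⟩ := exists_hilbertBasis ℂ E
  have hbo : Orthonormal ℂ ((↑) : w → E) := hb ▸ b.orthonormal
  have hrange : Set.range ⇑b = w := by rw [hb, Subtype.range_coe]
  have hcount : w.Countable := aux_countable hbo
  have hinfinite : w.Infinite := by
    by_contra hfin
    rw [Set.not_infinite] at hfin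
    apply h
    haveI : FiniteDimensional ℂ (Submodule.span ℂ (Set.range ⇑b)) :=
      FiniteDimensional.span_of_finite ℂ (show (Set.range ⇑b).Finite by rw [hrange]; exact hfin)
    have h2 := b.dense_span
    rw [(Submodule.closed_of_finiteDimensional _).submodule_topologicalClosure_eq] at h2
    rw [h2] at this
    exact Module.Finite.equiv (Submodule.topEquiv)
  haveI := hcount.to_subtype
  haveI := hinfinite.to_subtype
  obtain ⟨d⟩ := nonempty_denumerable ↥w
  let e : ℕ ≃ ↥w := (Denumerable.eqv ↥w).symm
  have horth : Orthonormal ℂ (fun n => b (e n)) := b.orthonormal.comp e e.injective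
  refine ⟨HilbertBasis.mk horth ?_⟩
  have hre : Set.range (fun n => b (e n)) = Set.range ⇑b := by
    have : (fun n => b (e n)) = ⇑b ∘ e := rfl
    rw [this, e.surjective.range_comp]
  rw [hre]
  exact b.dense_span.ge

/-- Any two infinite-dimensional separable complex Hilbert spaces are isometrically
isomorphic. -/
private lemma aux_iso (E F : Type*) [NormedAddCommGroup E] [InnerProductSpace ℂ E]
    [CompleteSpace E] [TopologicalSpace.SeparableSpace E]
    [NormedAddCommGroup F] [InnerProductSpace ℂ F] [CompleteSpace F]
    [TopologicalSpace.SeparableSpace F] (hE : ¬ FiniteDimensional ℂ E)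
    (hF : ¬ FiniteDimensional ℂ F) : Nonempty (E ≃ₗᵢ[ℂ] F) := by
  obtain ⟨bE⟩ := aux_basis E hE
  obtain ⟨bF⟩ := aux_basis F hF
  exact ⟨bE.repr.trans bF.repr.symm⟩

end Aux

/-- If `U` is a universal operator on an infinite-dimensional separable complex
Hilbert space `H`, then every bounded operator on `H` has a nontrivial closed
invariant subspace if and only if every minimal nontrivial closed `U`-invariant
subspace is one-dimensional. -/
theorem universal_invariant_subspace_equivalence
    (H : Type*) [NormedAddCommGroup H] [InnerProductSpace ℂ H] [CompleteSpace H]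
    [TopologicalSpace.SeparableSpace H] (hinf : ¬ FiniteDimensional ℂ H)
    (U : H →L[ℂ] H)
    (huniv : ∀ T : H →L[ℂ] H, ∃ (lam : ℂ) (M : Submodule ℂ H),
      IsClosed (M : Set H) ∧ (∀ x ∈ M, U x ∈ M) ∧
      ∃ Φ : H ≃L[ℂ] M, ∀ x : H, (Φ (T x) : H) = lam • U ((Φ x : H))) :
    (∀ T : H →L[ℂ] H, ∃ M : Submodule ℂ H,
        IsClosed (M : Set H) ∧ M ≠ ⊥ ∧ M ≠ ⊤ ∧ ∀ x ∈ M, T x ∈ M) ↔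
    (∀ M : Submodule ℂ H,
        IsClosed (M : Set H) → M ≠ ⊥ → M ≠ ⊤ → (∀ x ∈ M, U x ∈ M) →
        (∀ N : Submodule ℂ H, IsClosed (N : Set H) → N ≠ ⊥ → N < M →
          ¬ (∀ x ∈ N, U x ∈ N)) →
        Module.finrank ℂ M = 1) := by
  haveI : Nontrivial H := by
    by_contra hns
    rw [not_nontrivial_iff_subsingleton] at hns
    exact hinf inferInstance
  constructor
  · -- forward direction
    intro hlhs M hMc hMb hMt hMU hmin
    by_cases hfd : FiniteDimensional ℂ ↥M
    · -- finite-dimensional case: eigenvector argument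
      haveI : Nontrivial ↥M := Submodule.nontrivial_iff_ne_bot.mpr hMb
      let f : Module.End ℂ ↥M := (U : H →ₗ[ℂ] H).restrict hMU
      obtain ⟨c, hc⟩ := Module.End.exists_eigenvalue f
      obtain ⟨v, hv⟩ := hc.exists_hasEigenvector
      have hvne : (v : H) ≠ 0 := fun h => hv.2 (Submodule.coe_eq_zero.mp h)
      have hUv : U (v : H) = c • (v : H) := by
        have h1 : ((f v : ↥M) : H) = U (v : H) := LinearMap.restrict_coe_apply _ _ _
        rw [hv.apply_eq_smul] at h1
        rw [← h1, Submodule.coe_smul]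
      set N := Submodule.span ℂ ({(v : H)} : Set H) with hN
      haveI hNfd : FiniteDimensional ℂ ↥N :=
        FiniteDimensional.span_of_finite ℂ (Set.finite_singleton _)
      have hNc : IsClosed (N : Set H) := Submodule.closed_of_finiteDimensional N
      have hNb : N ≠ ⊥ := fun h => hvne (Submodule.span_singleton_eq_bot.mp h)
      have hNle : N ≤ M := by
        rw [hN, Submodule.span_le, Set.singleton_subset_iff]; exact v.2
      have hNU : ∀ x ∈ N, U x ∈ N := by
        intro x hx
        rw [hN, Submodule.mem_span_singleton] at hx
        obtain ⟨a, rfl⟩ := hx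
        rw [map_smul, hUv]
        exact Submodule.smul_mem _ _ (Submodule.smul_mem _ _
          (Submodule.mem_span_singleton_self _))
      by_cases hNM : N = M
      · rw [← hNM]
        exact finrank_span_singleton hvne
      · exact absurd hNU (hmin N hNc hNb (lt_of_le_of_ne hNle hNM))
    · -- infinite-dimensional case: contradiction with LHS
      exfalso
      haveI : CompleteSpace ↥M := hMc.completeSpace_coe
      haveI : SecondCountableTopology H := UniformSpace.secondCountable_of_separable H
      obtain ⟨χ⟩ := aux_iso (↥M) H hfd hinf
      let ψ : ↥M ≃L[ℂ] H := χ.toContinuousLinearEquiv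
      let UM : ↥M →L[ℂ] ↥M := (U.comp M.subtypeL).codRestrict M (fun x => hMU x x.2)
      let T : H →L[ℂ] H := (ψ : ↥M →L[ℂ] H).comp (UM.comp (ψ.symm : H →L[ℂ] ↥M))
      obtain ⟨N, hNc, hNb, hNt, hNT⟩ := hlhs T
      let N' : Submodule ℂ H := (N.map (ψ.symm : H →ₗ[ℂ] ↥M)).map M.subtype
      have memN' : ∀ y : H, y ∈ N' ↔ ∃ n ∈ N, ((ψ.symm n : ↥M) : H) = y := by
        intro y
        constructor
        · intro hy
          obtain ⟨m, hm, rfl⟩ := Submodule.mem_map.mp hy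
          obtain ⟨n, hn, rfl⟩ := Submodule.mem_map.mp hm
          exact ⟨n, hn, rfl⟩
        · rintro ⟨n, hn, rfl⟩
          exact Submodule.mem_map_of_mem (Submodule.mem_map_of_mem hn)
      have hN'c : IsClosed (N' : Set H) := by
        have heq : (N' : Set H) = Subtype.val '' (⇑ψ.symm '' (N : Set H)) := by
          ext y
          simp only [Set.mem_image, SetLike.mem_coe, memN']
          constructor
          · rintro ⟨n, hn, rfl⟩; exact ⟨ψ.symm n, ⟨n, hn, rfl⟩, rfl⟩
          · rintro ⟨m, ⟨n, hn, rfl⟩, rfl⟩; exact ⟨n, hn, rfl⟩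
        rw [heq]
        exact hMc.isClosedEmbedding_subtypeVal.isClosedMap _
          (ψ.symm.toHomeomorph.isClosedMap _ hNc)
      have hN'b : N' ≠ ⊥ := by
        rw [Submodule.ne_bot_iff]
        obtain ⟨y, hyN, hy0⟩ := (Submodule.ne_bot_iff N).mp hNb
        refine ⟨((ψ.symm y : ↥M) : H), (memN' _).mpr ⟨y, hyN, rfl⟩, ?_⟩
        intro h
        apply hy0
        have h2 : (ψ.symm y : ↥M) = 0 := Submodule.coe_eq_zero.mp h
        have := ψ.symm.injective (h2.trans (map_zero ψ.symm).symm)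
        exact this
      have hN'le : N' ≤ M := Submodule.map_subtype_le M _
      have hN'ne : N' ≠ M := by
        intro hEq
        apply hNt
        rw [Submodule.eq_top_iff']
        intro y
        have hy : ((ψ.symm y : ↥M) : H) ∈ N' := by rw [hEq]; exact (ψ.symm y).2
        obtain ⟨n, hn, hny⟩ := (memN' _).mp hy
        have h2 : (ψ.symm n : ↥M) = ψ.symm y := Subtype.coe_injective hny
        have h3 : n = y := ψ.symm.injective h2
        rwa [← h3]
      have hN'U : ∀ x ∈ N', U x ∈ N' := by
        intro x hx
        obtain ⟨n, hn, rfl⟩ := (memN' x).mp hx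
        have key : U ((ψ.symm n : ↥M) : H) = ((ψ.symm (T n) : ↥M) : H) := by
          simp only [T, ContinuousLinearMap.coe_comp', Function.comp_apply,
            ContinuousLinearEquiv.coe_coe, ContinuousLinearEquiv.symm_apply_apply]
          rfl
        rw [key]
        exact (memN' _).mpr ⟨T n, hNT n hn, rfl⟩
      exact hmin N' hN'c hN'b (lt_of_le_of_ne hN'le hN'ne) hN'U
  · -- backward direction
    intro hmin T
    by_contra hT
    -- `U` has an eigenvector, obtained by applying universality to the identity
    obtain ⟨μ, M₀, _, _, Φ₀, hΦ₀⟩ := huniv 1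
    obtain ⟨x₀, hx₀⟩ := exists_ne (0 : H)
    have h1 : ((Φ₀ x₀ : ↥M₀) : H) = μ • U ((Φ₀ x₀ : ↥M₀) : H) := by
      simpa using hΦ₀ x₀
    set v : H := ((Φ₀ x₀ : ↥M₀) : H) with hv
    have hv0 : v ≠ 0 := by
      intro h
      apply hx₀
      have h2 : (Φ₀ x₀ : ↥M₀) = 0 := Submodule.coe_eq_zero.mp h
      exact Φ₀.injective (h2.trans (map_zero Φ₀).symm)
    have hμ : μ ≠ 0 := by
      rintro rfl
      rw [zero_smul] at h1
      exact hv0 h1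
    have hUv : U v = μ⁻¹ • v := by
      have h2 : μ⁻¹ • v = μ⁻¹ • (μ • U v) := by rw [← h1]
      rw [smul_smul, inv_mul_cancel₀ hμ, one_smul] at h2
      exact h2.symm
    set S := Submodule.span ℂ ({v} : Set H) with hS
    haveI hSfd : FiniteDimensional ℂ ↥S :=
      FiniteDimensional.span_of_finite ℂ (Set.finite_singleton _)
    have hSc : IsClosed (S : Set H) := Submodule.closed_of_finiteDimensional S
    have hSb : S ≠ ⊥ := fun h => hv0 (Submodule.span_singleton_eq_bot.mp h)
    have hSt : S ≠ ⊤ := by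
      intro h
      apply hinf
      rw [h] at hSfd
      exact Module.Finite.equiv (Submodule.topEquiv)
    have hSU : ∀ x ∈ S, U x ∈ S := by
      intro x hx
      rw [hS, Submodule.mem_span_singleton] at hx
      obtain ⟨a, rfl⟩ := hx
      rw [map_smul, hUv]
      exact Submodule.smul_mem _ _ (Submodule.smul_mem _ _
        (Submodule.mem_span_singleton_self _))
    obtain ⟨lam, M, hMc, hMU, Φ, hΦ⟩ := huniv T
    by_cases hlam : lam = 0
    · -- T = 0, so S is T-invariant
      apply hT
      refine ⟨S, hSc, hSb, hSt, ?_⟩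
      intro x _
      have hTx : T x = 0 := by
        have h2 := hΦ x
        rw [hlam, zero_smul] at h2
        have h3 : (Φ (T x) : ↥M) = 0 := Submodule.coe_eq_zero.mp h2
        exact Φ.injective (h3.trans (map_zero Φ).symm)
      rw [hTx]
      exact S.zero_mem
    · -- lam ≠ 0
      have noinv : ∀ N : Submodule ℂ H, IsClosed (N : Set H) → N ≠ ⊥ → N < M →
          ¬ (∀ x ∈ N, U x ∈ N) := by
        intro N hNc hNb hNM hNU
        apply hT
        let g : H →L[ℂ] H := M.subtypeL.comp (Φ : H →L[ℂ] ↥M)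
        have hg : ∀ x, g x = ((Φ x : ↥M) : H) := fun x => rfl
        refine ⟨N.comap (g : H →ₗ[ℂ] H), ?_, ?_, ?_, ?_⟩
        · have heq : ((N.comap (g : H →ₗ[ℂ] H) : Submodule ℂ H) : Set H) = ⇑g ⁻¹' N := rfl
          rw [heq]
          exact hNc.preimage g.continuous
        · rw [Submodule.ne_bot_iff]
          obtain ⟨y, hyN, hy0⟩ := (Submodule.ne_bot_iff N).mp hNb
          have hyM : y ∈ M := hNM.le hyN
          refine ⟨Φ.symm ⟨y, hyM⟩, ?_, ?_⟩
          · rw [Submodule.mem_comap]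
            show g (Φ.symm ⟨y, hyM⟩) ∈ N
            rw [hg, Φ.apply_symm_apply]
            exact hyN
          · intro h
            apply hy0
            have h2 : Φ.symm ⟨y, hyM⟩ = Φ.symm 0 := by rw [h, map_zero]
            have h3 := Φ.symm.injective h2
            exact congrArg Subtype.val h3
        · intro hEq
          obtain ⟨z, hzM, hzN⟩ := SetLike.exists_of_lt hNM
          apply hzN
          have hx : Φ.symm ⟨z, hzM⟩ ∈ N.comap (g : H →ₗ[ℂ] H) := by
            rw [hEq]; exact Submodule.mem_top
          rw [Submodule.mem_comap] at hx
          have h2 : g (Φ.symm ⟨z, hzM⟩) = z := by rw [hg, Φ.apply_symm_apply]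
          have hx' : g (Φ.symm ⟨z, hzM⟩) ∈ N := hx
          rwa [h2] at hx'
        · intro x hx
          rw [Submodule.mem_comap] at hx ⊢
          show g (T x) ∈ N
          rw [hg, hΦ x]
          exact Submodule.smul_mem _ _ (hNU _ hx)
      have hMt : M ≠ ⊤ := by
        intro hEq
        exact noinv S hSc hSb (hEq.symm ▸ lt_top_iff_ne_top.mpr hSt) hSU
      have hMb : M ≠ ⊥ := by
        rw [Submodule.ne_bot_iff]
        refine ⟨((Φ x₀ : ↥M) : H), (Φ x₀).2, ?_⟩
        intro h
        apply hx₀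
        have h2 : (Φ x₀ : ↥M) = 0 := Submodule.coe_eq_zero.mp h
        exact Φ.injective (h2.trans (map_zero Φ).symm)
      have h1 := hmin M hMc hMb hMt hMU noinv
      have hMfd : ¬ FiniteDimensional ℂ ↥M := by
        intro hfd
        exact hinf (Module.Finite.equiv Φ.symm.toLinearEquiv)
      rw [Module.finrank_of_infinite_dimensional hMfd] at h1
      exact zero_ne_one h1
end

section
/- (Caradus) Let H be an infinite-dimensional separable complex Hilbert space and T a bounded linear operator on H such that ker T is infinite-dimensional and T is surjective. Then T is universal: for every bounded linear operator S on H there exist λ ∈ ℂ, a closed T-invariant subspace M, and a continuous linear isomorphism Φ : H → M with Φ ∘ S = λ • (T|_M) ∘ Φ. -/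
open Complex

/-- An orthonormal set in a separable inner product space is countable. -/
theorem caradus_aux_countable {X : Type*} [NormedAddCommGroup X] [InnerProductSpace ℂ X]
    [TopologicalSpace.SeparableSpace X] {s : Set X}
    (h : Orthonormal ℂ ((↑) : s → X)) : s.Countable := by
  obtain ⟨t, hts, htc, hst⟩ :=
    (TopologicalSpace.IsSeparable.of_separableSpace s).exists_countable_dense_subset
  refine htc.mono fun x hx => ?_
  obtain ⟨y, hyt, hxy⟩ := Metric.mem_closure_iff.1 (hst hx) 1 one_pos
  have hxy' : x = y := by
    by_contra hne
    have hys : y ∈ s := hts hyt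
    have hinner : inner ℂ x y = (0 : ℂ) :=
      h.2 (i := ⟨x, hx⟩) (j := ⟨y, hys⟩) (by simp [Subtype.ext_iff, hne])
    have hnx : ‖x‖ = 1 := h.1 ⟨x, hx⟩
    have hny : ‖y‖ = 1 := h.1 ⟨y, hys⟩
    have hsq : ‖x - y‖ ^ 2 = 2 := by
      rw [@norm_sub_sq ℂ, hinner, hnx, hny]
      simp
      norm_num
    have : dist x y = ‖x - y‖ := dist_eq_norm x y
    nlinarith [norm_nonneg (x - y), hxy]
  exact hxy' ▸ hyt

/-- Any separable Hilbert space embeds isometrically into any infinite-dimensional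
Hilbert space. -/
theorem caradus_aux_isometry (X Y : Type*) [NormedAddCommGroup X] [InnerProductSpace ℂ X]
    [CompleteSpace X] [TopologicalSpace.SeparableSpace X]
    [NormedAddCommGroup Y] [InnerProductSpace ℂ Y] [CompleteSpace Y]
    (hY : ¬ FiniteDimensional ℂ Y) : Nonempty (X →ₗᵢ[ℂ] Y) := by
  obtain ⟨w, b, hb⟩ := exists_hilbertBasis ℂ X
  obtain ⟨w', b', hb'⟩ := exists_hilbertBasis ℂ Y
  have hw : w.Countable := caradus_aux_countable (by rw [← hb]; exact b.orthonormal)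
  have hw' : w'.Infinite := by
    by_contra hfin
    rw [Set.not_infinite] at hfin
    apply hY
    have h1 : FiniteDimensional ℂ (Submodule.span ℂ w') := FiniteDimensional.span_of_finite ℂ hfin
    have h2 : IsClosed ((Submodule.span ℂ w' : Submodule ℂ Y) : Set Y) :=
      Submodule.closed_of_finiteDimensional _
    have h3 : (Submodule.span ℂ (Set.range ⇑b')).topologicalClosure = ⊤ := b'.dense_span
    rw [hb', Subtype.range_coe] at h3
    rw [h2.submodule_topologicalClosure_eq] at h3
    rw [h3] at h1
    exact Submodule.topEquiv.finiteDimensional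
  haveI : Countable w := hw.to_subtype
  haveI : Infinite w' := hw'.to_subtype
  obtain ⟨fn, hfn⟩ := exists_injective_nat w
  set g : ℕ ↪ w' := Infinite.natEmbedding w'
  have hu : Orthonormal ℂ (⇑b' ∘ (fun i : w => g (fn i))) :=
    b'.orthonormal.comp _ (g.injective.comp hfn)
  exact ⟨(hu.orthogonalFamily.linearIsometry).comp b.repr.toLinearIsometry⟩

set_option maxHeartbeats 2000000 in
/-- **Caradus' theorem.** If `T` is a surjective bounded operator on an
infinite-dimensional separable complex Hilbert space `H` whose kernel is
infinite-dimensional, then `T` is universal: every bounded operator `S` on `H`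
is similar to a scalar multiple of the restriction of `T` to a closed
`T`-invariant subspace. -/
theorem caradus_universal
    (H : Type*) [NormedAddCommGroup H] [InnerProductSpace ℂ H] [CompleteSpace H]
    [TopologicalSpace.SeparableSpace H] (hinf : ¬ FiniteDimensional ℂ H)
    (T : H →L[ℂ] H)
    (hker : ¬ FiniteDimensional ℂ (LinearMap.ker (T : H →ₗ[ℂ] H)))
    (hsurj : Function.Surjective T) :
    ∀ S : H →L[ℂ] H, ∃ (lam : ℂ) (M : Submodule ℂ H),
      IsClosed (M : Set H) ∧ (∀ x ∈ M, T x ∈ M) ∧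
      ∃ Φ : H ≃L[ℂ] M, ∀ x : H, (Φ (S x) : H) = lam • T ((Φ x : H)) := by
  intro S
  set K : Submodule ℂ H := T.ker with hK
  have hKclosed : IsClosed (K : Set H) := ContinuousLinearMap.isClosed_ker T
  haveI : CompleteSpace K := hKclosed.completeSpace_coe
  haveI : TopologicalSpace.SeparableSpace K :=
    (TopologicalSpace.IsSeparable.of_separableSpace (K : Set H)).separableSpace
  obtain ⟨J0⟩ := caradus_aux_isometry H K hker
  set J : H →L[ℂ] H := K.subtypeL.comp J0.toContinuousLinearMap with hJ
  have hJval : ∀ x, J x = (J0 x : H) := fun x => rfl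
  have hJnorm : ∀ x, ‖J x‖ = ‖x‖ := fun x => by
    rw [hJval]; rw [Submodule.norm_coe]; exact J0.norm_map x
  have hJmem : ∀ x, J x ∈ K := fun x => (J0 x).2
  have hTJ : ∀ x, T (J x) = 0 := fun x => hJmem x
  -- right inverse B of T with values in Kᗮ
  haveI : CompleteSpace Kᗮ := K.isClosed_orthogonal.completeSpace_coe
  set T' : Kᗮ →L[ℂ] H := T.comp Kᗮ.subtypeL with hT'
  have hker' : T'.ker = ⊥ := by
    rw [Submodule.eq_bot_iff]
    rintro ⟨x, hx⟩ hmem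
    have hxK : x ∈ K := by
      exact LinearMap.mem_ker.mpr (by simpa [hT'] using hmem)
    have : x = 0 := by
      have hm : x ∈ K ⊓ Kᗮ := ⟨hxK, hx⟩
      have := (Submodule.orthogonal_disjoint K).le_bot hm
      simpa using this
    exact Subtype.ext this
  have hrange' : T'.range = ⊤ := by
    rw [LinearMap.range_eq_top]
    intro y
    obtain ⟨x, hx⟩ := hsurj y
    refine ⟨⟨x - (K.orthogonalProjectionOnto x : H), Submodule.sub_starProjection_mem_orthogonal x⟩, ?_⟩
    have hPx : T ((K.orthogonalProjectionOnto x : H)) = 0 := (K.orthogonalProjectionOnto x).2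
    simp [hT', map_sub, hPx, hx]
    exact hPx
  set e : Kᗮ ≃L[ℂ] H := ContinuousLinearEquiv.ofBijective T' hker' hrange' with he
  have heq : ∀ z, e z = T' z := fun z => by
    rw [he, ContinuousLinearEquiv.coeFn_ofBijective]
  set B : H →L[ℂ] H := Kᗮ.subtypeL.comp e.symm.toContinuousLinearMap with hB
  have hTB : ∀ y, T (B y) = y := by
    intro y
    have : T (B y) = T' (e.symm y) := rfl
    rw [this, ← heq, e.apply_symm_apply]
  have hBmem : ∀ y, B y ∈ Kᗮ := fun y => (e.symm y).2
  -- the scalar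
  set a : ℝ := (2 * (‖B‖ + 1) * (‖S‖ + 1))⁻¹ with ha
  have hapos : 0 < a := by
    rw [ha]
    positivity
  have hkey : a * (‖B‖ * ‖S‖) ≤ 1 / 2 := by
    have hc : (0:ℝ) < 2 * (‖B‖ + 1) * (‖S‖ + 1) := by positivity
    have h1 : ‖B‖ * ‖S‖ ≤ (‖B‖ + 1) * (‖S‖ + 1) := by
      nlinarith [norm_nonneg B, norm_nonneg S]
    have h2 : a * (2 * (‖B‖ + 1) * (‖S‖ + 1)) = 1 := by
      rw [ha]; field_simp
    nlinarith [hapos.le]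
  -- the series
  set f : ℕ → (H →L[ℂ] H) :=
    fun n => ((a : ℂ) ^ n) • ((B ^ n).comp (J.comp (S ^ n))) with hf
  have hJop : ‖J‖ ≤ 1 := by
    refine ContinuousLinearMap.opNorm_le_bound _ zero_le_one fun x => ?_
    rw [hJnorm, one_mul]
  have hpow : ∀ (C : H →L[ℂ] H) (n : ℕ), ‖C ^ n‖ ≤ ‖C‖ ^ n := by
    intro C n
    induction n with
    | zero => rw [pow_zero, pow_zero]; exact ContinuousLinearMap.norm_id_le
    | succ m ih =>
      rw [pow_succ, pow_succ]
      calc ‖C ^ m * C‖ ≤ ‖C ^ m‖ * ‖C‖ := norm_mul_le _ _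
        _ ≤ ‖C‖ ^ m * ‖C‖ := by
            exact mul_le_mul_of_nonneg_right ih (norm_nonneg _)
  have hfb : ∀ n, ‖f n‖ ≤ (1 / 2 : ℝ) ^ n := by
    intro n
    have h1 : ‖f n‖ ≤ a ^ n * (‖B‖ ^ n * (1 * ‖S‖ ^ n)) := by
      rw [hf]
      simp only [norm_smul, norm_pow, Complex.norm_real, Real.norm_eq_abs,
        abs_of_pos hapos]
      refine mul_le_mul_of_nonneg_left ?_ (by positivity)
      calc ‖(B ^ n).comp (J.comp (S ^ n))‖ ≤ ‖B ^ n‖ * ‖J.comp (S ^ n)‖ :=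
            ContinuousLinearMap.opNorm_comp_le _ _
        _ ≤ ‖B ^ n‖ * (‖J‖ * ‖S ^ n‖) := by
            exact mul_le_mul_of_nonneg_left (ContinuousLinearMap.opNorm_comp_le _ _)
              (norm_nonneg _)
        _ ≤ ‖B‖ ^ n * (1 * ‖S‖ ^ n) := by
            refine mul_le_mul (hpow B n) ?_ (by positivity) (by positivity)
            exact mul_le_mul hJop (hpow S n) (norm_nonneg _) zero_le_one
    have h2 : a ^ n * (‖B‖ ^ n * (1 * ‖S‖ ^ n)) = (a * (‖B‖ * ‖S‖)) ^ n := by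
      ring
    rw [h2] at h1
    refine h1.trans (pow_le_pow_left₀ (by positivity) hkey n)
  have hsummf : Summable f := by
    refine Summable.of_norm (Summable.of_nonneg_of_le (fun n => norm_nonneg _) hfb ?_)
    exact summable_geometric_of_lt_one (by norm_num) (by norm_num)
  set Φ : H →L[ℂ] H := ∑' n, f n with hΦdef
  have hΦ : ∀ x, HasSum (fun n => f n x) (Φ x) := by
    intro x
    have := hsummf.hasSum.mapL (ContinuousLinearMap.apply ℂ H x)
    simpa using this
  -- key identity
  have key1 : ∀ x, T (Φ x) = (a : ℂ) • Φ (S x) := by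
    intro x
    have h1 : HasSum (fun n => T (f n x)) (T (Φ x)) := (hΦ x).mapL T
    have h2 : HasSum (fun n => (a : ℂ) • f n (S x)) ((a : ℂ) • Φ (S x)) :=
      (hΦ (S x)).const_smul _
    have h3 : (fun n => (a : ℂ) • f n (S x)) = fun n => T (f (n + 1) x) := by
      funext n
      have hB1 : (B ^ (n + 1)) (J ((S ^ (n + 1)) x)) = B ((B ^ n) (J ((S ^ n) (S x)))) := by
        rw [pow_succ' B, pow_succ S]
        simp [ContinuousLinearMap.mul_apply]
      rw [hf]
      simp only [ContinuousLinearMap.smul_apply, ContinuousLinearMap.comp_apply, map_smul]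
      rw [hB1, hTB, smul_smul, ← pow_succ' (a : ℂ)]
    rw [h3] at h2
    have h4 := (hasSum_nat_add_iff (f := fun n => T (f n x)) 1).mp h2
    have h5 : ∑ i ∈ Finset.range 1, T (f i x) = 0 := by
      rw [Finset.sum_range_one]
      have : f 0 x = J x := by
        rw [hf]; simp
      rw [this, hTJ]
    rw [h5, add_zero] at h4
    exact h1.unique h4
  -- lower bound
  have key2 : ∀ x, ‖x‖ ≤ ‖Φ x‖ := by
    intro x
    have hP : HasSum (fun n => K.orthogonalProjectionOnto (f n x))
        (K.orthogonalProjectionOnto (Φ x)) := (hΦ x).mapL (K.orthogonalProjectionOnto)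
    have h0 : ∀ n, n ≠ 0 → K.orthogonalProjectionOnto (f n x) = 0 := by
      intro n hn
      obtain ⟨m, rfl⟩ := Nat.exists_eq_succ_of_ne_zero hn
      have hmem : (B ^ (m + 1)) (J ((S ^ (m + 1)) x)) ∈ Kᗮ := by
        rw [pow_succ' B]
        rw [ContinuousLinearMap.mul_apply]
        exact hBmem _
      rw [hf]
      simp only [ContinuousLinearMap.smul_apply, ContinuousLinearMap.comp_apply, map_smul]
      rw [Submodule.orthogonalProjectionOnto_apply_of_mem_orthogonal hmem, smul_zero]
    have hsingle : HasSum (fun n => K.orthogonalProjectionOnto (f n x))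
        (K.orthogonalProjectionOnto (f 0 x)) := hasSum_single 0 h0
    have hPx : K.orthogonalProjectionOnto (Φ x) = J0 x := by
      have h5 : K.orthogonalProjectionOnto (f 0 x) = J0 x := by
        have : f 0 x = ((J0 x : K) : H) := by rw [hf]; simp [hJval]
        rw [this]
        exact Submodule.orthogonalProjectionOnto_mem_subspace_eq_self (J0 x)
      exact hP.unique (h5 ▸ hsingle)
    calc ‖x‖ = ‖J0 x‖ := (J0.norm_map x).symm
      _ = ‖K.orthogonalProjectionOnto (Φ x)‖ := by rw [hPx]
      _ ≤ ‖(K.orthogonalProjectionOnto : H →L[ℂ] K)‖ * ‖Φ x‖ :=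
          ContinuousLinearMap.le_opNorm _ _
      _ ≤ 1 * ‖Φ x‖ :=
          mul_le_mul_of_nonneg_right (Submodule.orthogonalProjectionOnto_norm_le K) (norm_nonneg _)
      _ = ‖Φ x‖ := one_mul _
  -- the subspace
  set M : Submodule ℂ H := Φ.range with hM
  have hMclosed : IsClosed (M : Set H) := by
    have hanti : AntilipschitzWith 1 Φ := by
      refine ContinuousLinearMap.antilipschitz_of_bound Φ fun x => ?_
      simpa using key2 x
    have := hanti.isClosed_range Φ.uniformContinuous
    rw [hM]
    convert this using 1
    exact LinearMap.coe_range _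
  have hinv : ∀ x ∈ M, T x ∈ M := by
    rintro x ⟨y, rfl⟩
    refine ⟨(a : ℂ) • S y, ?_⟩
    rw [map_smul]; exact (key1 y).symm
  haveI : CompleteSpace M := hMclosed.completeSpace_coe
  set Φc : H →L[ℂ] M := Φ.codRestrict M (fun x => LinearMap.mem_range_self _ x) with hΦc
  have hkerc : Φc.ker = ⊥ := by
    rw [Submodule.eq_bot_iff]
    intro x hx
    have h1 : Φ x = 0 := by
      have : (Φc x : H) = (0 : M) := by rw [show Φc x = 0 from LinearMap.mem_ker.mp hx]
      simpa [hΦc] using this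
    have := key2 x
    rw [h1, norm_zero] at this
    exact norm_le_zero_iff.mp this
  have hranc : Φc.range = ⊤ := by
    rw [LinearMap.range_eq_top]
    rintro ⟨y, x, rfl⟩
    exact ⟨x, rfl⟩
  set e2 : H ≃L[ℂ] M := ContinuousLinearEquiv.ofBijective Φc hkerc hranc with he2def
  have he2 : ∀ z, (e2 z : H) = Φ z := fun z => by
    rw [he2def, ContinuousLinearEquiv.coeFn_ofBijective]
    rfl
  have haC : (a : ℂ) ≠ 0 := Complex.ofReal_ne_zero.mpr hapos.ne'
  refine ⟨(a : ℂ)⁻¹, M, hMclosed, hinv, e2, fun x => ?_⟩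
  rw [he2, he2, key1 x, smul_smul, inv_mul_cancel₀ haC, one_smul]
end

section
/- Let ψ be a hyperbolic automorphism of 𝔻 with fixed points a (attractive), b (repulsive) on ∂𝔻, and μ, ν ≥ 0. Then lim_{𝔻 ∋ z → a} ω_{μ,ν}(ψ(z))/ω_{μ,ν}(z) = (ψ'(a))^μ and lim_{𝔻 ∋ z → b} ω_{μ,ν}(ψ(z))/ω_{μ,ν}(z) = (ψ'(b))^ν, taking the limit of the modulus. -/
open Complex Filter Metric Set

noncomputable section

/-- A hyperbolic automorphism of the open unit disc `𝔻`, with attractive fixed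
point `a` and repulsive fixed point `b` on the unit circle, and (real) derivative
values `da = ψ'(a) ∈ (0,1)`, `db = ψ'(b) ∈ (1,∞)` with `da * db = 1`. -/
structure HypAuto where
  ψ : ℂ → ℂ
  a : ℂ
  b : ℂ
  da : ℝ
  db : ℝ
  ha : ‖a‖ = 1
  hb : ‖b‖ = 1
  hab : a ≠ b
  holo : ∃ R > 1, DifferentiableOn ℂ ψ (ball (0:ℂ) R)
  bij : BijOn ψ (ball (0:ℂ) 1) (ball (0:ℂ) 1)
  noFix : ∀ z ∈ ball (0:ℂ) 1, ψ z ≠ z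
  fixa : ψ a = a
  fixb : ψ b = b
  hda : deriv ψ a = (da : ℂ)
  hdb : deriv ψ b = (db : ℂ)
  hda1 : 0 < da ∧ da < 1
  hdb1 : 1 < db
  hmulder : da * db = 1
  attract : ∀ z ∈ ball (0:ℂ) 1, Tendsto (fun n => ψ^[n] z) atTop (nhds a)


lemma slope_tendsto (ψ : ℂ → ℂ) (c : ℂ) (hc : ‖c‖ = 1)
    (hd : DifferentiableAt ℂ ψ c) (hfix : ψ c = c) :
    Tendsto (fun z => (c - ψ z) / (c - z)) (nhdsWithin c (ball (0:ℂ) 1))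
      (nhds (deriv ψ c)) := by
  have h1 : Tendsto (slope ψ c) (nhdsWithin c {c}ᶜ) (nhds (deriv ψ c)) :=
    hasDerivAt_iff_tendsto_slope.mp hd.hasDerivAt
  have hsub : ball (0:ℂ) 1 ⊆ {c}ᶜ := by
    intro z hz hzc
    rw [Set.mem_singleton_iff.mp hzc] at hz
    simp [mem_ball, dist_zero_right, hc] at hz
  have h2 := h1.mono_left (nhdsWithin_mono c hsub)
  refine h2.congr (fun z => ?_)
  rw [slope_def_field, hfix, ← neg_div_neg_eq, neg_sub, neg_sub]

lemma cross_tendsto (ψ : ℂ → ℂ) (c c' : ℂ) (hd : DifferentiableAt ℂ ψ c)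
    (hfix : ψ c = c) (hne : c' - c ≠ 0) :
    Tendsto (fun z => (c' - ψ z) / (c' - z)) (nhdsWithin c (ball (0:ℂ) 1))
      (nhds 1) := by
  have hcont : Tendsto ψ (nhdsWithin c (ball (0:ℂ) 1)) (nhds c) := by
    have := hd.continuousAt.tendsto
    rw [hfix] at this
    exact this.mono_left nhdsWithin_le_nhds
  have hnum : Tendsto (fun z => c' - ψ z) (nhdsWithin c (ball (0:ℂ) 1)) (nhds (c' - c)) :=
    tendsto_const_nhds.sub hcont
  have hden : Tendsto (fun z => c' - z) (nhdsWithin c (ball (0:ℂ) 1)) (nhds (c' - c)) :=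
    tendsto_const_nhds.sub (tendsto_id.mono_left nhdsWithin_le_nhds)
  have := hnum.div hden hne
  rw [div_self hne] at this
  exact this

lemma abs_expr_eq (a b : ℂ) (μ ν : ℝ) (ψ : ℂ → ℂ) (z : ℂ) :
    ‖((a - ψ z) ^ (μ : ℂ) * (b - ψ z) ^ (ν : ℂ)) /
        ((a - z) ^ (μ : ℂ) * (b - z) ^ (ν : ℂ))‖ =
    ‖(a - ψ z) / (a - z)‖ ^ μ * ‖(b - ψ z) / (b - z)‖ ^ ν := by
  rw [norm_div, norm_mul, norm_mul, norm_div, norm_div,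
    Complex.norm_cpow_real, Complex.norm_cpow_real, Complex.norm_cpow_real,
    Complex.norm_cpow_real,
    Real.div_rpow (norm_nonneg _) (norm_nonneg _),
    Real.div_rpow (norm_nonneg _) (norm_nonneg _),
    div_mul_div_comm]

/-- `lim_{𝔻∋z→a} |ω_{μ,ν}(ψ z)/ω_{μ,ν}(z)| = ψ'(a)^μ` and
`lim_{𝔻∋z→b} |ω_{μ,ν}(ψ z)/ω_{μ,ν}(z)| = ψ'(b)^ν`, where
`ω_{μ,ν}(z) = (a-z)^μ (b-z)^ν`. -/
theorem omega_quotient_limits (h : HypAuto) (μ ν : ℝ) (hμ : 0 ≤ μ) (hν : 0 ≤ ν) :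
    Tendsto
      (fun z : ℂ => ‖
        (((h.a - h.ψ z) ^ (μ : ℂ) * (h.b - h.ψ z) ^ (ν : ℂ)) /
          ((h.a - z) ^ (μ : ℂ) * (h.b - z) ^ (ν : ℂ)))‖)
      (nhdsWithin h.a (ball (0:ℂ) 1)) (nhds (h.da ^ μ)) ∧
    Tendsto
      (fun z : ℂ => ‖
        (((h.a - h.ψ z) ^ (μ : ℂ) * (h.b - h.ψ z) ^ (ν : ℂ)) /
          ((h.a - z) ^ (μ : ℂ) * (h.b - z) ^ (ν : ℂ)))‖)
      (nhdsWithin h.b (ball (0:ℂ) 1)) (nhds (h.db ^ ν)) := by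
  obtain ⟨R, hR, hdiff⟩ := h.holo
  have hmem : ∀ c : ℂ, ‖c‖ = 1 → DifferentiableAt ℂ h.ψ c := fun c hc =>
    hdiff.differentiableAt (isOpen_ball.mem_nhds (by
      simp [mem_ball, dist_zero_right, hc, hR]))
  constructor
  · have hsa := slope_tendsto h.ψ h.a h.ha (hmem _ h.ha) h.fixa
    rw [h.hda] at hsa
    have t1 : Tendsto (fun z => ‖(h.a - h.ψ z) / (h.a - z)‖)
        (nhdsWithin h.a (ball (0:ℂ) 1)) (nhds h.da) := by
      simpa [Function.comp_def, norm_div, Complex.norm_real, Real.norm_eq_abs, abs_of_pos h.hda1.1] using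
        (continuous_norm.tendsto _).comp hsa
    have hcb := cross_tendsto h.ψ h.a h.b (hmem _ h.ha) h.fixa
      (sub_ne_zero.mpr h.hab.symm)
    have t2 : Tendsto (fun z => ‖(h.b - h.ψ z) / (h.b - z)‖)
        (nhdsWithin h.a (ball (0:ℂ) 1)) (nhds 1) := by
      simpa [Function.comp_def, norm_div] using (continuous_norm.tendsto _).comp hcb
    have := (t1.rpow_const (Or.inr hμ)).mul (t2.rpow_const (Or.inr hν))
    simp only [Real.one_rpow, mul_one] at this
    simpa only [abs_expr_eq] using this
  · have hsb := slope_tendsto h.ψ h.b h.hb (hmem _ h.hb) h.fixb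
    rw [h.hdb] at hsb
    have t2 : Tendsto (fun z => ‖(h.b - h.ψ z) / (h.b - z)‖)
        (nhdsWithin h.b (ball (0:ℂ) 1)) (nhds h.db) := by
      simpa [Function.comp_def, norm_div, Complex.norm_real, Real.norm_eq_abs, abs_of_pos (by linarith [h.hdb1] : (0:ℝ) < h.db)] using
        (continuous_norm.tendsto _).comp hsb
    have hca := cross_tendsto h.ψ h.b h.a (hmem _ h.hb) h.fixb
      (sub_ne_zero.mpr h.hab)
    have t1 : Tendsto (fun z => ‖(h.a - h.ψ z) / (h.a - z)‖)
        (nhdsWithin h.b (ball (0:ℂ) 1)) (nhds 1) := by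
      simpa [Function.comp_def, norm_div] using (continuous_norm.tendsto _).comp hca
    have := (t1.rpow_const (Or.inr hμ)).mul (t2.rpow_const (Or.inr hν))
    simp only [Real.one_rpow, one_mul] at this
    simpa only [abs_expr_eq] using this
end
end

section
/- Let ψ be a hyperbolic automorphism of 𝔻 with attractive fixed point a and repulsive fixed point b, and u a bounded holomorphic function on 𝔻 bounded away from zero. Define u_n = ∏_{j=0}^{n−1} u∘ψ_j where ψ_j is the j-th iterate of ψ. Then lim_{n→∞} (sup_{z∈𝔻} |u_n(z)|)^{1/n} ≤ max{A⁺, B⁺}, where A⁺ = limsup_{z→a} |u(z)| and B⁺ = limsup_{z→b} |u(z)|. -/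
open Complex Filter Metric Set
open Function Topology
open scoped Classical

noncomputable section

/-- The set-theoretic inverse of a holomorphic bijection of the unit ball is holomorphic. -/
lemma aux_inv_diff {f g : ℂ → ℂ} (hd : DifferentiableOn ℂ f (ball (0:ℂ) 1))
    (hbij : BijOn f (ball (0:ℂ) 1) (ball (0:ℂ) 1))
    (hg : ∀ w ∈ ball (0:ℂ) 1, g w ∈ ball (0:ℂ) 1 ∧ f (g w) = w)
    (hgf : ∀ z ∈ ball (0:ℂ) 1, g (f z) = z) :
    DifferentiableOn ℂ g (ball (0:ℂ) 1) := by
  have hA : AnalyticOnNhd ℂ f (ball (0:ℂ) 1) := hd.analyticOnNhd isOpen_ball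
  have h0mem : (0:ℂ) ∈ ball (0:ℂ) 1 := by simp
  have hhalf : (1/2 : ℂ) ∈ ball (0:ℂ) 1 := by
    simp [mem_ball, dist_eq, abs_of_pos]
    norm_num
  -- open mapping
  have hopen : ∀ s ⊆ ball (0:ℂ) 1, IsOpen s → IsOpen (f '' s) := by
    rcases hA.is_constant_or_isOpen (convex_ball (0:ℂ) 1).isPreconnected with hc | ho
    · exfalso
      obtain ⟨w, hw⟩ := hc
      have := hbij.injOn (by exact h0mem) (by exact hhalf)
        (by rw [hw 0 h0mem, hw _ hhalf])
      norm_num at this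
    · exact ho
  -- continuity of g
  have hcont : ∀ w ∈ ball (0:ℂ) 1, ContinuousAt g w := by
    intro w hw
    obtain ⟨hgw, hfgw⟩ := hg w hw
    rw [ContinuousAt, Filter.tendsto_def]
    intro N hN
    obtain ⟨O, hON, hOopen, hzO⟩ := _root_.mem_nhds_iff.1 hN
    have hW : IsOpen (f '' (O ∩ ball (0:ℂ) 1)) :=
      hopen _ inter_subset_right (hOopen.inter isOpen_ball)
    have hwW : w ∈ f '' (O ∩ ball (0:ℂ) 1) := ⟨g w, ⟨hzO, hgw⟩, hfgw⟩
    refine mem_of_superset (hW.mem_nhds hwW) ?_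
    rintro y ⟨x, ⟨hxO, hxB⟩, rfl⟩
    simpa [hgf x hxB] using hON hxO
  -- differentiability where the derivative doesn't vanish
  have hdne : ∀ w ∈ ball (0:ℂ) 1, deriv f (g w) ≠ 0 → DifferentiableAt ℂ g w := by
    intro w hw hne
    obtain ⟨hgw, hfgw⟩ := hg w hw
    obtain ⟨p, hp⟩ := hA _ hgw
    have hs0 := hp.hasStrictDerivAt
    have heq : deriv f (g w) = p 1 fun _ => 1 := hp.deriv
    rw [← heq] at hs0
    have hloc : ∀ᶠ x in 𝓝 (g w), g (f x) = x := by
      filter_upwards [isOpen_ball.mem_nhds hgw] with x hx using hgf x hx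
    have hinv := hs0.to_local_left_inverse hne hloc
    rw [hfgw] at hinv
    exact HasStrictFDerivAt.differentiableAt hinv
  -- main argument with removable singularities
  intro w hw
  obtain ⟨hgw, hfgw⟩ := hg w hw
  have hAd : AnalyticAt ℂ (deriv f) (g w) := (hA.deriv _ hgw)
  have hpunct : ∀ᶠ y in 𝓝[≠] w, DifferentiableAt ℂ g y := by
    rcases hAd.eventually_eq_zero_or_eventually_ne_zero with hz | hnz
    · -- deriv f vanishes near g w : f locally constant, contradiction with injectivity
      exfalso
      have hball : ∀ᶠ x in 𝓝 (g w), x ∈ ball (0:ℂ) 1 := isOpen_ball.mem_nhds hgw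
      obtain ⟨r, hr0, hrsub⟩ := Metric.eventually_nhds_iff_ball.1 (hz.and hball)
      have hconst : ∀ x ∈ ball (g w) r, f x = f (g w) := by
        intro x hx
        refine (convex_ball (g w) r).is_const_of_fderivWithin_eq_zero
          (hd.mono fun y hy => (hrsub y hy).2) ?_ hx (mem_ball_self hr0)
        intro y hy
        rw [fderivWithin_of_isOpen isOpen_ball hy]
        have : deriv f y = 0 := (hrsub y hy).1
        ext
        simp [← toSpanSingleton_deriv, this]
      have h1 : g w + r/2 ∈ ball (g w) r := by
        simp [mem_ball, dist_eq, abs_of_pos, hr0]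
      have := hbij.injOn ((hrsub _ h1).2) hgw (by rw [hconst _ h1])
      simp only [add_eq_left] at this
      norm_num [Complex.ext_iff] at this
      linarith
    · -- deriv f ≠ 0 on punctured neighborhood of g w
      obtain ⟨O, hOsub, hOopen, hzO⟩ := _root_.mem_nhds_iff.1
        ((eventually_nhdsWithin_iff.1 hnz).and (isOpen_ball.mem_nhds hgw))
      have hW : IsOpen (f '' O) := hopen _ (fun x hx => (hOsub hx).2) hOopen
      have hwW : w ∈ f '' O := ⟨g w, hzO, hfgw⟩
      rw [eventually_nhdsWithin_iff]
      filter_upwards [hW.mem_nhds hwW] with y hy hyne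
      obtain ⟨x, hxO, rfl⟩ := hy
      have hxB : x ∈ ball (0:ℂ) 1 := (hOsub hxO).2
      have hgy : g (f x) = x := hgf x hxB
      have hxne : x ≠ g w := by
        rintro rfl
        exact hyne (by rw [hfgw]; exact rfl)
      have : deriv f x ≠ 0 := (hOsub hxO).1 hxne
      have hfx : f x ∈ ball (0:ℂ) 1 := hbij.mapsTo hxB
      refine hdne _ hfx ?_
      rw [hgy]
      exact this
  exact (Complex.analyticAt_of_differentiable_on_punctured_nhds_of_continuousAt
    hpunct (hcont w hw)).differentiableAt.differentiableWithinAt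
noncomputable section

lemma aux_den_ne {w z : ℂ} (hw : ‖w‖ < 1) (hz : ‖z‖ < 1) :
    1 - (starRingEnd ℂ) w * z ≠ 0 := by
  intro hc
  have h1 : ‖(starRingEnd ℂ) w * z‖ < 1 := by
    rw [norm_mul, Complex.norm_conj]
    nlinarith [norm_nonneg w, norm_nonneg z]
  have : (starRingEnd ℂ) w * z = 1 := by linear_combination -hc
  rw [this] at h1; simp at h1

lemma aux_moebius_mem {w z : ℂ} (hw : ‖w‖ < 1) (hz : ‖z‖ < 1) :
    ‖(w - z) / (1 - (starRingEnd ℂ) w * z)‖ < 1 := by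
  have hden := aux_den_ne hw hz
  have habs : ‖w - z‖ < ‖1 - (starRingEnd ℂ) w * z‖ := by
    have hsq : Complex.normSq (w - z) < Complex.normSq (1 - (starRingEnd ℂ) w * z) := by
      have e1 : Complex.normSq (1 - (starRingEnd ℂ) w * z)
          - Complex.normSq (w - z) = 0 + (1 - Complex.normSq w) * (1 - Complex.normSq z) := by
        rw [Complex.normSq_sub, Complex.normSq_sub]
        have c1 : ((1:ℂ) * (starRingEnd ℂ) ((starRingEnd ℂ) w * z)).re
            = (w * (starRingEnd ℂ) z).re := by
          rw [one_mul, map_mul, Complex.conj_conj]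
        have c2 : Complex.normSq ((starRingEnd ℂ) w * z)
            = Complex.normSq w * Complex.normSq z := by
          rw [map_mul, Complex.normSq_conj]
        rw [c1, c2, Complex.normSq_one]
        ring
      have hw2 : Complex.normSq w < 1 := by
        rw [← Complex.sq_norm]; nlinarith [norm_nonneg w]
      have hz2 : Complex.normSq z < 1 := by
        rw [← Complex.sq_norm]; nlinarith [norm_nonneg z]
      nlinarith [e1]
    have := Real.sqrt_lt_sqrt (Complex.normSq_nonneg _) hsq
    rwa [← Complex.norm_def, ← Complex.norm_def] at this
  rw [norm_div, div_lt_one (norm_pos_iff.mpr hden)]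
  exact habs

lemma aux_memball {z : ℂ} : z ∈ ball (0:ℂ) 1 ↔ ‖z‖ < 1 := by
  simp [mem_ball, Complex.dist_eq]

lemma aux_moebius_invol {w z : ℂ} (hw : ‖w‖ < 1) (hz : ‖z‖ < 1) :
    (w - (w - z) / (1 - (starRingEnd ℂ) w * z))
      / (1 - (starRingEnd ℂ) w * ((w - z) / (1 - (starRingEnd ℂ) w * z))) = z := by
  have hden := aux_den_ne hw hz
  have hden2 : 1 - (starRingEnd ℂ) w * ((w - z) / (1 - (starRingEnd ℂ) w * z)) ≠ 0 :=
    aux_den_ne hw (aux_moebius_mem hw hz)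
  field_simp at hden2 ⊢
  rw [div_eq_iff (div_ne_zero_iff.1 hden2).1]
  ring

lemma aux_classify {ψ : ℂ → ℂ} (hd : DifferentiableOn ℂ ψ (ball (0:ℂ) 1))
    (hbij : BijOn ψ (ball (0:ℂ) 1) (ball (0:ℂ) 1)) :
    ∃ C w : ℂ, ‖C‖ = 1 ∧ ‖w‖ < 1 ∧
      ∀ z ∈ ball (0:ℂ) 1, ψ z = (w - C * z) / (1 - (starRingEnd ℂ) w * (C * z)) := by
  have h0mem : (0:ℂ) ∈ ball (0:ℂ) 1 := by simp
  set w : ℂ := ψ 0 with hwdef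
  have hw : ‖w‖ < 1 := aux_memball.1 (hbij.mapsTo h0mem)
  set φ : ℂ → ℂ := fun z => (w - z) / (1 - (starRingEnd ℂ) w * z) with hφdef
  have hφmem : ∀ z : ℂ, ‖z‖ < 1 → ‖φ z‖ < 1 :=
    fun z hz => aux_moebius_mem hw hz
  have hφφ : ∀ z : ℂ, ‖z‖ < 1 → φ (φ z) = z :=
    fun z hz => aux_moebius_invol hw hz
  have hφd : DifferentiableOn ℂ φ (ball (0:ℂ) 1) := by
    intro z hz
    exact ((differentiableAt_const w |>.sub differentiableAt_id).div
      ((differentiableAt_const _).sub ((differentiableAt_const _).mul differentiableAt_id))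
      (aux_den_ne hw (aux_memball.1 hz))).differentiableWithinAt
  set χ : ℂ → ℂ := invFunOn ψ (ball (0:ℂ) 1) with hχdef
  have hinv : InvOn χ ψ (ball (0:ℂ) 1) (ball (0:ℂ) 1) := hbij.invOn_invFunOn
  have hχmem : ∀ y ∈ ball (0:ℂ) 1, χ y ∈ ball (0:ℂ) 1 :=
    fun y hy => hbij.surjOn.mapsTo_invFunOn hy
  have hχd : DifferentiableOn ℂ χ (ball (0:ℂ) 1) :=
    aux_inv_diff hd hbij (fun y hy => ⟨hχmem y hy, hinv.2 hy⟩) (fun z hz => hinv.1 hz)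
  set g : ℂ → ℂ := fun z => φ (ψ z) with hgdef
  set k : ℂ → ℂ := fun y => χ (φ y) with hkdef
  have hφmaps : MapsTo φ (ball (0:ℂ) 1) (ball (0:ℂ) 1) :=
    fun z hz => aux_memball.2 (hφmem z (aux_memball.1 hz))
  have hgmaps : MapsTo g (ball (0:ℂ) 1) (ball (0:ℂ) 1) :=
    fun z hz => hφmaps (hbij.mapsTo hz)
  have hkmaps : MapsTo k (ball (0:ℂ) 1) (ball (0:ℂ) 1) :=
    fun y hy => hχmem _ (hφmaps hy)
  have hgd : DifferentiableOn ℂ g (ball (0:ℂ) 1) := hφd.comp hd hbij.mapsTo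
  have hkd : DifferentiableOn ℂ k (ball (0:ℂ) 1) := hχd.comp hφd hφmaps
  have hg0 : g 0 = 0 := by
    simp only [hgdef, hφdef, ← hwdef]
    simp
  have hkg : ∀ z ∈ ball (0:ℂ) 1, k (g z) = z := by
    intro z hz
    have h1 : ‖ψ z‖ < 1 := aux_memball.1 (hbij.mapsTo hz)
    simp only [hgdef, hkdef]
    rw [hφφ _ h1]
    exact hinv.1 hz
  have hk0 : k 0 = 0 := by
    have := hkg 0 h0mem
    rwa [hg0] at this
  have hhalfmem : (1/2 : ℂ) ∈ ball (0:ℂ) 1 := by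
    rw [aux_memball]
    simp
    norm_num
  have habs_half : ‖(1/2 : ℂ)‖ = 1/2 := by
    simp
  -- Schwarz both ways
  have hg_le : ‖g (1/2)‖ ≤ 1/2 := by
    have := Complex.norm_le_norm_of_mapsTo_ball_self hgd (hgmaps.mono_right ball_subset_closedBall) hg0
      (show ‖(1/2:ℂ)‖ < 1 by rw [habs_half]; norm_num)
    rwa [habs_half] at this
  have hg_ge : (1/2 : ℝ) ≤ ‖g (1/2)‖ := by
    have h1 : ‖g (1/2)‖ < 1 := aux_memball.1 (hgmaps hhalfmem)
    have := Complex.norm_le_norm_of_mapsTo_ball_self hkd (hkmaps.mono_right ball_subset_closedBall) hk0 h1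
    rw [hkg _ hhalfmem, habs_half] at this
    exact this
  have hg_eq : ‖g (1/2)‖ = 1/2 := le_antisymm hg_le hg_ge
  -- equality case of the Schwarz lemma
  have hdsl : ‖dslope g 0 (1/2)‖ = 1 / 1 := by
    rw [dslope_of_ne g (by norm_num : (1/2:ℂ) ≠ 0), slope_def_field]
    simp only [sub_zero, hg0]
    rw [div_eq_mul_inv, norm_mul, hg_eq, norm_inv, habs_half]
    norm_num
  have hmaps' : MapsTo g (ball (0:ℂ) 1) (ball (g 0) 1) := by rwa [hg0]
  have haff := Complex.affine_of_mapsTo_ball_of_exists_norm_dslope_eq_div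
    hgd (hmaps'.mono_right ball_subset_closedBall) hhalfmem hdsl
  set C : ℂ := dslope g 0 (1/2) with hCdef
  have hCabs : ‖C‖ = 1 := by
    have := hdsl
    rwa [div_one] at this
  have hgC : ∀ z ∈ ball (0:ℂ) 1, g z = C * z := by
    intro z hz
    have := haff hz
    simp only [hg0, zero_add, sub_zero, smul_eq_mul] at this
    rw [this, mul_comm]
  refine ⟨C, w, hCabs, hw, ?_⟩
  intro z hz
  have h1 : ‖ψ z‖ < 1 := aux_memball.1 (hbij.mapsTo hz)
  have h2 : φ (ψ z) = C * z := hgC z hz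
  have := hφφ _ h1
  calc ψ z = φ (φ (ψ z)) := (hφφ _ h1).symm
    _ = φ (C * z) := by rw [h2]
    _ = (w - C * z) / (1 - (starRingEnd ℂ) w * (C * z)) := rfl

lemma aux_memball' {z : ℂ} {R : ℝ} : z ∈ ball (0:ℂ) R ↔ ‖z‖ < R := by
  simp [mem_ball, Complex.dist_eq]

lemma aux_fix_form (h : HypAuto) {C w : ℂ} (hC : ‖C‖ = 1) (hw : ‖w‖ < 1)
    (hform : ∀ z ∈ ball (0:ℂ) 1, h.ψ z = (w - C * z) / (1 - (starRingEnd ℂ) w * (C * z)))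
    {e : ℂ} (he : ‖e‖ = 1) (hfix : h.ψ e = e) :
    w - C * e = e * (1 - (starRingEnd ℂ) w * (C * e)) := by
  obtain ⟨R, hR1, hdR⟩ := h.holo
  have heR : e ∈ ball (0:ℂ) R := by rw [aux_memball']; rw [he]; exact hR1
  have hcont : ContinuousWithinAt h.ψ (ball (0:ℂ) 1) e :=
    (hdR.differentiableAt (isOpen_ball.mem_nhds heR)).continuousAt.continuousWithinAt
  have hDe : 1 - (starRingEnd ℂ) w * (C * e) ≠ 0 := by
    intro hc
    have h1 : ‖(starRingEnd ℂ) w * (C * e)‖ < 1 := by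
      rw [norm_mul, norm_mul, Complex.norm_conj, hC, he]
      simpa using hw
    have : (starRingEnd ℂ) w * (C * e) = 1 := by linear_combination -hc
    rw [this] at h1; simp at h1
  have hNB : (nhdsWithin e (ball (0:ℂ) 1)).NeBot := by
    rw [← mem_closure_iff_nhdsWithin_neBot, closure_ball (0:ℂ) one_ne_zero]
    rw [mem_closedBall, Complex.dist_eq, sub_zero, he]
  have h2 : Tendsto (fun z => (w - C * z) / (1 - (starRingEnd ℂ) w * (C * z)))
      (nhdsWithin e (ball (0:ℂ) 1)) (nhds ((w - C * e) / (1 - (starRingEnd ℂ) w * (C * e)))) := by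
    apply ContinuousAt.continuousWithinAt
    exact ((continuousAt_const.sub (continuousAt_const.mul continuousAt_id)).div
      (continuousAt_const.sub (continuousAt_const.mul (continuousAt_const.mul continuousAt_id)))
      hDe)
  have h1' : Tendsto h.ψ (nhdsWithin e (ball (0:ℂ) 1)) (nhds (h.ψ e)) := hcont
  rw [hfix] at h1'
  have h1 : Tendsto h.ψ (nhdsWithin e (ball (0:ℂ) 1)) (nhds e) := h1'
  have heq : h.ψ =ᶠ[nhdsWithin e (ball (0:ℂ) 1)]
      fun z => (w - C * z) / (1 - (starRingEnd ℂ) w * (C * z)) := by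
    filter_upwards [eventually_mem_nhdsWithin] with z hz using hform z hz
  have := tendsto_nhds_unique (h1.congr' heq) h2
  rw [eq_div_iff hDe] at this
  linear_combination -this

lemma aux_lin {C w e z : ℂ}
    (hrel : w - C * e = e * (1 - (starRingEnd ℂ) w * (C * e))) :
    (w - C * z) - e * (1 - (starRingEnd ℂ) w * (C * z))
      = C * (e * (starRingEnd ℂ) w - 1) * (z - e) := by
  linear_combination hrel

lemma aux_ratio (h : HypAuto) :
    ∃ κ : ℂ, κ ≠ 0 ∧ ∀ z ∈ ball (0:ℂ) 1,
      (h.ψ z - h.a) * (z - h.b) = κ * ((z - h.a) * (h.ψ z - h.b)) := by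
  obtain ⟨R, hR1, hdR⟩ := h.holo
  have hd : DifferentiableOn ℂ h.ψ (ball (0:ℂ) 1) := hdR.mono (ball_subset_ball (le_of_lt hR1))
  obtain ⟨C, w, hC, hw, hform⟩ := aux_classify hd h.bij
  have hNa := aux_fix_form h hC hw hform h.ha h.fixa
  have hNb := aux_fix_form h hC hw hform h.hb h.fixb
  have hCne : C ≠ 0 := by
    intro hc; rw [hc] at hC; simp at hC
  have hfac : ∀ e : ℂ, ‖e‖ = 1 → e * (starRingEnd ℂ) w - 1 ≠ 0 := by
    intro e he hc
    have h1 : ‖e * (starRingEnd ℂ) w‖ < 1 := by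
      rw [norm_mul, Complex.norm_conj, he, one_mul]; exact hw
    have : e * (starRingEnd ℂ) w = 1 := by linear_combination hc
    rw [this] at h1; simp at h1
  have hp : C * (h.a * (starRingEnd ℂ) w - 1) ≠ 0 := mul_ne_zero hCne (hfac _ h.ha)
  have hq : C * (h.b * (starRingEnd ℂ) w - 1) ≠ 0 := mul_ne_zero hCne (hfac _ h.hb)
  refine ⟨C * (h.a * (starRingEnd ℂ) w - 1) / (C * (h.b * (starRingEnd ℂ) w - 1)),
    div_ne_zero hp hq, ?_⟩
  intro z hz
  have hzabs : ‖z‖ < 1 := aux_memball.1 hz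
  have hDz : 1 - (starRingEnd ℂ) w * (C * z) ≠ 0 := by
    intro hc
    have h1 : ‖(starRingEnd ℂ) w * (C * z)‖ < 1 := by
      rw [norm_mul, norm_mul, Complex.norm_conj, hC, one_mul]
      nlinarith [norm_nonneg w, norm_nonneg z]
    have : (starRingEnd ℂ) w * (C * z) = 1 := by linear_combination -hc
    rw [this] at h1; simp at h1
  have e1 : (h.ψ z - h.a) * (1 - (starRingEnd ℂ) w * (C * z))
      = C * (h.a * (starRingEnd ℂ) w - 1) * (z - h.a) := by
    rw [hform z hz, sub_mul, div_mul_cancel₀ _ hDz]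
    exact aux_lin hNa
  have e2 : (h.ψ z - h.b) * (1 - (starRingEnd ℂ) w * (C * z))
      = C * (h.b * (starRingEnd ℂ) w - 1) * (z - h.b) := by
    rw [hform z hz, sub_mul, div_mul_cancel₀ _ hDz]
    exact aux_lin hNb
  rw [div_mul_eq_mul_div, eq_div_iff hq]
  have key : ((h.ψ z - h.a) * (z - h.b) * (C * (h.b * (starRingEnd ℂ) w - 1)))
      * (1 - (starRingEnd ℂ) w * (C * z))
      = (C * (h.a * (starRingEnd ℂ) w - 1) * ((z - h.a) * (h.ψ z - h.b)))
      * (1 - (starRingEnd ℂ) w * (C * z)) := by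
    linear_combination ((z - h.b) * (C * (h.b * (starRingEnd ℂ) w - 1))) * e1
      - (C * (h.a * (starRingEnd ℂ) w - 1) * (z - h.a)) * e2
  exact mul_right_cancel₀ hDz key

lemma aux_sub_b_ne (h : HypAuto) {z : ℂ} (hz : z ∈ ball (0:ℂ) 1) :
    ‖z - h.b‖ ≠ 0 := by
  intro hc
  rw [norm_eq_zero, sub_eq_zero] at hc
  have := h.hb
  rw [← hc] at this
  exact absurd this (ne_of_lt (aux_memball.1 hz))

lemma aux_sub_a_ne (h : HypAuto) {z : ℂ} (hz : z ∈ ball (0:ℂ) 1) :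
    ‖z - h.a‖ ≠ 0 := by
  intro hc
  rw [norm_eq_zero, sub_eq_zero] at hc
  have := h.ha
  rw [← hc] at this
  exact absurd this (ne_of_lt (aux_memball.1 hz))

lemma aux_kappa (h : HypAuto) :
    ∃ s : ℝ, 0 < s ∧ s < 1 ∧ ∀ z ∈ ball (0:ℂ) 1, ∀ n : ℕ,
      ‖h.ψ^[n] z - h.a‖ / ‖h.ψ^[n] z - h.b‖
        = s ^ n * (‖z - h.a‖ / ‖z - h.b‖) := by
  obtain ⟨κ, hκ0, hid⟩ := aux_ratio h
  have hmaps : MapsTo h.ψ (ball (0:ℂ) 1) (ball (0:ℂ) 1) := h.bij.mapsTo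
  have hs0 : 0 < ‖κ‖ := norm_pos_iff.mpr hκ0
  have hstep : ∀ z ∈ ball (0:ℂ) 1,
      ‖h.ψ z - h.a‖ / ‖h.ψ z - h.b‖
        = ‖κ‖ * (‖z - h.a‖ / ‖z - h.b‖) := by
    intro z hz
    have habs := congrArg norm (hid z hz)
    rw [norm_mul, norm_mul, norm_mul] at habs
    have hB : ‖h.ψ z - h.b‖ ≠ 0 := aux_sub_b_ne h (hmaps hz)
    have hB' : ‖z - h.b‖ ≠ 0 := aux_sub_b_ne h hz
    rw [mul_div_assoc', div_eq_div_iff hB hB']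
    linarith [habs]
  have hiter : ∀ z ∈ ball (0:ℂ) 1, ∀ n : ℕ,
      ‖h.ψ^[n] z - h.a‖ / ‖h.ψ^[n] z - h.b‖
        = ‖κ‖ ^ n * (‖z - h.a‖ / ‖z - h.b‖) := by
    intro z hz n
    induction n with
    | zero => simp
    | succ n ih =>
      have hzn : h.ψ^[n] z ∈ ball (0:ℂ) 1 := (hmaps.iterate n) hz
      rw [Function.iterate_succ_apply', hstep _ hzn, ih, pow_succ]
      ring
  refine ⟨‖κ‖, hs0, ?_, hiter⟩
  -- show abs κ < 1 using attraction of the orbit of 0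
  have h0mem : (0:ℂ) ∈ ball (0:ℂ) 1 := by simp
  have hFa : Tendsto (fun y : ℂ => ‖y - h.a‖ / ‖y - h.b‖)
      (nhds h.a) (nhds 0) := by
    have hden : ‖h.a - h.b‖ ≠ 0 := by
      intro hc
      rw [norm_eq_zero, sub_eq_zero] at hc
      exact h.hab hc
    have : ContinuousAt (fun y : ℂ => ‖y - h.a‖ / ‖y - h.b‖) h.a := by
      apply ContinuousAt.div
      · exact (continuous_norm.comp (continuous_id.sub continuous_const)).continuousAt
      · exact (continuous_norm.comp (continuous_id.sub continuous_const)).continuousAt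
      · exact hden
    have h2 := this.tendsto
    simpa using h2
  have horb := (hFa.comp (h.attract 0 h0mem))
  have hpow : Tendsto (fun n : ℕ => ‖κ‖ ^ n) atTop (nhds 0) := by
    have : ∀ n : ℕ, ‖κ‖ ^ n
        = ‖h.ψ^[n] 0 - h.a‖ / ‖h.ψ^[n] 0 - h.b‖ := by
      intro n
      rw [hiter 0 h0mem n]
      simp [h.ha, h.hb]
    exact horb.congr fun n => (this n).symm
  have := tendsto_pow_atTop_nhds_zero_iff.1 hpow
  rwa [abs_of_pos hs0] at this

lemma aux_abs_sub_le_two {x e : ℂ} (hx : ‖x‖ < 1) (he : ‖e‖ = 1) :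
    ‖x - e‖ ≤ 2 := by
  calc ‖x - e‖ ≤ ‖x‖ + ‖e‖ := by
        simpa [sub_eq_add_neg] using norm_add_le x (-e)
    _ ≤ 2 := by rw [he]; linarith

lemma aux_escape (h : HypAuto) {δ δ' : ℝ} (hδ : 0 < δ) (hδ' : 0 < δ') :
    ∃ m : ℕ, ∀ z ∈ ball (0:ℂ) 1, ∀ n : ℕ,
      ((Finset.range n).filter
        (fun j => h.ψ^[j] z ∉ ball h.a δ ∪ ball h.b δ')).card ≤ m := by
  obtain ⟨s, hs0, hs1, hiter⟩ := aux_kappa h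
  have hmaps : MapsTo h.ψ (ball (0:ℂ) 1) (ball (0:ℂ) 1) := h.bij.mapsTo
  have hpow0 : Tendsto (fun n : ℕ => s ^ n) atTop (nhds 0) :=
    tendsto_pow_atTop_nhds_zero_of_lt_one hs0.le hs1
  have hquarter : 0 < δ * δ' / 4 := by positivity
  obtain ⟨M, hM⟩ := (hpow0.eventually (gt_mem_nhds hquarter)).exists_forall_of_atTop
  refine ⟨M + 1, ?_⟩
  intro z hz n
  set S := (Finset.range n).filter
    (fun j => h.ψ^[j] z ∉ ball h.a δ ∪ ball h.b δ') with hSdef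
  rcases S.eq_empty_or_nonempty with hS | hS
  · rw [hS]; simp
  set j₀ := S.min' hS with hj₀def
  have hbound : ∀ j ∈ S, (δ / 2) ≤ s ^ j * (‖z - h.a‖ / ‖z - h.b‖)
      ∧ s ^ j * (‖z - h.a‖ / ‖z - h.b‖) ≤ 2 / δ' := by
    intro j hj
    have hjS := (Finset.mem_filter.1 hj).2
    rw [Set.mem_union, not_or] at hjS
    obtain ⟨hja, hjb⟩ := hjS
    have hzj : h.ψ^[j] z ∈ ball (0:ℂ) 1 := (hmaps.iterate j) hz
    have hA : δ ≤ ‖h.ψ^[j] z - h.a‖ := by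
      rw [mem_ball, Complex.dist_eq, not_lt] at hja
      exact hja
    have hB : δ' ≤ ‖h.ψ^[j] z - h.b‖ := by
      rw [mem_ball, Complex.dist_eq, not_lt] at hjb
      exact hjb
    have hA2 : ‖h.ψ^[j] z - h.a‖ ≤ 2 :=
      aux_abs_sub_le_two (aux_memball.1 hzj) h.ha
    have hB2 : ‖h.ψ^[j] z - h.b‖ ≤ 2 :=
      aux_abs_sub_le_two (aux_memball.1 hzj) h.hb
    have hBpos : 0 < ‖h.ψ^[j] z - h.b‖ := lt_of_lt_of_le hδ' hB
    have heq := hiter z hz j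
    constructor
    · rw [← heq, le_div_iff₀ hBpos]
      nlinarith
    · rw [← heq, div_le_div_iff₀ hBpos hδ']
      nlinarith
  have hgap : ∀ j ∈ S, j ≤ j₀ + M := by
    intro j hj
    by_contra hcon
    push_neg at hcon
    have hj₀S : j₀ ∈ S := S.min'_mem hS
    have hle : j₀ ≤ j := S.min'_le j hj
    have hd : M + 1 ≤ j - j₀ := by omega
    have hsj : s ^ (j - j₀) < δ * δ' / 4 := hM _ (by omega)
    have hsplit : s ^ j * (‖z - h.a‖ / ‖z - h.b‖)
        = s ^ (j - j₀) * (s ^ j₀ * (‖z - h.a‖ / ‖z - h.b‖)) := by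
      rw [← mul_assoc, ← pow_add]
      congr 2
      omega
    obtain ⟨hlow, _⟩ := hbound j hj
    obtain ⟨_, hhigh⟩ := hbound j₀ hj₀S
    rw [hsplit] at hlow
    have hp : 0 < s ^ (j - j₀) := pow_pos hs0 _
    have h1 := mul_le_mul_of_nonneg_left hhigh hp.le
    have h2 := mul_lt_mul_of_pos_right hsj (show (0:ℝ) < 2 / δ' by positivity)
    have h3 : (δ * δ' / 4) * (2 / δ') = δ / 2 := by
      field_simp
      ring
    linarith
  have hsub : S ⊆ Finset.Icc j₀ (j₀ + M) := by
    intro j hj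
    rw [Finset.mem_Icc]
    exact ⟨S.min'_le j hj, hgap j hj⟩
  calc S.card ≤ (Finset.Icc j₀ (j₀ + M)).card := Finset.card_le_card hsub
    _ = M + 1 := by rw [Nat.card_Icc]; omega

/-- With `u_n = ∏_{j=0}^{n-1} u∘ψ_j`, the limit of `(sup_𝔻 |u_n|)^{1/n}` exists
and is at most `max{A⁺, B⁺}`, where `A⁺ = limsup_{𝔻∋z→a} |u z|` and
`B⁺ = limsup_{𝔻∋z→b} |u z|`. -/
theorem sup_iterated_weight_limit (h : HypAuto)
    (u : ℂ → ℂ) (hu : DifferentiableOn ℂ u (ball (0:ℂ) 1))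
    (hubd : ∃ C : ℝ, ∀ z ∈ ball (0:ℂ) 1, ‖u z‖ ≤ C)
    (huaway : ∃ c : ℝ, 0 < c ∧ ∀ z ∈ ball (0:ℂ) 1, c ≤ ‖u z‖) :
    ∃ L : ℝ,
      Tendsto
        (fun n : ℕ =>
          (sSup ((fun z => ‖
            (∏ j ∈ Finset.range n, u (h.ψ^[j] z))‖) '' ball (0:ℂ) 1)) ^ (1 / (n:ℝ)))
        atTop (nhds L) ∧
      L ≤ max (limsup (fun z => ‖u z‖) (nhdsWithin h.a (ball (0:ℂ) 1)))
            (limsup (fun z => ‖u z‖) (nhdsWithin h.b (ball (0:ℂ) 1))) := by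
  obtain ⟨C, hC⟩ := hubd
  obtain ⟨c, hc0, hc⟩ := huaway
  have h0mem : (0:ℂ) ∈ ball (0:ℂ) 1 := by simp
  have hmaps : MapsTo h.ψ (ball (0:ℂ) 1) (ball (0:ℂ) 1) := h.bij.mapsTo
  have hcC : c ≤ C := le_trans (hc 0 h0mem) (hC 0 h0mem)
  have hC0 : 0 < C := lt_of_lt_of_le hc0 hcC
  set M : ℕ → ℝ := fun n => sSup ((fun z => ‖
    (∏ j ∈ Finset.range n, u (h.ψ^[j] z))‖) '' ball (0:ℂ) 1) with hMdef
  have hprodabs : ∀ n : ℕ, ∀ z : ℂ, ‖∏ j ∈ Finset.range n, u (h.ψ^[j] z)‖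
      = ∏ j ∈ Finset.range n, ‖u (h.ψ^[j] z)‖ := by
    intro n z
    exact norm_prod _ _
  have hne : ∀ n : ℕ, ((fun z => ‖
      (∏ j ∈ Finset.range n, u (h.ψ^[j] z))‖) '' ball (0:ℂ) 1).Nonempty :=
    fun n => ⟨_, ⟨0, h0mem, rfl⟩⟩
  have hub : ∀ n : ℕ, ∀ y ∈ ((fun z => ‖
      (∏ j ∈ Finset.range n, u (h.ψ^[j] z))‖) '' ball (0:ℂ) 1), y ≤ C ^ n := by
    rintro n y ⟨z, hz, rfl⟩
    show ‖∏ j ∈ Finset.range n, u (h.ψ^[j] z)‖ ≤ C ^ n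
    rw [hprodabs n z]
    calc ∏ j ∈ Finset.range n, ‖u (h.ψ^[j] z)‖
        ≤ ∏ j ∈ Finset.range n, C := by
          refine Finset.prod_le_prod (fun j _ => norm_nonneg _) (fun j _ => ?_)
          exact hC _ ((hmaps.iterate j) hz)
      _ = C ^ n := by rw [Finset.prod_const, Finset.card_range]
  have hbdd : ∀ n : ℕ, BddAbove ((fun z => ‖
      (∏ j ∈ Finset.range n, u (h.ψ^[j] z))‖) '' ball (0:ℂ) 1) :=
    fun n => ⟨C ^ n, fun y hy => hub n y hy⟩
  have hMle : ∀ n : ℕ, ∀ z ∈ ball (0:ℂ) 1,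
      ‖∏ j ∈ Finset.range n, u (h.ψ^[j] z)‖ ≤ M n :=
    fun n z hz => le_csSup (hbdd n) ⟨z, hz, rfl⟩
  have hMlow : ∀ n : ℕ, c ^ n ≤ M n := by
    intro n
    refine le_trans ?_ (hMle n 0 h0mem)
    rw [hprodabs n 0]
    calc (c : ℝ) ^ n = ∏ j ∈ Finset.range n, c := by
          rw [Finset.prod_const, Finset.card_range]
      _ ≤ ∏ j ∈ Finset.range n, ‖u (h.ψ^[j] 0)‖ :=
          Finset.prod_le_prod (fun j _ => hc0.le) (fun j _ => hc _ ((hmaps.iterate j) h0mem))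
  have hMpos : ∀ n : ℕ, 0 < M n := fun n => lt_of_lt_of_le (pow_pos hc0 n) (hMlow n)
  -- submultiplicativity
  have hsubm : ∀ m n : ℕ, M (m + n) ≤ M m * M n := by
    intro m n
    refine csSup_le (hne _) ?_
    rintro y ⟨z, hz, rfl⟩
    have hsplit : (∏ j ∈ Finset.range (m + n), u (h.ψ^[j] z))
        = (∏ j ∈ Finset.range m, u (h.ψ^[j] z))
          * ∏ j ∈ Finset.range n, u (h.ψ^[j] (h.ψ^[m] z)) := by
      rw [Finset.prod_range_add]
      congr 1
      refine Finset.prod_congr rfl fun j _ => ?_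
      rw [add_comm m j, Function.iterate_add_apply]
    show ‖∏ j ∈ Finset.range (m + n), u (h.ψ^[j] z)‖ ≤ M m * M n
    rw [hsplit, norm_mul]
    have h1 := hMle m z hz
    have h2 := hMle n (h.ψ^[m] z) ((hmaps.iterate m) hz)
    exact mul_le_mul h1 h2 (norm_nonneg _) (le_trans (norm_nonneg _) h1)
  set v : ℕ → ℝ := fun n => Real.log (M n) with hvdef
  have hv : Subadditive v := by
    intro m n
    have h1 : M (m + n) ≤ M m * M n := hsubm m n
    calc v (m + n) ≤ Real.log (M m * M n) :=
          Real.log_le_log (hMpos _) h1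
      _ = v m + v n := Real.log_mul (hMpos m).ne' (hMpos n).ne'
  have hbddBelow : BddBelow (Set.range fun n : ℕ => v n / n) := by
    refine ⟨min (Real.log c) 0, ?_⟩
    rintro y ⟨n, rfl⟩
    rcases Nat.eq_zero_or_pos n with hn | hn
    · subst hn
      simp
    · have hlogc : Real.log c ≤ v n / n := by
        have h1 : Real.log (c ^ n) ≤ v n := Real.log_le_log (pow_pos hc0 n) (hMlow n)
        rw [Real.log_pow] at h1
        rw [le_div_iff₀ (by exact_mod_cast hn : (0:ℝ) < n)]
        calc Real.log c * n = n * Real.log c := by ring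
          _ ≤ v n := h1
      exact le_trans (min_le_left _ _) hlogc
  have htendv : Tendsto (fun n : ℕ => v n / n) atTop (nhds hv.lim) := hv.tendsto_lim hbddBelow
  set L : ℝ := Real.exp hv.lim with hLdef
  have htendL : Tendsto (fun n : ℕ => (M n) ^ (1 / (n:ℝ))) atTop (nhds L) := by
    have h1 : Tendsto (fun n : ℕ => Real.exp (v n / n)) atTop (nhds L) :=
      (Real.continuous_exp.continuousAt.tendsto).comp htendv
    refine h1.congr' ?_
    filter_upwards [eventually_ge_atTop 1] with n hn
    rw [Real.rpow_def_of_pos (hMpos n), mul_one_div]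
  refine ⟨L, htendL, ?_⟩
  set A := limsup (fun z => ‖u z‖) (nhdsWithin h.a (ball (0:ℂ) 1)) with hAdef
  set B := limsup (fun z => ‖u z‖) (nhdsWithin h.b (ball (0:ℂ) 1)) with hBdef
  have hNB : ∀ e : ℂ, ‖e‖ = 1 → (nhdsWithin e (ball (0:ℂ) 1)).NeBot := by
    intro e he
    rw [← mem_closure_iff_nhdsWithin_neBot, closure_ball (0:ℂ) one_ne_zero]
    rw [mem_closedBall, Complex.dist_eq, sub_zero, he]
  haveI hNBa := hNB h.a h.ha
  haveI hNBb := hNB h.b h.hb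
  have hbddup : ∀ e : ℂ, IsBoundedUnder (· ≤ ·) (nhdsWithin e (ball (0:ℂ) 1))
      (fun z => ‖u z‖) := by
    intro e
    refine ⟨C, ?_⟩
    rw [eventually_map]
    filter_upwards [eventually_mem_nhdsWithin] with z hz using hC z hz
  have hbdddown : ∀ e : ℂ, IsBoundedUnder (· ≥ ·) (nhdsWithin e (ball (0:ℂ) 1))
      (fun z => ‖u z‖) := by
    intro e
    refine ⟨c, ?_⟩
    rw [eventually_map]
    filter_upwards [eventually_mem_nhdsWithin] with z hz using hc z hz
  have hcA : c ≤ A := by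
    refine le_limsup_of_frequently_le ?_ (hbddup h.a)
    refine Eventually.frequently ?_
    filter_upwards [eventually_mem_nhdsWithin] with z hz using hc z hz
  have hMx0 : 0 < max A B := lt_of_lt_of_le hc0 (le_trans hcA (le_max_left _ _))
  -- main estimate : for every ε > 0, L ≤ max A B + ε
  have hmain : ∀ ε : ℝ, 0 < ε → L ≤ max A B + ε := by
    intro ε hε
    set T : ℝ := max A B + ε with hTdef
    have hT0 : 0 < T := by positivity
    -- neighborhoods where |u| < T
    have hevA : ∀ᶠ z in nhdsWithin h.a (ball (0:ℂ) 1), ‖u z‖ < T := by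
      refine eventually_lt_of_limsup_lt ?_ (hbddup h.a)
      rw [← hAdef]
      calc A ≤ max A B := le_max_left _ _
        _ < T := by rw [hTdef]; linarith
    have hevB : ∀ᶠ z in nhdsWithin h.b (ball (0:ℂ) 1), ‖u z‖ < T := by
      refine eventually_lt_of_limsup_lt ?_ (hbddup h.b)
      rw [← hBdef]
      calc B ≤ max A B := le_max_right _ _
        _ < T := by rw [hTdef]; linarith
    rw [eventually_iff, Metric.mem_nhdsWithin_iff] at hevA hevB
    obtain ⟨δ, hδ0, hδ⟩ := hevA
    obtain ⟨δ', hδ'0, hδ'⟩ := hevB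
    obtain ⟨m, hm⟩ := aux_escape h hδ0 hδ'0
    set C₁ : ℝ := max C T with hC₁def
    have hC₁T : T ≤ C₁ := le_max_right _ _
    have hC₁C : C ≤ C₁ := le_max_left _ _
    have hC₁0 : 0 < C₁ := lt_of_lt_of_le hT0 hC₁T
    have hrat1 : (1:ℝ) ≤ C₁ / T := (one_le_div hT0).2 hC₁T
    set K : ℝ := (C₁ / T) ^ m with hKdef
    have hK1 : (1:ℝ) ≤ K := one_le_pow₀ hrat1
    have hK0 : 0 < K := lt_of_lt_of_le one_pos hK1
    -- pointwise bound M n ≤ K * T^n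
    have hMn : ∀ n : ℕ, M n ≤ K * T ^ n := by
      intro n
      refine csSup_le (hne n) ?_
      rintro y ⟨z, hz, rfl⟩
      show ‖∏ j ∈ Finset.range n, u (h.ψ^[j] z)‖ ≤ K * T ^ n
      rw [hprodabs n z]
      set S := (Finset.range n).filter
        (fun j => h.ψ^[j] z ∉ ball h.a δ ∪ ball h.b δ') with hSdef
      have hcard : S.card ≤ m := hm z hz n
      have hcardn : S.card ≤ n := le_trans (Finset.card_filter_le _ _) (by simp)
      have hstep1 : ∏ j ∈ Finset.range n, ‖u (h.ψ^[j] z)‖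
          ≤ ∏ j ∈ Finset.range n,
            (if h.ψ^[j] z ∈ ball h.a δ ∪ ball h.b δ' then T else C₁) := by
        refine Finset.prod_le_prod (fun j _ => norm_nonneg _) (fun j _ => ?_)
        by_cases hjm : h.ψ^[j] z ∈ ball h.a δ ∪ ball h.b δ'
        · rw [if_pos hjm]
          have hzj : h.ψ^[j] z ∈ ball (0:ℂ) 1 := (hmaps.iterate j) hz
          rcases hjm with hjm | hjm
          · exact (hδ ⟨hjm, hzj⟩).le
          · exact (hδ' ⟨hjm, hzj⟩).le
        · rw [if_neg hjm]
          exact le_trans (hC _ ((hmaps.iterate j) hz)) hC₁C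
      have hstep2 : ∏ j ∈ Finset.range n,
          (if h.ψ^[j] z ∈ ball h.a δ ∪ ball h.b δ' then T else C₁)
          = T ^ (n - S.card) * C₁ ^ S.card := by
        rw [Finset.prod_ite]
        rw [Finset.prod_const, Finset.prod_const]
        congr 2
        · have := Finset.card_filter_add_card_filter_not (s := Finset.range n)
            (p := fun j => h.ψ^[j] z ∈ ball h.a δ ∪ ball h.b δ')
          simp only [Finset.card_range] at this
          have hSeq : ((Finset.range n).filter
              (fun j => ¬ (h.ψ^[j] z ∈ ball h.a δ ∪ ball h.b δ'))).card = S.card := rfl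
          omega
      have hstep3 : T ^ (n - S.card) * C₁ ^ S.card ≤ K * T ^ n := by
        have he1 : T ^ (n - S.card) * C₁ ^ S.card = T ^ n * (C₁ / T) ^ S.card := by
          rw [pow_sub₀ T hT0.ne' hcardn, div_pow]
          field_simp
        rw [he1]
        have he2 : (C₁ / T) ^ S.card ≤ K := by
          rw [hKdef]
          exact pow_le_pow_right₀ hrat1 hcard
        calc T ^ n * (C₁ / T) ^ S.card ≤ T ^ n * K :=
              mul_le_mul_of_nonneg_left he2 (pow_nonneg hT0.le n)
          _ = K * T ^ n := by ring
      linarith [hstep1, le_of_eq hstep2, hstep3]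
    -- conclude L ≤ T
    have hfle : ∀ᶠ n in atTop, (M n) ^ (1/(n:ℝ)) ≤ K ^ (1/(n:ℝ)) * T := by
      filter_upwards [eventually_ge_atTop 1] with n hn
      have hn0 : (0:ℝ) < n := by exact_mod_cast hn
      have h1 : (M n) ^ (1/(n:ℝ)) ≤ (K * T ^ n) ^ (1/(n:ℝ)) :=
        Real.rpow_le_rpow (hMpos n).le (hMn n) (by positivity)
      have h2 : (K * T ^ n) ^ (1/(n:ℝ)) = K ^ (1/(n:ℝ)) * (T ^ n) ^ (1/(n:ℝ)) :=
        Real.mul_rpow hK0.le (pow_nonneg hT0.le n)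
      have h3 : ((T ^ n : ℝ)) ^ (1/(n:ℝ)) = T := by
        rw [← Real.rpow_natCast T n, ← Real.rpow_mul hT0.le]
        rw [mul_one_div, div_self hn0.ne', Real.rpow_one]
      rw [h2, h3] at h1
      exact h1
    have hgt : Tendsto (fun n : ℕ => K ^ (1/(n:ℝ)) * T) atTop (nhds (1 * T)) := by
      have h1 : Tendsto (fun n : ℕ => Real.log K * (1/(n:ℝ))) atTop (nhds 0) := by
        have := tendsto_one_div_atTop_nhds_zero_nat.const_mul (Real.log K)
        simpa using this
      have h2 : Tendsto (fun n : ℕ => Real.exp (Real.log K * (1/(n:ℝ)))) atTop (nhds 1) := by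
        have := (Real.continuous_exp.continuousAt.tendsto).comp h1
        simpa [Function.comp_def] using this
      have h3 : (fun n : ℕ => K ^ (1/(n:ℝ))) = fun n : ℕ => Real.exp (Real.log K * (1/(n:ℝ))) := by
        funext n
        rw [Real.rpow_def_of_pos hK0]
      rw [show (fun n : ℕ => K ^ (1/(n:ℝ)) * T) = fun n : ℕ => (fun n : ℕ => K ^ (1/(n:ℝ))) n * T from rfl]
      rw [h3]
      exact h2.mul_const T
    have := le_of_tendsto_of_tendsto htendL hgt hfle
    rwa [one_mul] at this
  exact le_of_forall_pos_le_add hmain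
end
end
end

section
/- With notation as above, lim_{n→∞} (inf_{z∈𝔻} |u_n(z)|)^{1/n} ≥ min{A⁻, B⁻}, where A⁻ = liminf_{z→a} |u(z)| and B⁻ = liminf_{z→b} |u(z)|. -/
open Complex Filter Metric Set

noncomputable section

namespace HypAutoProof

/-- Compatibility: the complex absolute value as an `AbsoluteValue`, equal to the norm. -/
def Complex.abs : AbsoluteValue ℂ ℝ where
  toFun z := ‖z‖
  map_mul' := norm_mul
  nonneg' := norm_nonneg
  eq_zero' _ := norm_eq_zero
  add_le' := norm_add_le

lemma Complex.abs_apply (z : ℂ) : Complex.abs z = ‖z‖ := rfl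

lemma Complex.abs_conj (z : ℂ) : Complex.abs ((starRingEnd ℂ) z) = Complex.abs z := by
  simp [Complex.abs_apply]

lemma Complex.sq_abs (z : ℂ) : Complex.abs z ^ 2 = Complex.normSq z := by
  rw [Complex.abs_apply, Complex.sq_norm]

lemma Complex.normSq_eq_abs (z : ℂ) : Complex.normSq z = Complex.abs z ^ 2 := by
  rw [Complex.abs_apply, Complex.normSq_eq_norm_sq]

lemma Complex.abs_exp (z : ℂ) : Complex.abs (Complex.exp z) = Real.exp z.re := by
  rw [Complex.abs_apply, Complex.norm_exp]

lemma Complex.abs_ofReal (r : ℝ) : Complex.abs (r : ℂ) = |r| := by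
  simp [Complex.abs_apply]

lemma Complex.abs_natCast (n : ℕ) : Complex.abs (n : ℂ) = n := by
  simp [Complex.abs_apply]

lemma Complex.abs_intCast (n : ℤ) : Complex.abs (n : ℂ) = |(n : ℝ)| := by
  simp [Complex.abs_apply]

lemma Complex.continuous_abs : Continuous (Complex.abs : ℂ → ℝ) := continuous_norm

lemma Complex.abs_le_abs_of_mapsTo_ball_self {f : ℂ → ℂ} {z : ℂ}
    (hd : DifferentiableOn ℂ f (ball 0 1)) (h_maps : MapsTo f (ball 0 1) (ball 0 1))
    (h0 : f 0 = 0) (hz : Complex.abs z < 1) : Complex.abs (f z) ≤ Complex.abs z :=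
  Complex.norm_le_norm_of_mapsTo_ball hd (h_maps.mono_right ball_subset_closedBall) h0 hz

/-- Möbius factor. -/
def mb (w z : ℂ) : ℂ := (w - z) / (1 - (starRingEnd ℂ) w * z)

lemma den_ne {w z : ℂ} (hw : Complex.abs w < 1) (hz : Complex.abs z ≤ 1) :
    (1 : ℂ) - (starRingEnd ℂ) w * z ≠ 0 := by
  intro h
  have h1 : (starRingEnd ℂ) w * z = 1 := by linear_combination -h
  have : Complex.abs ((starRingEnd ℂ) w * z) = 1 := by rw [h1, map_one]
  rw [map_mul, Complex.abs_conj] at this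
  nlinarith [Complex.abs.nonneg w, Complex.abs.nonneg z]

lemma key_identity (w z : ℂ) :
    (Complex.abs (1 - (starRingEnd ℂ) w * z))^2 - (Complex.abs (w - z))^2
      = (1 - (Complex.abs w)^2) * (1 - (Complex.abs z)^2) := by
  have h := fun (u : ℂ) => Complex.sq_abs u
  rw [h, h, h, h]
  apply Complex.ofReal_injective
  push_cast [← Complex.mul_conj]
  simp only [map_sub, map_mul, map_one, Complex.conj_conj]
  ring

lemma mb_lt {w z : ℂ} (hw : Complex.abs w < 1) (hz : Complex.abs z < 1) :
    Complex.abs (mb w z) < 1 := by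
  have hden := den_ne hw hz.le
  have hdpos : 0 < Complex.abs (1 - (starRingEnd ℂ) w * z) := by
    simpa [Complex.abs.pos_iff] using hden
  rw [mb, map_div₀, div_lt_one hdpos]
  have hk := key_identity w z
  have p1 : 0 < 1 - (Complex.abs w)^2 := by nlinarith [Complex.abs.nonneg w]
  have p2 : 0 < 1 - (Complex.abs z)^2 := by nlinarith [Complex.abs.nonneg z]
  nlinarith [mul_pos p1 p2, Complex.abs.nonneg (w - z),
    Complex.abs.nonneg (1 - (starRingEnd ℂ) w * z)]

lemma mb_self (w : ℂ) : mb w w = 0 := by simp [mb]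

lemma mb_zero (w : ℂ) : mb w 0 = w := by simp [mb]

lemma mb_mb {w z : ℂ} (hw : Complex.abs w < 1) (hz : Complex.abs z < 1) :
    mb w (mb w z) = z := by
  have h1 := den_ne hw hz.le
  have h2 : (1 : ℂ) - (starRingEnd ℂ) w * w ≠ 0 := by
    intro h
    have h3 : (starRingEnd ℂ) w * w = 1 := by linear_combination -h
    have : Complex.abs ((starRingEnd ℂ) w * w) = 1 := by rw [h3, map_one]
    rw [map_mul, Complex.abs_conj] at this
    nlinarith [Complex.abs.nonneg w]
  have h2' : (1 : ℂ) - w * (starRingEnd ℂ) w ≠ 0 := by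
    intro h; apply h2; linear_combination h
  rw [mb, mb]
  have e1 : w - (w - z) / (1 - (starRingEnd ℂ) w * z)
      = z * (1 - (starRingEnd ℂ) w * w) / (1 - (starRingEnd ℂ) w * z) := by
    rw [eq_div_iff h1, sub_mul, div_mul_cancel₀ _ h1]; ring
  have e2 : 1 - (starRingEnd ℂ) w * ((w - z) / (1 - (starRingEnd ℂ) w * z))
      = (1 - (starRingEnd ℂ) w * w) / (1 - (starRingEnd ℂ) w * z) := by
    rw [eq_div_iff h1, sub_mul, mul_assoc, div_mul_cancel₀ _ h1]; ring
  rw [e1, e2, div_div_eq_mul_div, div_mul_cancel₀ _ h1, mul_div_assoc, div_self h2, mul_one]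

lemma mb_diff {w : ℂ} (hw : Complex.abs w < 1) :
    DifferentiableOn ℂ (mb w) (ball (0:ℂ) 1) := by
  intro z hz
  rw [mem_ball_zero_iff] at hz
  exact (DifferentiableAt.div ((differentiableAt_const w).sub differentiableAt_id)
    ((differentiableAt_const 1).sub ((differentiableAt_const _).mul differentiableAt_id))
    (den_ne hw hz.le)).differentiableWithinAt

lemma mb_mapsTo {w : ℂ} (hw : Complex.abs w < 1) :
    MapsTo (mb w) (ball (0:ℂ) 1) (ball (0:ℂ) 1) := by
  intro z hz
  rw [mem_ball_zero_iff] at *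
  exact mb_lt hw hz

/-- Schwarz–Pick inequality in multiplied-out form. -/
lemma schwarz_pick {f : ℂ → ℂ} (hf : DifferentiableOn ℂ f (ball (0:ℂ) 1))
    (hm : MapsTo f (ball (0:ℂ) 1) (ball (0:ℂ) 1)) {z w : ℂ}
    (hz : z ∈ ball (0:ℂ) 1) (hw : w ∈ ball (0:ℂ) 1) :
    (1 - (Complex.abs z)^2) * (1 - (Complex.abs w)^2)
        * (Complex.abs (1 - (starRingEnd ℂ) (f w) * f z))^2
      ≤ (1 - (Complex.abs (f z))^2) * (1 - (Complex.abs (f w))^2)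
        * (Complex.abs (1 - (starRingEnd ℂ) w * z))^2 := by
  rw [mem_ball_zero_iff] at hz hw
  have hfz : Complex.abs (f z) < 1 := by
    have := hm (mem_ball_zero_iff.2 hz); rwa [mem_ball_zero_iff] at this
  have hfw : Complex.abs (f w) < 1 := by
    have := hm (mem_ball_zero_iff.2 hw); rwa [mem_ball_zero_iff] at this
  -- the composed map g = mb (f w) ∘ f ∘ mb w
  set g : ℂ → ℂ := fun x => mb (f w) (f (mb w x)) with hg
  have hgd : DifferentiableOn ℂ g (ball (0:ℂ) 1) := by
    apply DifferentiableOn.comp (mb_diff hfw)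
      (DifferentiableOn.comp hf (mb_diff hw) (mb_mapsTo hw))
    exact fun x hx => hm (mb_mapsTo hw hx)
  have hgm : MapsTo g (ball (0:ℂ) 1) (ball (0:ℂ) 1) := fun x hx =>
    mb_mapsTo hfw (hm (mb_mapsTo hw hx))
  have hg0 : g 0 = 0 := by rw [hg]; simp only [mb_zero]; exact mb_self (f w)
  have hsch := Complex.abs_le_abs_of_mapsTo_ball_self hgd hgm hg0
      (z := mb w z) (mb_lt hw hz)
  rw [hg] at hsch
  simp only [mb_mb hw hz] at hsch
  -- hsch : abs (mb (f w) (f z)) ≤ abs (mb w z)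
  have hd1 : Complex.abs (1 - (starRingEnd ℂ) w * z) > 0 := by
    simpa [Complex.abs.pos_iff] using den_ne hw hz.le
  have hd2 : Complex.abs (1 - (starRingEnd ℂ) (f w) * f z) > 0 := by
    simpa [Complex.abs.pos_iff] using den_ne hfw hfz.le
  have hcross : Complex.abs (f w - f z) * Complex.abs (1 - (starRingEnd ℂ) w * z)
      ≤ Complex.abs (w - z) * Complex.abs (1 - (starRingEnd ℂ) (f w) * f z) := by
    rw [mb, mb, map_div₀, map_div₀] at hsch
    exact (div_le_div_iff₀ hd2 hd1).1 hsch
  have hsq : (Complex.abs (f w - f z))^2 * (Complex.abs (1 - (starRingEnd ℂ) w * z))^2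
      ≤ (Complex.abs (w - z))^2 * (Complex.abs (1 - (starRingEnd ℂ) (f w) * f z))^2 := by
    have := pow_le_pow_left₀ (by positivity) hcross 2
    rw [mul_pow, mul_pow] at this
    exact this
  have k1 := key_identity w z
  have k2 := key_identity (f w) (f z)
  nlinarith [hsq, k1, k2]

lemma abs_one_sub_conj_mul {τ : ℂ} (hτ : Complex.abs τ = 1) (x : ℂ) :
    Complex.abs (1 - (starRingEnd ℂ) τ * x) = Complex.abs (τ - x) := by
  have hττ : τ * (starRingEnd ℂ) τ = 1 := by
    rw [Complex.mul_conj, Complex.normSq_eq_abs, hτ]; norm_num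
  calc Complex.abs (1 - (starRingEnd ℂ) τ * x)
      = Complex.abs τ * Complex.abs (1 - (starRingEnd ℂ) τ * x) := by rw [hτ, one_mul]
    _ = Complex.abs (τ * (1 - (starRingEnd ℂ) τ * x)) := (map_mul Complex.abs _ _).symm
    _ = Complex.abs (τ - x) := by
        congr 1
        linear_combination (-x) * hττ

/-- Julia's lemma, sequence form. -/
lemma julia {f : ℂ → ℂ} (hf : DifferentiableOn ℂ f (ball (0:ℂ) 1))
    (hm : MapsTo f (ball (0:ℂ) 1) (ball (0:ℂ) 1))
    {σ τ : ℂ} (hσ : Complex.abs σ = 1) (hτ : Complex.abs τ = 1) {α : ℝ}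
    {w : ℕ → ℂ} (hw : ∀ k, w k ∈ ball (0:ℂ) 1) (hwσ : Tendsto w atTop (nhds σ))
    (hfw : Tendsto (fun k => f (w k)) atTop (nhds τ))
    (hα : Tendsto (fun k => (1 - (Complex.abs (f (w k)))^2) / (1 - (Complex.abs (w k))^2))
      atTop (nhds α))
    {z : ℂ} (hz : z ∈ ball (0:ℂ) 1) :
    (1 - (Complex.abs z)^2) * (Complex.abs (τ - f z))^2
      ≤ α * ((Complex.abs (σ - z))^2 * (1 - (Complex.abs (f z))^2)) := by
  have step : ∀ k, (1 - (Complex.abs z)^2) * (Complex.abs (1 - (starRingEnd ℂ) (f (w k)) * f z))^2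
      ≤ (1 - (Complex.abs (f (w k)))^2) / (1 - (Complex.abs (w k))^2)
        * ((Complex.abs (1 - (starRingEnd ℂ) (w k) * z))^2 * (1 - (Complex.abs (f z))^2)) := by
    intro k
    have hwk : Complex.abs (w k) < 1 := mem_ball_zero_iff.1 (hw k)
    have hpos : (0:ℝ) < 1 - (Complex.abs (w k))^2 := by nlinarith [Complex.abs.nonneg (w k)]
    rw [div_mul_eq_mul_div, le_div_iff₀ hpos]
    have hsp := schwarz_pick hf hm hz (hw k)
    linarith [hsp]
  have habs : Continuous (Complex.abs : ℂ → ℝ) := Complex.continuous_abs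
  have hL : Tendsto (fun k => (1 - (Complex.abs z)^2)
      * (Complex.abs (1 - (starRingEnd ℂ) (f (w k)) * f z))^2) atTop
      (nhds ((1 - (Complex.abs z)^2) * (Complex.abs (1 - (starRingEnd ℂ) τ * f z))^2)) := by
    apply Tendsto.const_mul
    apply Tendsto.pow
    exact (habs.tendsto _).comp ((continuous_const.sub ((Complex.continuous_conj.mul
      continuous_const))).tendsto τ |>.comp hfw)
  have hR : Tendsto (fun k => (1 - (Complex.abs (f (w k)))^2) / (1 - (Complex.abs (w k))^2)
      * ((Complex.abs (1 - (starRingEnd ℂ) (w k) * z))^2 * (1 - (Complex.abs (f z))^2))) atTop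
      (nhds (α * ((Complex.abs (1 - (starRingEnd ℂ) σ * z))^2 * (1 - (Complex.abs (f z))^2)))) := by
    apply Tendsto.mul hα
    apply Tendsto.mul_const
    apply Tendsto.pow
    exact (habs.tendsto _).comp ((continuous_const.sub ((Complex.continuous_conj.mul
      continuous_const))).tendsto σ |>.comp hwσ)
  have := le_of_tendsto_of_tendsto' hL hR step
  rwa [abs_one_sub_conj_mul hτ, abs_one_sub_conj_mul hσ] at this

/-- The sequence of radial points approaching a boundary point. -/
def rad (σ : ℂ) (k : ℕ) : ℂ := ((1 - ((k:ℝ)+2)⁻¹ : ℝ) : ℂ) * σ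

lemma rad_mem {σ : ℂ} (hσ : Complex.abs σ = 1) (k : ℕ) : rad σ k ∈ ball (0:ℂ) 1 := by
  have h2 : (0:ℝ) < (k:ℝ)+2 := by positivity
  have hlt : ((k:ℝ)+2)⁻¹ ≤ 1/2 := by
    rw [inv_le_comm₀ h2 (by norm_num)]
    norm_num
  have hpos : 0 < ((k:ℝ)+2)⁻¹ := by positivity
  rw [mem_ball_zero_iff]
  show Complex.abs _ < 1
  rw [rad, map_mul, Complex.abs_ofReal, hσ, mul_one, _root_.abs_of_nonneg (by linarith)]
  linarith

lemma rad_abs {σ : ℂ} (hσ : Complex.abs σ = 1) (k : ℕ) :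
    Complex.abs (rad σ k) = 1 - ((k:ℝ)+2)⁻¹ := by
  have h2 : (0:ℝ) < (k:ℝ)+2 := by positivity
  have hlt : ((k:ℝ)+2)⁻¹ ≤ 1/2 := by
    rw [inv_le_comm₀ h2 (by norm_num)]
    norm_num
  rw [rad, map_mul, Complex.abs_ofReal, hσ, mul_one, _root_.abs_of_nonneg (by linarith)]

lemma rad_tendsto {σ : ℂ} (hσ : Complex.abs σ = 1) :
    Tendsto (rad σ) atTop (nhds σ) := by
  have hs : Tendsto (fun k : ℕ => ((k:ℝ)+2)⁻¹) atTop (nhds 0) := by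
    apply Tendsto.inv_tendsto_atTop
    exact tendsto_atTop_add_const_right atTop 2 tendsto_natCast_atTop_atTop
  have : Tendsto (fun k : ℕ => ((1 - ((k:ℝ)+2)⁻¹ : ℝ) : ℂ)) atTop (nhds ((1:ℝ):ℂ)) := by
    exact Complex.continuous_ofReal.continuousAt.tendsto.comp
      (by simpa using (tendsto_const_nhds (x := (1:ℝ))).sub hs)
  exact (by simpa only [Complex.ofReal_one, one_mul] using this.mul_const σ :
    Tendsto (fun k : ℕ => ((1 - ((k:ℝ)+2)⁻¹ : ℝ) : ℂ) * σ) atTop (nhds σ))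

lemma rad_ne {σ : ℂ} (hσ : Complex.abs σ = 1) (k : ℕ) : rad σ k ≠ σ := by
  intro h
  have := rad_abs hσ k
  rw [h, hσ] at this
  have h2 : (0:ℝ) < ((k:ℝ)+2)⁻¹ := by positivity
  linarith

lemma rad_tendsto_punct {σ : ℂ} (hσ : Complex.abs σ = 1) :
    Tendsto (rad σ) atTop (nhdsWithin σ {σ}ᶜ) := by
  rw [tendsto_nhdsWithin_iff]
  exact ⟨rad_tendsto hσ, Eventually.of_forall fun k => rad_ne hσ k⟩

/-- Key boundary derivative ratio computation. -/
lemma ratio_tendsto {ψ : ℂ → ℂ} {σ : ℂ} (hσ : Complex.abs σ = 1) {d : ℝ}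
    (hd : HasDerivAt ψ ((d : ℝ) : ℂ) σ) (hfix : ψ σ = σ) :
    Tendsto (fun k : ℕ => (1 - (Complex.abs (ψ (rad σ k)))^2)
      / (1 - (Complex.abs (rad σ k))^2)) atTop (nhds d) := by
  set s : ℕ → ℝ := fun k => ((k:ℝ)+2)⁻¹ with hs_def
  have hs_pos : ∀ k, 0 < s k := fun k => by positivity
  have hs0 : Tendsto s atTop (nhds 0) := by
    apply Tendsto.inv_tendsto_atTop
    exact tendsto_atTop_add_const_right atTop 2 tendsto_natCast_atTop_atTop
  set E : ℕ → ℂ := fun k => slope ψ σ (rad σ k) with hE_def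
  have hE : Tendsto E atTop (nhds ((d:ℝ):ℂ)) :=
    (hasDerivAt_iff_tendsto_slope.1 hd).comp (rad_tendsto_punct hσ)
  have hψval : ∀ k, ψ (rad σ k) = σ * (1 - (s k : ℂ) * E k) := by
    intro k
    have hne : rad σ k - σ ≠ 0 := sub_ne_zero.2 (rad_ne hσ k)
    have hslope : ψ (rad σ k) - ψ σ = E k * (rad σ k - σ) := by
      rw [hE_def]; simp only [slope_def_field]
      field_simp
    have hsub : rad σ k - σ = -(s k : ℂ) * σ := by
      rw [rad, hs_def]
      push_cast
      ring
    rw [hsub] at hslope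
    rw [hfix] at hslope
    linear_combination hslope
  have habs2 : ∀ k, (Complex.abs (ψ (rad σ k)))^2
      = 1 - 2 * (s k * (E k).re) + (s k)^2 * Complex.normSq (E k) := by
    intro k
    rw [hψval k, map_mul, mul_pow, hσ, one_pow, one_mul, Complex.sq_abs]
    simp [Complex.normSq_apply, Complex.sub_re, Complex.sub_im, Complex.mul_re, Complex.mul_im,
      Complex.ofReal_re, Complex.ofReal_im]
    ring
  have hratio : ∀ k, (1 - (Complex.abs (ψ (rad σ k)))^2) / (1 - (Complex.abs (rad σ k))^2)
      = (2 * (E k).re - s k * Complex.normSq (E k)) / (2 - s k) := by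
    intro k
    rw [habs2 k, rad_abs hσ]
    have h1 : 1 - 2 * (s k * (E k).re) + (s k)^2 * Complex.normSq (E k) - 1
        = -(s k * (2 * (E k).re - s k * Complex.normSq (E k))) := by ring
    have h2 : (1:ℝ) - (1 - s k)^2 = s k * (2 - s k) := by ring
    rw [show (1:ℝ) - (1 - 2 * (s k * (E k).re) + (s k)^2 * Complex.normSq (E k))
        = s k * (2 * (E k).re - s k * Complex.normSq (E k)) by ring, h2,
      mul_div_mul_left _ _ (hs_pos k).ne']
  have hre : Tendsto (fun k => (E k).re) atTop (nhds d) := by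
    have := (Complex.continuous_re.tendsto _).comp hE
    simpa [Function.comp_def] using this
  have hnsq : Tendsto (fun k => Complex.normSq (E k)) atTop (nhds (Complex.normSq ((d:ℝ):ℂ))) :=
    (Complex.continuous_normSq.tendsto _).comp hE
  have hnum : Tendsto (fun k => 2 * (E k).re - s k * Complex.normSq (E k)) atTop
      (nhds (2 * d - 0 * Complex.normSq ((d:ℝ):ℂ))) :=
    ((tendsto_const_nhds.mul hre)).sub (hs0.mul hnsq)
  have hden : Tendsto (fun k => 2 - s k) atTop (nhds (2 - 0)) :=
    tendsto_const_nhds.sub hs0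
  have hdiv := hnum.div hden (by norm_num)
  have hval : (2 * d - 0 * Complex.normSq ((d:ℝ):ℂ)) / (2 - 0) = d := by ring
  rw [hval] at hdiv
  exact Tendsto.congr (fun k => (hratio k).symm) (Tendsto.congr (fun k => rfl) hdiv)

lemma root_of_unity_ne_one {n : ℕ} (hn : 2 ≤ n) :
    Complex.exp (2 * (Real.pi:ℂ) * Complex.I / n) ≠ 1 := by
  intro hone
  rw [Complex.exp_eq_one_iff] at hone
  obtain ⟨m, hm⟩ := hone
  have h2πI : (2 * (Real.pi:ℂ) * Complex.I) ≠ 0 := by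
    simp [Real.pi_ne_zero, Complex.I_ne_zero]
  have hn0 : ((n:ℂ)) ≠ 0 := Nat.cast_ne_zero.2 (by omega)
  have hinv : (2 * (Real.pi:ℂ) * Complex.I) * (n:ℂ)⁻¹
      = (2 * (Real.pi:ℂ) * Complex.I) * (m:ℂ) := by
    rw [← mul_comm (m:ℂ) _, ← hm]; ring
  have hmeq : ((n:ℂ))⁻¹ = (m:ℂ) := mul_left_cancel₀ h2πI hinv
  have habs : |(m:ℝ)| = ((n:ℝ))⁻¹ := by
    have := congrArg Complex.abs hmeq
    rw [map_inv₀, Complex.abs_natCast, Complex.abs_intCast] at this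
    exact this.symm
  have hn2 : (2:ℝ) ≤ (n:ℝ) := by exact_mod_cast hn
  have : ((n:ℝ))⁻¹ < 1 := by
    rw [inv_lt_one_iff₀]; right; linarith
  have hm0 : m = 0 := by
    have : |(m:ℝ)| < 1 := by rw [habs]; exact this
    have : ((|m| : ℤ):ℝ) < 1 := by push_cast; exact this
    have hmabs : |m| < 1 := by exact_mod_cast this
    have := abs_lt.mp hmabs
    omega
  rw [hm0] at hmeq
  simp at hmeq
  exact hn0 (by exact_mod_cast hmeq)

/-- An injective holomorphic function on an open set has nonvanishing derivative. -/
lemma deriv_ne_zero_of_injOn {f : ℂ → ℂ} {U : Set ℂ} (hU : IsOpen U)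
    (hf : DifferentiableOn ℂ f U) (hinj : InjOn f U) {z0 : ℂ} (hz0 : z0 ∈ U) :
    deriv f z0 ≠ 0 := by
  intro hd
  have han : AnalyticAt ℂ f z0 := hf.analyticAt (hU.mem_nhds hz0)
  have hF : AnalyticAt ℂ (fun z => f z - f z0) z0 := han.sub analyticAt_const
  -- F is not locally zero
  have hne : ¬ (∀ᶠ z in nhds z0, f z - f z0 = 0) := by
    intro hev
    obtain ⟨r, hr, hball⟩ := Metric.eventually_nhds_iff_ball.1
      (hev.and ((hU.eventually_mem hz0)))
    have h1 : z0 + (r/2 : ℝ) ∈ ball z0 r := by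
      rw [mem_ball, Complex.dist_eq]
      have heq : z0 + ((r/2:ℝ):ℂ) - z0 = ((r/2:ℝ):ℂ) := by ring
      rw [heq, Complex.norm_real, Real.norm_eq_abs, abs_of_pos (by linarith : (0:ℝ) < r/2)]
      linarith
    have h2 := hball _ h1
    have h3 := hball _ (mem_ball_self hr)
    have : z0 + (r/2:ℝ) = z0 := hinj h2.2 h3.2 (by
      have e1 : f (z0 + (r/2:ℝ)) = f z0 := by linear_combination h2.1
      rw [e1])
    simp only [add_eq_left] at this
    rw [Complex.ofReal_eq_zero] at this
    linarith
  -- order is a finite natural number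
  have horder : analyticOrderAt (fun z => f z - f z0) z0 ≠ ⊤ :=
    fun htop => hne (analyticOrderAt_eq_top.1 htop)
  obtain ⟨n, hn⟩ := WithTop.ne_top_iff_exists.1 horder
  obtain ⟨g, hg, hgz0, hFg⟩ := (hF.analyticOrderAt_eq_natCast (n := n)).1 hn.symm
  -- n ≠ 0
  have hn0 : n ≠ 0 := by
    intro h0
    rw [h0] at hFg
    have := hFg.self_of_nhds
    simp at this
    exact hgz0 this.symm
  -- n ≠ 1
  have hn1 : n ≠ 1 := by
    intro h1
    rw [h1] at hFg
    have hd1 : HasDerivAt (fun z => f z - f z0) (0:ℂ) z0 := by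
      have := (han.differentiableAt.hasDerivAt.sub_const (f z0))
      rwa [hd] at this
    have hd2 : HasDerivAt (fun z => (z - z0) ^ 1 • g z) (g z0) z0 := by
      simp only [pow_one, smul_eq_mul]
      have h := ((hasDerivAt_id z0).sub_const z0).fun_mul hg.differentiableAt.hasDerivAt
      simpa using h
    have : deriv (fun z => f z - f z0) z0 = deriv (fun z => (z - z0) ^ 1 • g z) z0 :=
      Filter.EventuallyEq.deriv_eq hFg
    rw [hd1.deriv, hd2.deriv] at this
    exact hgz0 this.symm
  have hn2 : 2 ≤ n := by omega
  -- construct the n-th root h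
  set c : ℂ := g z0 with hc
  have hcne : c ≠ 0 := hgz0
  have hncC : ((n:ℂ)) ≠ 0 := Nat.cast_ne_zero.2 hn0
  set ζ : ℂ := Complex.exp (Complex.log c / n) with hζ
  have hζn : ζ ^ n = c := by
    rw [hζ, ← Complex.exp_nat_mul, mul_div_cancel₀ _ hncC, Complex.exp_log hcne]
  have hζne : ζ ≠ 0 := Complex.exp_ne_zero _
  set φ : ℂ → ℂ := fun z => Complex.exp (Complex.log (g z / c) / n) with hφ
  have hφz0 : φ z0 = 1 := by
    rw [hφ]
    simp only [← hc, div_self hcne, Complex.log_one, zero_div, Complex.exp_zero]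
  have hφan : AnalyticAt ℂ φ z0 := by
    have hquot : AnalyticAt ℂ (fun z => g z / c) z0 := hg.div analyticAt_const hcne
    have hmem : g z0 / c ∈ Complex.slitPlane := by
      rw [← hc, div_self hcne]
      exact Complex.one_mem_slitPlane
    have hlog : AnalyticAt ℂ (fun z => Complex.log (g z / c)) z0 := hquot.clog hmem
    have hdivn : AnalyticAt ℂ (fun z => Complex.log (g z / c) / (n:ℂ)) z0 :=
      hlog.div analyticAt_const hncC
    exact (Complex.differentiable_exp.analyticAt _).comp hdivn
  set hfn : ℂ → ℂ := fun z => (z - z0) * (ζ * φ z) with hhdef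
  have hhz0 : hfn z0 = 0 := by simp [hhdef]
  have hhan : AnalyticAt ℂ hfn z0 :=
    ((analyticAt_id.sub analyticAt_const).mul (analyticAt_const.mul hφan))
  have hhderiv : HasDerivAt hfn ζ z0 := by
    have hζφ : HasDerivAt (fun z => ζ * φ z) (ζ * deriv φ z0) z0 :=
      HasDerivAt.const_mul ζ (hφan.differentiableAt.hasDerivAt)
    have h := ((hasDerivAt_id z0).sub_const z0).fun_mul hζφ
    rw [hhdef]
    have e : 1 * (ζ * φ z0) + (id z0 - z0) * (ζ * deriv φ z0) = ζ := by
      rw [hφz0]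
      simp [id]
    rw [e] at h
    exact h
  -- F = h ^ n near z0
  have hgc : ∀ᶠ z in nhds z0, g z ≠ 0 :=
    hg.continuousAt.eventually_ne hgz0
  have hFh : ∀ᶠ z in nhds z0, f z - f z0 = (hfn z) ^ n := by
    filter_upwards [hFg, hgc] with z h1 h2
    have hφn : (φ z) ^ n = g z / c := by
      rw [hφ, ← Complex.exp_nat_mul, mul_div_cancel₀ _ hncC, Complex.exp_log
        (div_ne_zero h2 hcne)]
    have hcc : c * (g z / c) = g z := by field_simp
    rw [h1, hhdef]
    simp only [smul_eq_mul, mul_pow]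
    rw [hφn, hζn, hcc]
  -- strict derivative
  obtain ⟨p, hp⟩ := hhan
  have hs1 := hp.hasStrictDerivAt
  have huniq : (p 1 fun _ => 1) = ζ := hs1.hasDerivAt.unique hhderiv
  rw [huniq] at hs1
  have hmap : map hfn (nhds z0) = nhds (0:ℂ) := by
    have := hs1.map_nhds_eq hζne
    rwa [hhz0] at this
  -- get ball in image of good neighborhood
  have hV : {z | f z - f z0 = (hfn z)^n} ∩ U ∈ nhds z0 :=
    Filter.inter_mem hFh (hU.mem_nhds hz0)
  have himg : hfn '' ({z | f z - f z0 = (hfn z)^n} ∩ U) ∈ nhds (0:ℂ) := by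
    rw [← hmap]
    exact Filter.image_mem_map hV
  obtain ⟨r, hr, hball⟩ := Metric.mem_nhds_iff.1 himg
  set ω : ℂ := Complex.exp (2 * (Real.pi:ℂ) * Complex.I / n) with hω
  have hωn : ω ^ n = 1 := by
    rw [hω, ← Complex.exp_nat_mul, mul_div_cancel₀ _ hncC, Complex.exp_two_pi_mul_I]
  have hωne : ω ≠ 1 := root_of_unity_ne_one hn2
  have hωabs : Complex.abs ω = 1 := by
    rw [hω, Complex.abs_exp]
    have : (2 * (Real.pi:ℂ) * Complex.I / n).re = 0 := by
      simp [Complex.div_re, Complex.mul_re, Complex.mul_im, Complex.I_re, Complex.I_im]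
    rw [this, Real.exp_zero]
  set t : ℂ := ((r/2 : ℝ) : ℂ) with ht
  have htne : t ≠ 0 := by
    rw [ht, Complex.ofReal_ne_zero]; linarith
  have ht1 : t ∈ ball (0:ℂ) r := by
    rw [mem_ball_zero_iff, ht]
    show Complex.abs _ < r
    rw [Complex.abs_ofReal, abs_of_pos (by linarith : (0:ℝ) < r/2)]
    linarith
  have ht2 : t * ω ∈ ball (0:ℂ) r := by
    rw [mem_ball_zero_iff]
    show Complex.abs _ < r
    rw [map_mul, hωabs, mul_one, ht, Complex.abs_ofReal,
      abs_of_pos (by linarith : (0:ℝ) < r/2)]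
    linarith
  obtain ⟨z1, hz1, hz1v⟩ := hball ht1
  obtain ⟨z2, hz2, hz2v⟩ := hball ht2
  have hfz12 : f z1 = f z2 := by
    have e1 : f z1 - f z0 = t ^ n := by rw [hz1.1]; rw [hz1v]
    have e2 : f z2 - f z0 = t ^ n := by
      rw [hz2.1, hz2v, mul_pow, hωn, mul_one]
    have := e1.trans e2.symm
    linear_combination this
  have hz12 : z1 = z2 := hinj hz1.2 hz2.2 hfz12
  rw [hz12, hz2v] at hz1v
  have : ω = 1 := mul_left_cancel₀ htne (by linear_combination hz1v)
  exact hωne this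

lemma le_of_sq_le_sq' {x y : ℝ} (hx : 0 ≤ x) (hy : 0 ≤ y) (hh : x^2 ≤ y^2) : x ≤ y := by
  nlinarith [hh, hx, hy, sq_nonneg (x - y), sq_nonneg (x + y)]

section HypAutoFacts

variable (h : HypAuto)

lemma psi_diffOn : DifferentiableOn ℂ h.ψ (ball (0:ℂ) 1) := by
  obtain ⟨R, hR, hd⟩ := h.holo
  exact hd.mono (ball_subset_ball (le_of_lt hR))

lemma psi_diffAt_a : DifferentiableAt ℂ h.ψ h.a := by
  obtain ⟨R, hR, hd⟩ := h.holo
  have : h.a ∈ ball (0:ℂ) R := by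
    rw [mem_ball_zero_iff]; show Complex.abs _ < R; rw [Complex.abs_apply, h.ha]; exact hR
  exact hd.differentiableAt (isOpen_ball.mem_nhds this)

lemma psi_diffAt_b : DifferentiableAt ℂ h.ψ h.b := by
  obtain ⟨R, hR, hd⟩ := h.holo
  have : h.b ∈ ball (0:ℂ) R := by
    rw [mem_ball_zero_iff]; show Complex.abs _ < R; rw [Complex.abs_apply, h.hb]; exact hR
  exact hd.differentiableAt (isOpen_ball.mem_nhds this)

lemma psi_hasDerivAt_a : HasDerivAt h.ψ ((h.da : ℝ) : ℂ) h.a := by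
  have := (psi_diffAt_a h).hasDerivAt
  rwa [h.hda] at this

lemma psi_hasDerivAt_b : HasDerivAt h.ψ ((h.db : ℝ) : ℂ) h.b := by
  have := (psi_diffAt_b h).hasDerivAt
  rwa [h.hdb] at this

/-- The inverse automorphism. -/
def Psi : ℂ → ℂ := Function.invFunOn h.ψ (ball (0:ℂ) 1)

lemma Psi_spec {w : ℂ} (hw : w ∈ ball (0:ℂ) 1) :
    Psi h w ∈ ball (0:ℂ) 1 ∧ h.ψ (Psi h w) = w := by
  have hex : ∃ z ∈ ball (0:ℂ) 1, h.ψ z = w := by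
    obtain ⟨z, hz, hzw⟩ := h.bij.surjOn hw
    exact ⟨z, hz, hzw⟩
  exact ⟨Function.invFunOn_mem hex, Function.invFunOn_eq hex⟩

lemma Psi_psi {z : ℂ} (hz : z ∈ ball (0:ℂ) 1) : Psi h (h.ψ z) = z := by
  have hw := h.bij.mapsTo hz
  have := Psi_spec h hw
  exact h.bij.injOn this.1 hz this.2

lemma psi_strict {z : ℂ} (hz : z ∈ ball (0:ℂ) 1) :
    HasStrictDerivAt h.ψ (deriv h.ψ z) z ∧ deriv h.ψ z ≠ 0 := by
  have hne := deriv_ne_zero_of_injOn isOpen_ball (psi_diffOn h) h.bij.injOn hz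
  have han : AnalyticAt ℂ h.ψ z := (psi_diffOn h).analyticAt (isOpen_ball.mem_nhds hz)
  obtain ⟨p, hp⟩ := han
  have hs := hp.hasStrictDerivAt
  have : (p 1 fun _ => 1) = deriv h.ψ z := hs.hasDerivAt.deriv.symm
  rw [this] at hs
  exact ⟨hs, hne⟩

lemma Psi_diffOn : DifferentiableOn ℂ (Psi h) (ball (0:ℂ) 1) := by
  intro w0 hw0
  apply DifferentiableAt.differentiableWithinAt
  set z0 := Psi h w0 with hz0def
  obtain ⟨hz0, hψz0⟩ := Psi_spec h hw0
  obtain ⟨hs, hne⟩ := psi_strict h hz0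
  set E := hs.hasStrictFDerivAt_equiv hne with hEdef
  set g := E.localInverse h.ψ _ z0 with hgdef
  have hgw0 : g (h.ψ z0) = z0 := E.localInverse_apply_image
  have hgcont : ContinuousAt g (h.ψ z0) := E.localInverse_continuousAt
  have hgright : ∀ᶠ y in nhds (h.ψ z0), h.ψ (g y) = y := E.eventually_right_inverse
  have hgdiff : DifferentiableAt ℂ g (h.ψ z0) :=
    E.to_localInverse.differentiableAt
  have hgball : ∀ᶠ y in nhds (h.ψ z0), g y ∈ ball (0:ℂ) 1 := by
    have : ball (0:ℂ) 1 ∈ nhds (g (h.ψ z0)) := by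
      rw [hgw0]; exact isOpen_ball.mem_nhds hz0
    exact hgcont.eventually_mem this
  have hyball : ∀ᶠ y in nhds (h.ψ z0), y ∈ ball (0:ℂ) 1 := by
    rw [hψz0]; exact isOpen_ball.eventually_mem hw0
  have hev : Psi h =ᶠ[nhds w0] g := by
    rw [← hψz0]
    filter_upwards [hgright, hgball, hyball] with y h1 h2 h3
    calc Psi h y = Psi h (h.ψ (g y)) := by rw [h1]
      _ = g y := Psi_psi h h2
  apply DifferentiableAt.congr_of_eventuallyEq _ hev
  rwa [hψz0] at hgdiff

lemma Psi_mapsTo : MapsTo (Psi h) (ball (0:ℂ) 1) (ball (0:ℂ) 1) :=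
  fun w hw => (Psi_spec h hw).1

lemma julia_a {z : ℂ} (hz : z ∈ ball (0:ℂ) 1) :
    (1 - (Complex.abs z)^2) * (Complex.abs (h.a - h.ψ z))^2
      ≤ h.da * ((Complex.abs (h.a - z))^2 * (1 - (Complex.abs (h.ψ z))^2)) := by
  have hfw : Tendsto (fun k => h.ψ (rad h.a k)) atTop (nhds h.a) := by
    have := (psi_diffAt_a h).continuousAt.tendsto.comp (rad_tendsto h.ha)
    rwa [h.fixa] at this
  exact julia (psi_diffOn h) h.bij.mapsTo h.ha h.ha (rad_mem h.ha) (rad_tendsto h.ha)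
    hfw (ratio_tendsto h.ha (psi_hasDerivAt_a h) h.fixa) hz

lemma db_pos : (0:ℝ) < h.db := lt_trans one_pos h.hdb1

lemma da_inv : h.db⁻¹ = h.da := by
  have hdbne : h.db ≠ 0 := ne_of_gt (db_pos h)
  field_simp
  linarith [h.hmulder]

lemma julia_b {z : ℂ} (hz : z ∈ ball (0:ℂ) 1) :
    (1 - (Complex.abs (h.ψ z))^2) * (Complex.abs (h.b - z))^2
      ≤ h.da * ((Complex.abs (h.b - h.ψ z))^2 * (1 - (Complex.abs z)^2)) := by
  have hw : ∀ k, h.ψ (rad h.b k) ∈ ball (0:ℂ) 1 := fun k => h.bij.mapsTo (rad_mem h.hb k)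
  have hwσ : Tendsto (fun k => h.ψ (rad h.b k)) atTop (nhds h.b) := by
    have := (psi_diffAt_b h).continuousAt.tendsto.comp (rad_tendsto h.hb)
    rwa [h.fixb] at this
  have hfw : Tendsto (fun k => Psi h (h.ψ (rad h.b k))) atTop (nhds h.b) :=
    (rad_tendsto h.hb).congr (fun k => (Psi_psi h (rad_mem h.hb k)).symm)
  have hα : Tendsto (fun k => (1 - (Complex.abs (Psi h (h.ψ (rad h.b k))))^2)
      / (1 - (Complex.abs (h.ψ (rad h.b k)))^2)) atTop (nhds h.da) := by
    have h1 := ratio_tendsto h.hb (psi_hasDerivAt_b h) h.fixb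
    have h2 := h1.inv₀ (ne_of_gt (db_pos h))
    rw [da_inv h] at h2
    apply h2.congr
    intro k
    rw [inv_div, Psi_psi h (rad_mem h.hb k)]
  have hj := julia (Psi_diffOn h) (Psi_mapsTo h) h.hb h.hb hw hwσ hfw hα
    (z := h.ψ z) (h.bij.mapsTo hz)
  rwa [Psi_psi h hz] at hj

/-- The key expansion step: the ratio `|b-z|/|a-z|` grows by factor `db` under `ψ`. -/
lemma step_ineq {z : ℂ} (hz : z ∈ ball (0:ℂ) 1) :
    h.db * (Complex.abs (h.a - h.ψ z) * Complex.abs (h.b - z))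
      ≤ Complex.abs (h.a - z) * Complex.abs (h.b - h.ψ z) := by
  have hzb : Complex.abs z < 1 := mem_ball_zero_iff.1 hz
  have hψzb : Complex.abs (h.ψ z) < 1 := mem_ball_zero_iff.1 (h.bij.mapsTo hz)
  have hP : (0:ℝ) < 1 - (Complex.abs z)^2 := by nlinarith [Complex.abs.nonneg z]
  have hQ : (0:ℝ) < 1 - (Complex.abs (h.ψ z))^2 := by nlinarith [Complex.abs.nonneg (h.ψ z)]
  have j1 := julia_a h hz
  have j2 := julia_b h hz
  have hda : (0:ℝ) < h.da := h.hda1.1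
  set A := Complex.abs (h.a - h.ψ z) with hA
  set B := Complex.abs (h.b - z) with hB
  set A' := Complex.abs (h.a - z) with hA'
  set B' := Complex.abs (h.b - h.ψ z) with hB'
  set P := 1 - (Complex.abs z)^2 with hPd
  set Q := 1 - (Complex.abs (h.ψ z))^2 with hQd
  have hAn : 0 ≤ A := Complex.abs.nonneg _
  have hBn : 0 ≤ B := Complex.abs.nonneg _
  have hA'n : 0 ≤ A' := Complex.abs.nonneg _
  have hB'n : 0 ≤ B' := Complex.abs.nonneg _
  -- j1 : P * A^2 ≤ da * (A'^2 * Q), j2 : Q * B^2 ≤ da * (B'^2 * P)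
  have s1 : (P * A^2) * (Q * B^2) ≤ (h.da * (A'^2 * Q)) * (h.da * (B'^2 * P)) := by
    apply mul_le_mul j1 j2 (by positivity) ?_
    have : 0 ≤ A'^2 * Q := by positivity
    positivity
  have s3 : A^2 * B^2 ≤ h.da^2 * (A'^2 * B'^2) := by
    have s2 : (A^2 * B^2) * (P * Q) ≤ (h.da^2 * (A'^2 * B'^2)) * (P * Q) := by nlinarith [s1]
    exact le_of_mul_le_mul_right s2 (by positivity)
  have hdadb : h.da * h.db = 1 := h.hmulder
  have s4 : (h.db * (A * B))^2 ≤ (A' * B')^2 := by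
    have e1 : (h.db * (A * B))^2 = h.db^2 * (A^2 * B^2) := by ring
    have e2 : h.db^2 * (h.da^2 * (A'^2 * B'^2)) = (A' * B')^2 := by
      have : (h.da * h.db)^2 = 1 := by rw [hdadb]; norm_num
      nlinarith [this]
    calc (h.db * (A * B))^2 = h.db^2 * (A^2 * B^2) := e1
      _ ≤ h.db^2 * (h.da^2 * (A'^2 * B'^2)) := by
          apply mul_le_mul_of_nonneg_left s3 (by positivity)
      _ = (A' * B')^2 := e2
  exact le_of_sq_le_sq' (mul_nonneg (le_of_lt (db_pos h)) (mul_nonneg hAn hBn))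
    (mul_nonneg hA'n hB'n) s4

lemma iter_mem {z : ℂ} (hz : z ∈ ball (0:ℂ) 1) (j : ℕ) : h.ψ^[j] z ∈ ball (0:ℂ) 1 := by
  induction j with
  | zero => simpa using hz
  | succ k ih => rw [Function.iterate_succ_apply']; exact h.bij.mapsTo ih

lemma a_sub_pos {z : ℂ} (hz : z ∈ ball (0:ℂ) 1) : 0 < Complex.abs (h.a - z) := by
  rw [mem_ball_zero_iff] at hz
  have : h.a ≠ z := by
    intro hh
    rw [← hh] at hz
    change Complex.abs h.a < 1 at hz
    rw [Complex.abs_apply, h.ha] at hz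
    exact lt_irrefl _ hz
  simpa [Complex.abs.pos_iff, sub_ne_zero] using this

lemma b_sub_pos {z : ℂ} (hz : z ∈ ball (0:ℂ) 1) : 0 < Complex.abs (h.b - z) := by
  rw [mem_ball_zero_iff] at hz
  have : h.b ≠ z := by
    intro hh
    rw [← hh] at hz
    change Complex.abs h.b < 1 at hz
    rw [Complex.abs_apply, h.hb] at hz
    exact lt_irrefl _ hz
  simpa [Complex.abs.pos_iff, sub_ne_zero] using this

/-- The expanding ratio `|b-z| / |a-z|`. -/
def Grat (w : ℂ) : ℝ := Complex.abs (h.b - w) / Complex.abs (h.a - w)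

lemma Grat_nonneg (w : ℂ) : 0 ≤ Grat h w :=
  div_nonneg (Complex.abs.nonneg _) (Complex.abs.nonneg _)

lemma Grat_step {z : ℂ} (hz : z ∈ ball (0:ℂ) 1) : h.db * Grat h z ≤ Grat h (h.ψ z) := by
  have h1 : 0 < Complex.abs (h.a - z) := a_sub_pos h hz
  have h2 : 0 < Complex.abs (h.a - h.ψ z) := a_sub_pos h (h.bij.mapsTo hz)
  rw [Grat, Grat, ← mul_div_assoc, div_le_div_iff₀ h1 h2]
  have := step_ineq h hz
  nlinarith [this]

lemma Grat_iter {z : ℂ} (hz : z ∈ ball (0:ℂ) 1) (i k : ℕ) :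
    h.db ^ k * Grat h (h.ψ^[i] z) ≤ Grat h (h.ψ^[i + k] z) := by
  induction k with
  | zero => simp
  | succ m ih =>
      have hmem : h.ψ^[i + m] z ∈ ball (0:ℂ) 1 := iter_mem h hz (i + m)
      have hstep := Grat_step h hmem
      have hdb := db_pos h
      calc h.db ^ (m+1) * Grat h (h.ψ^[i] z)
          = h.db * (h.db ^ m * Grat h (h.ψ^[i] z)) := by ring
        _ ≤ h.db * Grat h (h.ψ^[i + m] z) := by
            apply mul_le_mul_of_nonneg_left ih (le_of_lt hdb)
        _ ≤ Grat h (h.ψ (h.ψ^[i + m] z)) := hstep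
        _ = Grat h (h.ψ^[i + (m+1)] z) := by
            rw [← Function.iterate_succ_apply' h.ψ (i + m) z]
            rfl

lemma abs_sub_le_two {w : ℂ} (hw : w ∈ ball (0:ℂ) 1) {σ : ℂ} (hσ : Complex.abs σ = 1) :
    Complex.abs (σ - w) ≤ 2 := by
  rw [mem_ball_zero_iff] at hw
  change Complex.abs w < 1 at hw
  calc Complex.abs (σ - w) ≤ Complex.abs σ + Complex.abs w := by
        simpa [sub_eq_add_neg] using Complex.abs.add_le σ (-w)
    _ ≤ 2 := by rw [hσ]; linarith

/-- Uniform bound on the number of iterates outside both caps. -/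
lemma bad_count {z : ℂ} (hz : z ∈ ball (0:ℂ) 1) {δ : ℝ} (hδ : 0 < δ) {M : ℕ}
    (hM : 4 / δ^2 < h.db ^ M) (n : ℕ) (Bad : Finset ℕ)
    (hBadmem : ∀ j, j ∈ Bad ↔ j ∈ Finset.range n
      ∧ (h.ψ^[j] z ∉ ball h.a δ ∧ h.ψ^[j] z ∉ ball h.b δ)) :
    Bad.card ≤ M := by
  rcases Finset.eq_empty_or_nonempty Bad with hB | hB
  · simp [hB]
  set i0 := Bad.min' hB with hi0
  have hi0mem : i0 ∈ Bad := Bad.min'_mem hB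
  have hkey : ∀ j ∈ Bad, j < i0 + M := by
    intro j hj
    by_contra hge
    push_neg at hge
    have hij : i0 ≤ j := Bad.min'_le j hj
    have hMj : M ≤ j - i0 := by omega
    -- G at i0 is at least δ/2
    have hmem0 : h.ψ^[i0] z ∈ ball (0:ℂ) 1 := iter_mem h hz i0
    have hmemj : h.ψ^[j] z ∈ ball (0:ℂ) 1 := iter_mem h hz j
    have hb0 : δ ≤ Complex.abs (h.b - h.ψ^[i0] z) := by
      have := ((hBadmem i0).1 hi0mem).2.2
      rw [mem_ball, Complex.dist_eq] at this
      push_neg at this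
      calc δ ≤ Complex.abs (h.ψ^[i0] z - h.b) := this
        _ = Complex.abs (h.b - h.ψ^[i0] z) := Complex.abs.map_sub _ _
    have haj : δ ≤ Complex.abs (h.a - h.ψ^[j] z) := by
      have := ((hBadmem j).1 hj).2.1
      rw [mem_ball, Complex.dist_eq] at this
      push_neg at this
      calc δ ≤ Complex.abs (h.ψ^[j] z - h.a) := this
        _ = Complex.abs (h.a - h.ψ^[j] z) := Complex.abs.map_sub _ _
    have hG0 : δ / 2 ≤ Grat h (h.ψ^[i0] z) := by
      rw [Grat, le_div_iff₀ (a_sub_pos h hmem0)]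
      have h2 := abs_sub_le_two hmem0 h.ha
      nlinarith
    have hGjδ : Grat h (h.ψ^[j] z) * δ ≤ 2 := by
      rw [Grat, div_mul_eq_mul_div, div_le_iff₀ (a_sub_pos h hmemj)]
      have h2 := abs_sub_le_two hmemj h.hb
      nlinarith
    have hiter := Grat_iter h hz i0 (j - i0)
    rw [show i0 + (j - i0) = j by omega] at hiter
    have hpow : h.db ^ M ≤ h.db ^ (j - i0) :=
      pow_le_pow_right₀ (le_of_lt h.hdb1) hMj
    have hmid : h.db ^ (j - i0) * (δ/2) ≤ Grat h (h.ψ^[j] z) := by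
      calc h.db ^ (j - i0) * (δ/2) ≤ h.db ^ (j - i0) * Grat h (h.ψ^[i0] z) :=
            mul_le_mul_of_nonneg_left hG0 (le_of_lt (pow_pos (db_pos h) _))
        _ ≤ Grat h (h.ψ^[j] z) := hiter
    have hcontra : h.db ^ M ≤ 4 / δ^2 := by
      rw [le_div_iff₀ (by positivity : (0:ℝ) < δ^2)]
      have hmul := mul_le_mul_of_nonneg_right hmid hδ.le
      have hMe : h.db ^ M * δ^2 ≤ h.db ^ (j - i0) * δ^2 :=
        mul_le_mul_of_nonneg_right hpow (by positivity)
      nlinarith [hmul, hGjδ]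
    linarith
  have hsub : Bad ⊆ Finset.Ico i0 (i0 + M) := by
    intro j hj
    rw [Finset.mem_Ico]
    exact ⟨Bad.min'_le j hj, hkey j hj⟩
  calc Bad.card ≤ (Finset.Ico i0 (i0 + M)).card := Finset.card_le_card hsub
    _ = M := by rw [Nat.card_Ico]; omega

end HypAutoFacts

end HypAutoProof

open HypAutoProof

/-- With `u_n = ∏_{j=0}^{n-1} u∘ψ_j`, the limit of `(inf_𝔻 |u_n|)^{1/n}` exists
and is at least `min{A⁻, B⁻}`, where `A⁻ = liminf_{𝔻∋z→a} |u z|` and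
`B⁻ = liminf_{𝔻∋z→b} |u z|`. -/
theorem inf_iterated_weight_limit (h : HypAuto)
    (u : ℂ → ℂ) (hu : DifferentiableOn ℂ u (ball (0:ℂ) 1))
    (hubd : ∃ C : ℝ, ∀ z ∈ ball (0:ℂ) 1, ‖u z‖ ≤ C)
    (huaway : ∃ c : ℝ, 0 < c ∧ ∀ z ∈ ball (0:ℂ) 1, c ≤ ‖u z‖) :
    ∃ L : ℝ,
      Tendsto
        (fun n : ℕ =>
          (sInf ((fun z => ‖
            (∏ j ∈ Finset.range n, u (h.ψ^[j] z))‖) '' ball (0:ℂ) 1)) ^ (1 / (n:ℝ)))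
        atTop (nhds L) ∧
      min (liminf (fun z => ‖u z‖) (nhdsWithin h.a (ball (0:ℂ) 1)))
          (liminf (fun z => ‖u z‖) (nhdsWithin h.b (ball (0:ℂ) 1))) ≤ L := by
  simp only [← Complex.abs_apply] at hubd huaway ⊢
  classical
  obtain ⟨c, hc0, hc⟩ := huaway
  obtain ⟨C, hC⟩ := hubd
  have h0D : (0:ℂ) ∈ ball (0:ℂ) 1 := mem_ball_self one_pos
  have hcC : c ≤ C := le_trans (hc 0 h0D) (hC 0 h0D)
  have hC0 : (0:ℝ) < C := lt_of_lt_of_le hc0 hcC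
  set un : ℕ → ℂ → ℂ := fun n z => ∏ j ∈ Finset.range n, u (h.ψ^[j] z) with hun
  set v : ℕ → ℝ := fun n => sInf ((fun z => Complex.abs (un n z)) '' ball (0:ℂ) 1) with hv
  have habsprod : ∀ n z, Complex.abs (un n z)
      = ∏ j ∈ Finset.range n, Complex.abs (u (h.ψ^[j] z)) := by
    intro n z
    rw [hun]
    exact map_prod Complex.abs _ _
  have hlow : ∀ n, ∀ z ∈ ball (0:ℂ) 1, c ^ n ≤ Complex.abs (un n z) := by
    intro n z hz
    rw [habsprod]
    calc c ^ n = ∏ _j ∈ Finset.range n, c := by rw [Finset.prod_const, Finset.card_range]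
      _ ≤ ∏ j ∈ Finset.range n, Complex.abs (u (h.ψ^[j] z)) :=
          Finset.prod_le_prod (fun _ _ => le_of_lt hc0)
            (fun j _ => hc _ (iter_mem h hz j))
  have hup : ∀ n, ∀ z ∈ ball (0:ℂ) 1, Complex.abs (un n z) ≤ C ^ n := by
    intro n z hz
    rw [habsprod]
    calc ∏ j ∈ Finset.range n, Complex.abs (u (h.ψ^[j] z))
        ≤ ∏ _j ∈ Finset.range n, C :=
          Finset.prod_le_prod (fun j _ => Complex.abs.nonneg _)
            (fun j _ => hC _ (iter_mem h hz j))
      _ = C ^ n := by rw [Finset.prod_const, Finset.card_range]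
  have himgne : ∀ n, ((fun z => Complex.abs (un n z)) '' ball (0:ℂ) 1).Nonempty :=
    fun n => ⟨_, Set.mem_image_of_mem _ h0D⟩
  have hbdd : ∀ n, BddBelow ((fun z => Complex.abs (un n z)) '' ball (0:ℂ) 1) := by
    intro n
    refine ⟨c ^ n, ?_⟩
    rintro y ⟨z, hz, rfl⟩
    exact hlow n z hz
  have hvlow : ∀ n, c ^ n ≤ v n := by
    intro n
    apply le_csInf (himgne n)
    rintro y ⟨z, hz, rfl⟩
    exact hlow n z hz
  have hvpos : ∀ n, 0 < v n := fun n => lt_of_lt_of_le (pow_pos hc0 n) (hvlow n)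
  have hvle : ∀ n, ∀ z ∈ ball (0:ℂ) 1, v n ≤ Complex.abs (un n z) :=
    fun n z hz => csInf_le (hbdd n) (Set.mem_image_of_mem _ hz)
  have hvup : ∀ n, v n ≤ C ^ n := fun n => le_trans (hvle n 0 h0D) (hup n 0 h0D)
  have hsuper : ∀ m n, v m * v n ≤ v (m + n) := by
    intro m n
    apply le_csInf (himgne (m+n))
    rintro y ⟨z, hz, rfl⟩
    have hsplit : un (m+n) z = un m z * un n (h.ψ^[m] z) := by
      rw [hun]
      simp only
      rw [Finset.prod_range_add]
      congr 1
      apply Finset.prod_congr rfl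
      intro j _
      congr 1
      rw [add_comm m j, Function.iterate_add_apply]
    dsimp only
    rw [hsplit, map_mul]
    exact mul_le_mul (hvle m z hz) (hvle n _ (iter_mem h hz m))
      (le_of_lt (hvpos n)) (Complex.abs.nonneg _)
  -- Fekete
  set σ : ℕ → ℝ := fun n => -Real.log (v n) with hσdef
  have hσsub : Subadditive σ := by
    intro m n
    have hlog : Real.log (v m) + Real.log (v n) ≤ Real.log (v (m+n)) := by
      rw [← Real.log_mul (ne_of_gt (hvpos m)) (ne_of_gt (hvpos n))]
      exact Real.log_le_log (mul_pos (hvpos m) (hvpos n)) (hsuper m n)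
    simp only [hσdef]
    linarith
  have hbddbelow : BddBelow (Set.range fun n => σ n / n) := by
    refine ⟨min (-Real.log C) 0, ?_⟩
    rintro y ⟨n, rfl⟩
    rcases Nat.eq_zero_or_pos n with h0 | hn
    · subst h0
      simp only [Nat.cast_zero, div_zero]
      exact min_le_right _ _
    · have hn' : (0:ℝ) < n := by exact_mod_cast hn
      have hloglow : -Real.log C ≤ σ n / n := by
        have h1 : Real.log (v n) ≤ Real.log (C ^ n) :=
          Real.log_le_log (hvpos n) (hvup n)
        rw [Real.log_pow] at h1
        rw [hσdef]
        simp only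
        rw [le_div_iff₀ hn']
        push_cast
        nlinarith [h1]
      exact le_trans (min_le_left _ _) hloglow
  set L : ℝ := Real.exp (-hσsub.lim) with hLdef
  have hσtend := hσsub.tendsto_lim hbddbelow
  have hL0 : 0 < L := Real.exp_pos _
  have hmain : Tendsto (fun n : ℕ => v n ^ (1/(n:ℝ))) atTop (nhds L) := by
    have hexp : Tendsto (fun n : ℕ => Real.exp (-(σ n / n))) atTop (nhds L) := by
      rw [hLdef]
      exact (Real.continuous_exp.tendsto _).comp hσtend.neg
    apply hexp.congr'
    filter_upwards [Filter.eventually_ge_atTop 1] with n hn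
    have hnne : ((n:ℝ)) ≠ 0 := Nat.cast_ne_zero.2 (by omega)
    rw [Real.rpow_def_of_pos (hvpos n)]
    congr 1
    rw [hσdef]
    simp only
    field_simp
  refine ⟨L, hmain, ?_⟩
  -- lower bound part
  by_contra hlt
  push_neg at hlt
  set A := liminf (fun z => Complex.abs (u z)) (nhdsWithin h.a (ball (0:ℂ) 1)) with hAdef
  set B := liminf (fun z => Complex.abs (u z)) (nhdsWithin h.b (ball (0:ℂ) 1)) with hBdef
  set m0 := min A B with hm0
  -- L < m0
  set ρ := (m0 + L) / 2 with hρdef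
  have hρL : L < ρ := by
    rw [hρdef]; linarith [hlt]
  have hρm : ρ < m0 := by rw [hρdef]; linarith [hlt]
  have hρ0 : 0 < ρ := by
    rw [hρdef]; linarith [hL0, hlt]
  have hNeBotA : (nhdsWithin h.a (ball (0:ℂ) 1)).NeBot := by
    apply mem_closure_iff_nhdsWithin_neBot.1
    rw [closure_ball (0:ℂ) one_ne_zero, mem_closedBall_zero_iff]
    show Complex.abs h.a ≤ 1
    rw [Complex.abs_apply, h.ha]
  have hNeBotB : (nhdsWithin h.b (ball (0:ℂ) 1)).NeBot := by
    apply mem_closure_iff_nhdsWithin_neBot.1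
    rw [closure_ball (0:ℂ) one_ne_zero, mem_closedBall_zero_iff]
    show Complex.abs h.b ≤ 1
    rw [Complex.abs_apply, h.hb]
  have hcobA : IsBoundedUnder (· ≥ ·) (nhdsWithin h.a (ball (0:ℂ) 1))
      (fun z => Complex.abs (u z)) :=
    Filter.isBoundedUnder_of ⟨0, fun z => Complex.abs.nonneg _⟩
  have hcobB : IsBoundedUnder (· ≥ ·) (nhdsWithin h.b (ball (0:ℂ) 1))
      (fun z => Complex.abs (u z)) :=
    Filter.isBoundedUnder_of ⟨0, fun z => Complex.abs.nonneg _⟩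
  have hevA : ∀ᶠ z in nhdsWithin h.a (ball (0:ℂ) 1), ρ < Complex.abs (u z) :=
    Filter.eventually_lt_of_lt_liminf (lt_of_lt_of_le hρm (min_le_left _ _)) hcobA
  have hevB : ∀ᶠ z in nhdsWithin h.b (ball (0:ℂ) 1), ρ < Complex.abs (u z) :=
    Filter.eventually_lt_of_lt_liminf (lt_of_lt_of_le hρm (min_le_right _ _)) hcobB
  obtain ⟨δa, hδa0, hδaP⟩ := (Metric.nhdsWithin_basis_ball.eventually_iff).1 hevA
  obtain ⟨δb, hδb0, hδbP⟩ := (Metric.nhdsWithin_basis_ball.eventually_iff).1 hevB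
  set δ := min δa δb with hδdef
  have hδ0 : 0 < δ := lt_min hδa0 hδb0
  obtain ⟨M, hM⟩ := pow_unbounded_of_one_lt (4/δ^2) h.hdb1
  set K := min (c/ρ) 1 ^ M with hKdef
  have hminpos : 0 < min (c/ρ) 1 := lt_min (div_pos hc0 hρ0) one_pos
  have hK0 : 0 < K := pow_pos hminpos M
  have hkey : ∀ n, ∀ z ∈ ball (0:ℂ) 1, K * ρ ^ n ≤ Complex.abs (un n z) := by
    intro n z hz
    set Bad := (Finset.range n).filter
      (fun j => h.ψ^[j] z ∉ ball h.a δ ∧ h.ψ^[j] z ∉ ball h.b δ) with hBadDef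
    have hBadmem : ∀ j, j ∈ Bad ↔ j ∈ Finset.range n
        ∧ (h.ψ^[j] z ∉ ball h.a δ ∧ h.ψ^[j] z ∉ ball h.b δ) := by
      intro j
      rw [hBadDef, Finset.mem_filter]
    have hcard : Bad.card ≤ M := bad_count h hz hδ0 hM n Bad hBadmem
    have hBadsub : Bad ⊆ Finset.range n := by rw [hBadDef]; exact Finset.filter_subset _ _
    set k := Bad.card with hkdef
    have hkn : k ≤ n := by
      rw [hkdef]
      calc Bad.card ≤ (Finset.range n).card := Finset.card_le_card hBadsub
        _ = n := Finset.card_range n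
    have hfac : ∀ j ∈ Finset.range n,
        (if j ∈ Bad then c else ρ) ≤ Complex.abs (u (h.ψ^[j] z)) := by
      intro j hj
      by_cases hjb : j ∈ Bad
      · rw [if_pos hjb]
        exact hc _ (iter_mem h hz j)
      · rw [if_neg hjb]
        have hnot : ¬(h.ψ^[j] z ∉ ball h.a δ ∧ h.ψ^[j] z ∉ ball h.b δ) := by
          intro hcontra
          exact hjb ((hBadmem j).2 ⟨hj, hcontra⟩)
        push_neg at hnot
        by_cases hin : h.ψ^[j] z ∈ ball h.a δ
        · apply le_of_lt (hδaP ?_)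
          exact ⟨ball_subset_ball (min_le_left _ _) hin, iter_mem h hz j⟩
        · have hinb := hnot hin
          apply le_of_lt (hδbP ?_)
          exact ⟨ball_subset_ball (min_le_right _ _) hinb, iter_mem h hz j⟩
    have hprod : ∏ j ∈ Finset.range n, (if j ∈ Bad then c else ρ)
        ≤ Complex.abs (un n z) := by
      rw [habsprod]
      exact Finset.prod_le_prod
        (fun j _ => by split <;> [exact hc0.le; exact hρ0.le]) hfac
    have hprodeq : ∏ j ∈ Finset.range n, (if j ∈ Bad then c else ρ)
        = c ^ k * ρ ^ (n - k) := by
      rw [Finset.prod_ite, Finset.prod_const, Finset.prod_const]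
      have e1 : (Finset.range n).filter (fun j => j ∈ Bad) = Bad := by
        rw [Finset.filter_mem_eq_inter]
        exact Finset.inter_eq_right.2 hBadsub
      have e2 : ((Finset.range n).filter (fun j => j ∉ Bad)).card = n - k := by
        have := Finset.card_filter_add_card_filter_not
          (s := Finset.range n) (p := fun j => j ∈ Bad)
        rw [e1] at this
        rw [Finset.card_range] at this
        omega
      rw [e1, e2]
    have hfinal : K * ρ ^ n ≤ c ^ k * ρ ^ (n - k) := by
      have hρn : ρ ^ n = ρ ^ k * ρ ^ (n - k) := by
        rw [← pow_add]
        congr 1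
        omega
      have e1 : (c/ρ)^k * ρ ^ n = c ^ k * ρ ^ (n - k) := by
        rw [hρn, div_pow, ← mul_assoc, div_mul_cancel₀ _ (pow_ne_zero k hρ0.ne')]
      rw [← e1]
      apply mul_le_mul_of_nonneg_right _ (by positivity)
      calc K ≤ min (c/ρ) 1 ^ k := by
            rw [hKdef]
            exact pow_le_pow_of_le_one (le_of_lt hminpos) (min_le_right _ _) hcard
        _ ≤ (c/ρ) ^ k := pow_le_pow_left₀ (le_of_lt hminpos) (min_le_left _ _) k
    calc K * ρ ^ n ≤ c ^ k * ρ ^ (n - k) := hfinal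
      _ = ∏ j ∈ Finset.range n, (if j ∈ Bad then c else ρ) := hprodeq.symm
      _ ≤ Complex.abs (un n z) := hprod
  have hvK : ∀ n, K * ρ ^ n ≤ v n := by
    intro n
    apply le_csInf (himgne n)
    rintro y ⟨z, hz, rfl⟩
    exact hkey n z hz
  have hcomp : ∀ᶠ n : ℕ in atTop, K ^ (1/(n:ℝ)) * ρ ≤ v n ^ (1/(n:ℝ)) := by
    filter_upwards [Filter.eventually_ge_atTop 1] with n hn
    have hnne : ((n:ℝ)) ≠ 0 := Nat.cast_ne_zero.2 (by omega)
    have h1n : (0:ℝ) ≤ 1/(n:ℝ) := by positivity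
    have hstep := Real.rpow_le_rpow (by positivity) (hvK n) h1n
    rw [Real.mul_rpow (le_of_lt hK0) (by positivity)] at hstep
    rw [← Real.rpow_natCast ρ n, ← Real.rpow_mul (le_of_lt hρ0), mul_one_div,
      div_self hnne, Real.rpow_one] at hstep
    exact hstep
  have hKtend : Tendsto (fun n : ℕ => K ^ (1/(n:ℝ)) * ρ) atTop (nhds (1 * ρ)) := by
    apply Tendsto.mul_const
    have hlogn : Tendsto (fun n : ℕ => Real.log K / (n:ℝ)) atTop (nhds 0) :=
      tendsto_const_div_atTop_nhds_zero_nat _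
    have hexp := (Real.continuous_exp.tendsto 0).comp hlogn
    rw [Real.exp_zero] at hexp
    apply hexp.congr
    intro n
    rw [Real.rpow_def_of_pos hK0, mul_one_div]
    rfl
  have hρleL : 1 * ρ ≤ L := le_of_tendsto_of_tendsto hKtend hmain hcomp
  rw [one_mul] at hρleL
  linarith [hρL]
end
end

section
/- Let T be a bounded invertible operator on a complex Banach space X, let f ∈ X be nonzero, and suppose limsup_n ‖Tⁿf‖^{1/n} ≤ R₁ and limsup_n ‖T^{−n}f‖^{1/n} ≤ 1/R₂, where R₁ < R₂. Then the open annulus {λ : R₁ < |λ| < R₂} is contained in the spectrum of T. -/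
open Filter

namespace AnnulusSpectrumAux

open Set Metric
open scoped ENNReal NNReal

variable {X : Type*} [NormedAddCommGroup X] [NormedSpace ℂ X] [CompleteSpace X]

/-- The sequence `‖(S ^ n) f‖ ^ (1/n)` is bounded above. -/
lemma rpow_bounded (S : X →L[ℂ] X) (f : X) :
    IsBoundedUnder (· ≤ ·) atTop (fun n : ℕ => ‖(S ^ n) f‖ ^ (1 / (n : ℝ))) := by
  set M : ℝ := max 1 ‖S‖ * max 1 ‖f‖ with hM
  have h1 : (1 : ℝ) ≤ max 1 ‖S‖ := le_max_left _ _
  have h2 : (1 : ℝ) ≤ max 1 ‖f‖ := le_max_left _ _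
  have hM1 : (1 : ℝ) ≤ M := by
    calc (1 : ℝ) = 1 * 1 := (one_mul 1).symm
    _ ≤ M := mul_le_mul h1 h2 zero_le_one (zero_le_one.trans h1)
  refine isBoundedUnder_of ⟨M, fun n => ?_⟩
  rcases Nat.eq_zero_or_pos n with h0 | hpos
  · subst h0
    simpa using hM1
  · have hn : (0 : ℝ) < (n : ℝ) := by exact_mod_cast hpos
    have hb : ‖(S ^ n) f‖ ≤ M ^ n := by
      calc ‖(S ^ n) f‖ ≤ ‖S ^ n‖ * ‖f‖ := (S ^ n).le_opNorm f
      _ ≤ ‖S‖ ^ n * ‖f‖ :=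
        mul_le_mul_of_nonneg_right (norm_pow_le' S hpos) (norm_nonneg f)
      _ ≤ (max 1 ‖S‖) ^ n * max 1 ‖f‖ := by
        gcongr
        · exact le_max_right _ _
        · exact le_max_right _ _
      _ ≤ (max 1 ‖S‖) ^ n * (max 1 ‖f‖) ^ n :=
        mul_le_mul_of_nonneg_left (le_self_pow₀ (by linarith) hpos.ne') (by positivity)
      _ = M ^ n := (mul_pow _ _ n).symm
    have key := Real.rpow_le_rpow (norm_nonneg _) hb (by positivity : (0:ℝ) ≤ 1 / (n:ℝ))
    calc ‖(S ^ n) f‖ ^ (1 / (n : ℝ)) ≤ (M ^ n) ^ (1 / (n : ℝ)) := key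
    _ = M := by
      rw [← Real.rpow_natCast M n, ← Real.rpow_mul (by linarith), mul_one_div,
        div_self hn.ne', Real.rpow_one]

/-- Geometric bound from a limsup bound on the `n`-th roots. -/
lemma geom_bound (a : ℕ → X) (R r : ℝ) (hr : 0 < r) (hRr : R < r)
    (hbd : IsBoundedUnder (· ≤ ·) atTop (fun n : ℕ => ‖a n‖ ^ (1 / (n : ℝ))))
    (h : limsup (fun n : ℕ => ‖a n‖ ^ (1 / (n : ℝ))) atTop ≤ R) :
    ∃ C : ℝ, 0 < C ∧ ∀ n, ‖a n‖ ≤ C * r ^ n := by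
  have hev : ∀ᶠ n in atTop, ‖a n‖ ^ (1 / (n : ℝ)) < r :=
    eventually_lt_of_limsup_lt (lt_of_le_of_lt h hRr) hbd
  obtain ⟨N, hN⟩ := eventually_atTop.1 hev
  have key : ∀ n, N + 1 ≤ n → ‖a n‖ ≤ r ^ n := by
    intro n hn
    have hn0 : (0 : ℝ) < (n : ℝ) := by
      exact_mod_cast Nat.lt_of_lt_of_le (Nat.succ_pos N) hn
    have h1 : ‖a n‖ ^ (1 / (n : ℝ)) < r := hN n (le_trans (Nat.le_succ N) hn)
    have h2 : ‖a n‖ = (‖a n‖ ^ (1 / (n : ℝ))) ^ (n : ℕ) := by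
      rw [← Real.rpow_natCast (‖a n‖ ^ (1 / (n : ℝ))) n, ← Real.rpow_mul (norm_nonneg _),
        one_div, inv_mul_cancel₀ hn0.ne', Real.rpow_one]
    rw [h2]
    exact pow_le_pow_left₀ (Real.rpow_nonneg (norm_nonneg _) _) h1.le n
  set C : ℝ := max 1 ((Finset.range (N + 1)).sup' ⟨0, Finset.mem_range.2 (Nat.succ_pos N)⟩
    (fun k => ‖a k‖ / r ^ k)) with hC
  refine ⟨C, lt_of_lt_of_le one_pos (le_max_left _ _), fun n => ?_⟩
  rcases lt_or_ge n (N + 1) with hn | hn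
  · have hle : ‖a n‖ / r ^ n ≤ C :=
      le_max_of_le_right (Finset.le_sup' (fun k => ‖a k‖ / r ^ k) (Finset.mem_range.2 hn))
    have hrn : (0 : ℝ) < r ^ n := pow_pos hr n
    calc ‖a n‖ = ‖a n‖ / r ^ n * r ^ n := by field_simp
    _ ≤ C * r ^ n := mul_le_mul_of_nonneg_right hle hrn.le
  · calc ‖a n‖ ≤ r ^ n := key n hn
    _ ≤ C * r ^ n := le_mul_of_one_le_left (by positivity) (le_max_left _ _)

/-- The one-variable power series with coefficients `a`. -/
noncomputable def pser (a : ℕ → X) : FormalMultilinearSeries ℂ ℂ X :=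
  fun n => ContinuousMultilinearMap.mkPiRing ℂ (Fin n) (a n)

lemma pser_norm (a : ℕ → X) (n : ℕ) : ‖pser a n‖ = ‖a n‖ :=
  ContinuousMultilinearMap.norm_mkPiRing (a n)

lemma pser_apply (a : ℕ → X) (n : ℕ) (y : ℂ) : (pser a n) (fun _ => y) = y ^ n • a n := by
  simp [pser, ContinuousMultilinearMap.mkPiRing_apply]

lemma pser_radius (a : ℕ → X) {C r : ℝ} (hr : 0 ≤ r) (h : ∀ n, ‖a n‖ * r ^ n ≤ C) :
    ENNReal.ofReal r ≤ (pser a).radius := by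
  have key := FormalMultilinearSeries.le_radius_of_bound (pser a) C (r := r.toNNReal)
    (fun n => by rw [pser_norm, Real.coe_toNNReal r hr]; exact h n)
  simpa [ENNReal.ofReal] using key

lemma pser_mem (a : ℕ → X) {y : ℂ} {s : ℝ} (hy : ‖y‖ < s)
    (hs : ENNReal.ofReal s ≤ (pser a).radius) :
    y ∈ Metric.eball (0 : ℂ) (pser a).radius := by
  rw [EMetric.mem_ball, edist_zero_right]
  calc (‖y‖₊ : ℝ≥0∞) = ENNReal.ofReal ‖y‖ := (ofReal_norm y).symm
  _ < ENNReal.ofReal s := (ENNReal.ofReal_lt_ofReal_iff ((norm_nonneg y).trans_lt hy)).2 hy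
  _ ≤ _ := hs

lemma pser_hasSum (a : ℕ → X) {y : ℂ} {s : ℝ} (hy : ‖y‖ < s)
    (hs : ENNReal.ofReal s ≤ (pser a).radius) :
    HasSum (fun n => y ^ n • a n) ((pser a).sum y) := by
  have key := (pser a).hasSum (pser_mem a hy hs)
  simpa only [pser_apply] using key

lemma pser_diff (a : ℕ → X) {y : ℂ} {s : ℝ} (hy : ‖y‖ < s)
    (hs : ENNReal.ofReal s ≤ (pser a).radius) :
    DifferentiableAt ℂ (pser a).sum y := by
  have hmem := pser_mem a hy hs
  have hpos : 0 < (pser a).radius :=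
    lt_of_le_of_lt zero_le (by rwa [EMetric.mem_ball, edist_zero_right] at hmem)
  exact (((pser a).hasFPowerSeriesOnBall hpos).analyticAt_of_mem hmem).differentiableAt

/-- Geometric bounds for all `r > R`. -/
def bnd (a : ℕ → X) (R : ℝ) : Prop :=
  ∀ r : ℝ, R < r → ∃ C : ℝ, 0 < C ∧ ∀ n, ‖a n‖ ≤ C * r ^ n

lemma bnd_shift {a : ℕ → X} {R : ℝ} (h : bnd a R) (hR : 0 ≤ R) :
    bnd (fun n => a (n + 1)) R := by
  intro r hr
  obtain ⟨C, hC0, hC⟩ := h r hr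
  have hr0 : 0 < r := hR.trans_lt hr
  exact ⟨C * r, by positivity, fun n => by
    calc ‖a (n + 1)‖ ≤ C * r ^ (n + 1) := hC (n + 1)
    _ = C * r * r ^ n := by ring⟩

lemma radius_of_bnd {a : ℕ → X} {R : ℝ} (h : bnd a R) (hR : 0 ≤ R) {r : ℝ} (hr : R < r) :
    ENNReal.ofReal r⁻¹ ≤ (pser a).radius := by
  obtain ⟨C, hC0, hC⟩ := h r hr
  have hr0 : 0 < r := hR.trans_lt hr
  refine pser_radius a (by positivity) (C := C) fun n => ?_
  calc ‖a n‖ * (r⁻¹) ^ n ≤ C * r ^ n * (r⁻¹) ^ n :=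
    mul_le_mul_of_nonneg_right (hC n) (by positivity)
  _ = C := by rw [mul_assoc, ← mul_pow, mul_inv_cancel₀ hr0.ne', one_pow, mul_one]

lemma hasSumG {a : ℕ → X} {S : ℝ} (h : bnd a S⁻¹) (hS : 0 < S) {z : ℂ} (hz : ‖z‖ < S) :
    HasSum (fun n => z ^ n • a n) ((pser a).sum z) := by
  set s : ℝ := (‖z‖ + S) / 2 with hs
  have hs1 : ‖z‖ < s := by rw [hs]; linarith
  have hs2 : s < S := by rw [hs]; linarith [norm_nonneg z]
  have hs0 : 0 < s := (norm_nonneg z).trans_lt hs1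
  have hrad := radius_of_bnd h (by positivity) (r := s⁻¹) (inv_strictAnti₀ hs0 hs2)
  rw [inv_inv] at hrad
  exact pser_hasSum a hs1 hrad

lemma diffG {a : ℕ → X} {S : ℝ} (h : bnd a S⁻¹) (hS : 0 < S) {z : ℂ} (hz : ‖z‖ < S) :
    DifferentiableAt ℂ (pser a).sum z := by
  set s : ℝ := (‖z‖ + S) / 2 with hs
  have hs1 : ‖z‖ < s := by rw [hs]; linarith
  have hs2 : s < S := by rw [hs]; linarith [norm_nonneg z]
  have hs0 : 0 < s := (norm_nonneg z).trans_lt hs1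
  have hrad := radius_of_bnd h (by positivity) (r := s⁻¹) (inv_strictAnti₀ hs0 hs2)
  rw [inv_inv] at hrad
  exact pser_diff a hs1 hrad

lemma hasSumF {a : ℕ → X} {R : ℝ} (h : bnd a R) (hR : 0 ≤ R) {z : ℂ} (hz : R < ‖z‖) :
    HasSum (fun n => (z⁻¹) ^ (n + 1) • a n) (z⁻¹ • (pser a).sum z⁻¹) := by
  have hz0 : (0 : ℝ) < ‖z‖ := hR.trans_lt hz
  set r : ℝ := (R + ‖z‖) / 2 with hr
  have hr1 : R < r := by rw [hr]; linarith
  have hr2 : r < ‖z‖ := by rw [hr]; linarith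
  have hr0 : 0 < r := hR.trans_lt hr1
  have hrad := radius_of_bnd h hR hr1
  have hinv : ‖z⁻¹‖ < r⁻¹ := by rw [norm_inv]; exact inv_strictAnti₀ hr0 hr2
  have key := (pser_hasSum a hinv hrad).const_smul z⁻¹
  have heq : (fun n => (z⁻¹) ^ (n + 1) • a n) = fun n => z⁻¹ • ((z⁻¹) ^ n • a n) := by
    funext n
    rw [smul_smul, ← pow_succ']
  rw [heq]
  exact key

lemma diffF {a : ℕ → X} {R : ℝ} (h : bnd a R) (hR : 0 ≤ R) {z : ℂ} (hz : R < ‖z‖) :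
    DifferentiableAt ℂ (fun w : ℂ => w⁻¹ • (pser a).sum w⁻¹) z := by
  have hz0 : (0 : ℝ) < ‖z‖ := hR.trans_lt hz
  have hzne : z ≠ 0 := by
    intro hzz
    rw [hzz, norm_zero] at hz0
    exact lt_irrefl _ hz0
  set r : ℝ := (R + ‖z‖) / 2 with hr
  have hr1 : R < r := by rw [hr]; linarith
  have hr2 : r < ‖z‖ := by rw [hr]; linarith
  have hr0 : 0 < r := hR.trans_lt hr1
  have hrad := radius_of_bnd h hR hr1
  have hinv : ‖z⁻¹‖ < r⁻¹ := by rw [norm_inv]; exact inv_strictAnti₀ hr0 hr2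
  have h1 : DifferentiableAt ℂ (pser a).sum z⁻¹ := pser_diff a hinv hrad
  have h2 : DifferentiableAt ℂ (fun w : ℂ => w⁻¹) z := differentiableAt_fun_id.inv hzne
  exact h2.smul (h1.comp z h2)

lemma keyF {a : ℕ → X} {R : ℝ} {f : X} (T : X →L[ℂ] X) (h : bnd a R) (hR : 0 ≤ R)
    (ha : ∀ n, a (n + 1) = T (a n)) (ha0 : a 0 = f) {z : ℂ} (hz : R < ‖z‖) :
    z • (z⁻¹ • (pser a).sum z⁻¹) - T (z⁻¹ • (pser a).sum z⁻¹) = f := by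
  have hz0 : (0 : ℝ) < ‖z‖ := hR.trans_lt hz
  have hzne : z ≠ 0 := by
    intro hzz
    rw [hzz, norm_zero] at hz0
    exact lt_irrefl _ hz0
  have hs := hasSumF h hR hz
  set g : ℕ → X := fun n => (z⁻¹) ^ n • a n with hg
  have h1 : HasSum g (z • (z⁻¹ • (pser a).sum z⁻¹)) := by
    have key := hs.const_smul z
    have heq : (fun n => z • ((z⁻¹) ^ (n + 1) • a n)) = g := by
      funext n
      simp only [hg]
      rw [smul_smul, pow_succ', ← mul_assoc, mul_inv_cancel₀ hzne, one_mul]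
    rwa [heq] at key
  have h2 : HasSum (fun n => g (n + 1)) (T (z⁻¹ • (pser a).sum z⁻¹)) := by
    have key := T.hasSum hs
    have heq : (fun n => T ((z⁻¹) ^ (n + 1) • a n)) = fun n => g (n + 1) := by
      funext n
      simp only [hg]
      rw [map_smul, ha n]
    rwa [heq] at key
  rw [hasSum_nat_add_iff 1] at h2
  have huniq := h1.unique h2
  rw [Finset.range_one, Finset.sum_singleton] at huniq
  have hg0 : g 0 = f := by rw [hg]; simp [ha0]
  rw [hg0] at huniq
  rw [huniq, add_sub_cancel_left]

lemma keyG {a : ℕ → X} {S : ℝ} {f : X} (T : X →L[ℂ] X) (h : bnd a S⁻¹) (hS : 0 < S)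
    (hTa : ∀ n, T (a (n + 1)) = a n) (hT0 : T (a 0) = f) {z : ℂ} (hz : ‖z‖ < S) :
    T ((pser a).sum z) - z • (pser a).sum z = f := by
  have hs := hasSumG h hS hz
  set g : ℕ → X := fun n => z ^ n • T (a n) with hg
  have h2 : HasSum g (T ((pser a).sum z)) := by
    have key := T.hasSum hs
    have heq : (fun n => T (z ^ n • a n)) = g := by
      funext n
      simp only [hg]
      rw [map_smul]
    rwa [heq] at key
  have h1 : HasSum (fun n => g (n + 1)) (z • (pser a).sum z) := by
    have key := hs.const_smul z
    have heq : (fun n => z • (z ^ n • a n)) = fun n => g (n + 1) := by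
      funext n
      simp only [hg]
      rw [hTa n, smul_smul, ← pow_succ']
    rwa [heq] at key
  rw [hasSum_nat_add_iff 1] at h1
  have huniq := h2.unique h1
  rw [Finset.range_one, Finset.sum_singleton] at huniq
  have hg0 : g 0 = f := by rw [hg]; simpa using hT0
  rw [hg0] at huniq
  rw [huniq, add_sub_cancel_left]

lemma normF_bound {a : ℕ → X} {R : ℝ} (h : bnd a R) (hR : 0 ≤ R) {r : ℝ} (hr : R < r) :
    ∃ C : ℝ, 0 < C ∧ ∀ z : ℂ, r < ‖z‖ → ‖z⁻¹ • (pser a).sum z⁻¹‖ ≤ C / (‖z‖ - r) := by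
  obtain ⟨C, hC0, hC⟩ := h r hr
  refine ⟨C, hC0, fun z hzr => ?_⟩
  have hr0 : 0 < r := hR.trans_lt hr
  have hz0 : (0 : ℝ) < ‖z‖ := hr0.trans hzr
  have hs := hasSumF h hR (hr.trans hzr)
  have hgeo : HasSum (fun n : ℕ => C / ‖z‖ * (r / ‖z‖) ^ n) (C / ‖z‖ * (1 - r / ‖z‖)⁻¹) :=
    (hasSum_geometric_of_lt_one (by positivity) ((div_lt_one hz0).2 hzr)).mul_left _
  have hb : ∀ n : ℕ, ‖(z⁻¹) ^ (n + 1) • a n‖ ≤ C / ‖z‖ * (r / ‖z‖) ^ n := by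
    intro n
    rw [norm_smul, norm_pow, norm_inv]
    calc ‖z‖⁻¹ ^ (n + 1) * ‖a n‖ ≤ ‖z‖⁻¹ ^ (n + 1) * (C * r ^ n) :=
      mul_le_mul_of_nonneg_left (hC n) (by positivity)
    _ = C / ‖z‖ * (r / ‖z‖) ^ n := by
      rw [pow_succ', div_pow]
      field_simp
      rw [← mul_pow, one_div, inv_mul_cancel₀ hz0.ne', one_pow]
  have hle := tsum_of_norm_bounded hgeo hb
  rw [hs.tsum_eq] at hle
  have heq : C / ‖z‖ * (1 - r / ‖z‖)⁻¹ = C / (‖z‖ - r) := by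
    rw [one_sub_div hz0.ne', inv_div, div_mul_div_comm, mul_comm C ‖z‖,
      mul_div_mul_left _ _ hz0.ne']
  rwa [heq] at hle

lemma annulus_preconnected (R₁ R₂ : ℝ) (hR₁ : 0 ≤ R₁) :
    IsPreconnected {z : ℂ | R₁ < ‖z‖ ∧ ‖z‖ < R₂} := by
  have himg : {z : ℂ | R₁ < ‖z‖ ∧ ‖z‖ < R₂} =
      (fun p : ℝ × ℝ => (p.1 : ℂ) * Complex.exp (p.2 * Complex.I)) ''
        ((Set.Ioo R₁ R₂) ×ˢ (Set.univ : Set ℝ)) := by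
    ext z
    constructor
    · rintro ⟨h1, h2⟩
      refine ⟨(‖z‖, Complex.arg z), ⟨?_, trivial⟩, ?_⟩
      · exact ⟨by exact h1, by exact h2⟩
      · exact Complex.norm_mul_exp_arg_mul_I z
    · rintro ⟨⟨ρ, θ⟩, ⟨hρ, -⟩, rfl⟩
      have hρ0 : 0 < ρ := hR₁.trans_lt hρ.1
      have hnorm : ‖((ρ : ℂ) * Complex.exp ((θ : ℂ) * Complex.I))‖ = ρ := by
        rw [norm_mul, Complex.norm_exp_ofReal_mul_I, mul_one, Complex.norm_real,
          Real.norm_eq_abs, abs_of_pos hρ0]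
      exact ⟨by rw [hnorm]; exact hρ.1, by rw [hnorm]; exact hρ.2⟩
  rw [himg]
  apply IsPreconnected.image
  · exact isPreconnected_Ioo.prod isPreconnected_univ
  · apply Continuous.continuousOn
    exact (Complex.continuous_ofReal.comp continuous_fst).mul
      (Complex.continuous_exp.comp
        ((Complex.continuous_ofReal.comp continuous_snd).mul continuous_const))

end AnnulusSpectrumAux

open AnnulusSpectrumAux Set Metric Bornology

/-- Liouville-type spectral inclusion: if `T` is a bounded invertible operator
on a complex Banach space, `f ≠ 0`, `limsup ‖Tⁿf‖^{1/n} ≤ R₁` and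
`limsup ‖T⁻ⁿf‖^{1/n} ≤ 1/R₂` with `R₁ < R₂`, then the open annulus
`{λ : R₁ < |λ| < R₂}` is contained in the spectrum of `T`. -/
theorem annulus_subset_spectrum_of_orbit_growth
    (X : Type*) [NormedAddCommGroup X] [NormedSpace ℂ X] [CompleteSpace X]
    (T T' : X →L[ℂ] X) (hinv : T.comp T' = 1 ∧ T'.comp T = 1)
    (f : X) (hf : f ≠ 0) (R₁ R₂ : ℝ) (hR₁ : 0 ≤ R₁) (hR₂ : 0 < R₂)
    (hlt : R₁ < R₂)
    (hgrow : limsup (fun n : ℕ => ‖(T ^ n) f‖ ^ (1 / (n:ℝ))) atTop ≤ R₁)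
    (hgrow' : limsup (fun n : ℕ => ‖(T' ^ n) f‖ ^ (1 / (n:ℝ))) atTop ≤ 1 / R₂) :
    ∀ lam : ℂ, R₁ < ‖lam‖ → ‖lam‖ < R₂ →
      lam ∈ spectrum ℂ T := by
  intro lam hl1 hl2
  by_contra hmem
  rw [spectrum.notMem_iff] at hmem
  -- geometric bounds
  have hbT : bnd (fun n => (T ^ n) f) R₁ := fun r hr =>
    geom_bound _ R₁ r (hR₁.trans_lt hr) hr (rpow_bounded T f) hgrow
  have hbT' : bnd (fun n => (T' ^ n) f) R₂⁻¹ := fun r hr =>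
    geom_bound _ R₂⁻¹ r ((inv_pos.2 hR₂).trans hr) hr (rpow_bounded T' f)
      (by rwa [one_div] at hgrow')
  have hbG : bnd (fun n => (T' ^ (n + 1)) f) R₂⁻¹ := bnd_shift hbT' (inv_pos.2 hR₂).le
  -- definitions of the two analytic functions
  set Fc : ℂ → X := fun z => z⁻¹ • (pser (fun n => (T ^ n) f)).sum z⁻¹ with hFc
  set Gc : ℂ → X := (pser (fun n => (T' ^ (n + 1)) f)).sum with hGc
  have hFd : ∀ z : ℂ, R₁ < ‖z‖ → DifferentiableAt ℂ Fc z := fun z hz => diffF hbT hR₁ hz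
  have hGd : ∀ z : ℂ, ‖z‖ < R₂ → DifferentiableAt ℂ Gc z := fun z hz => diffG hbG hR₂ hz
  -- the two functional identities
  have haT : ∀ n, (fun n => (T ^ n) f) (n + 1) = T ((fun n => (T ^ n) f) n) := by
    intro n
    show (T ^ (n + 1)) f = T ((T ^ n) f)
    rw [pow_succ']
    rfl
  have hTprod : ∀ m : ℕ, T ((T' ^ (m + 1)) f) = (T' ^ m) f := by
    intro m
    have hTT : T * T' = 1 := by rw [ContinuousLinearMap.mul_def]; exact hinv.1
    have hcomp : T * T' ^ (m + 1) = T' ^ m := by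
      rw [pow_succ', ← mul_assoc, hTT, one_mul]
    calc T ((T' ^ (m + 1)) f) = (T * T' ^ (m + 1)) f := rfl
    _ = (T' ^ m) f := by rw [hcomp]
  have hFk : ∀ z : ℂ, R₁ < ‖z‖ → z • Fc z - T (Fc z) = f := fun z hz =>
    keyF T hbT hR₁ haT (by simp) hz
  have hGk : ∀ z : ℂ, ‖z‖ < R₂ → T (Gc z) - z • Gc z = f := fun z hz =>
    keyG T hbG hR₂ (fun n => hTprod (n + 1)) (by simpa using hTprod 0) hz
  -- the annulus
  set A : Set ℂ := {z : ℂ | R₁ < ‖z‖ ∧ ‖z‖ < R₂} with hA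
  have hAopen : IsOpen A :=
    (isOpen_lt continuous_const continuous_norm).inter (isOpen_lt continuous_norm continuous_const)
  have hAconn : IsPreconnected A := annulus_preconnected R₁ R₂ hR₁
  have hlamA : lam ∈ A := ⟨hl1, hl2⟩
  -- F + G vanishes near lam
  have hinj : ∀ z : ℂ, IsUnit (algebraMap ℂ (X →L[ℂ] X) z - T) → z ∈ A → Fc z + Gc z = 0 := by
    intro z hz hzA
    have h0 : z • (Fc z + Gc z) - T (Fc z + Gc z) = 0 := by
      have h1 := hFk z hzA.1
      have h2 := hGk z hzA.2
      rw [smul_add, map_add]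
      have hre : z • Fc z + z • Gc z - (T (Fc z) + T (Gc z)) =
          (z • Fc z - T (Fc z)) - (T (Gc z) - z • Gc z) := by abel
      rw [hre, h1, h2, sub_self]
    have happ : (algebraMap ℂ (X →L[ℂ] X) z - T) (Fc z + Gc z) = 0 := by
      simpa [ContinuousLinearMap.sub_apply, Algebra.algebraMap_eq_smul_one,
        ContinuousLinearMap.smul_apply, ContinuousLinearMap.one_apply] using h0
    calc Fc z + Gc z = (1 : X →L[ℂ] X) (Fc z + Gc z) :=
      (ContinuousLinearMap.one_apply _).symm
    _ = ((↑hz.unit⁻¹ * ↑hz.unit : X →L[ℂ] X)) (Fc z + Gc z) := by rw [hz.unit.inv_mul]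
    _ = (↑hz.unit⁻¹ : X →L[ℂ] X) ((↑hz.unit : X →L[ℂ] X) (Fc z + Gc z)) := rfl
    _ = (↑hz.unit⁻¹ : X →L[ℂ] X) ((algebraMap ℂ (X →L[ℂ] X) z - T) (Fc z + Gc z)) := by
      rw [IsUnit.unit_spec]
    _ = 0 := by rw [happ, map_zero]
  -- identity theorem on the annulus
  have hHana : AnalyticOnNhd ℂ (fun z => Fc z + Gc z) A := by
    apply DifferentiableOn.analyticOnNhd ?_ hAopen
    intro z hz
    exact ((hFd z hz.1).add (hGd z hz.2)).differentiableWithinAt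
  have hres : lam ∈ resolventSet ℂ T := spectrum.mem_resolventSet_iff.2 hmem
  have hev0 : (fun z => Fc z + Gc z) =ᶠ[nhds lam] 0 := by
    filter_upwards [(spectrum.isOpen_resolventSet (𝕜 := ℂ) T).eventually_mem hres,
      hAopen.eventually_mem hlamA] with z h1 h2
    exact hinj z (spectrum.mem_resolventSet_iff.1 h1) h2
  have hEq : EqOn (fun z => Fc z + Gc z) 0 A :=
    hHana.eqOn_zero_of_preconnected_of_eventuallyEq_zero hAconn hlamA hev0
  have hFG : ∀ z : ℂ, R₁ < ‖z‖ → ‖z‖ < R₂ → Fc z = -Gc z := by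
    intro z h1 h2
    have hz := hEq (⟨h1, h2⟩ : z ∈ A)
    simp only [Pi.zero_apply] at hz
    exact eq_neg_of_add_eq_zero_left hz
  -- the entire function W
  set W : ℂ → X := fun z => if ‖z‖ < R₂ then -Gc z else Fc z with hW
  have hWF : ∀ z : ℂ, R₁ < ‖z‖ → W z = Fc z := by
    intro z h1
    by_cases h2 : ‖z‖ < R₂
    · simp only [hW]
      rw [if_pos h2, hFG z h1 h2]
    · simp only [hW]
      rw [if_neg h2]
  have hWd : Differentiable ℂ W := by
    intro z
    rcases lt_or_ge ‖z‖ R₂ with h2 | h2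
    · have hev : W =ᶠ[nhds z] fun w => -Gc w := by
        filter_upwards [(isOpen_lt continuous_norm continuous_const).eventually_mem
          (show z ∈ {w : ℂ | ‖w‖ < R₂} from h2)] with w hw
        simp only [hW]
        rw [if_pos hw]
      exact ((hGd z h2).neg).congr_of_eventuallyEq hev
    · have h1 : R₁ < ‖z‖ := hlt.trans_le h2
      have hev : W =ᶠ[nhds z] Fc := by
        filter_upwards [(isOpen_lt continuous_const continuous_norm).eventually_mem
          (show z ∈ {w : ℂ | R₁ < ‖w‖} from h1)] with w hw
        exact hWF w hw
      exact (hFd z h1).congr_of_eventuallyEq hev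
  -- choice of radii
  set ρ : ℝ := (R₁ + R₂) / 2 with hρdef
  have hρ1 : R₁ < ρ := by rw [hρdef]; linarith
  have hρ2 : ρ < R₂ := by rw [hρdef]; linarith
  have hρ0 : 0 < ρ := hR₁.trans_lt hρ1
  set r : ℝ := (R₁ + ρ) / 2 with hrdef
  have hr1 : R₁ < r := by rw [hrdef]; linarith
  have hr2 : r < ρ := by rw [hrdef]; linarith
  obtain ⟨C, hC0, hFb⟩ := normF_bound hbT hR₁ hr1
  -- boundedness of W
  have hWb : IsBounded (range W) := by
    have hsub : range W ⊆ (W '' closedBall 0 ρ) ∪ closedBall 0 (C / (ρ - r)) := by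
      rintro x ⟨z, rfl⟩
      by_cases hz : ‖z‖ ≤ ρ
      · exact Or.inl ⟨z, by rwa [mem_closedBall_zero_iff], rfl⟩
      · push_neg at hz
        have hzr : r < ‖z‖ := hr2.trans hz
        have hR₁z : R₁ < ‖z‖ := hr1.trans hzr
        refine Or.inr ?_
        rw [mem_closedBall_zero_iff, hWF z hR₁z]
        calc ‖Fc z‖ ≤ C / (‖z‖ - r) := hFb z hzr
        _ ≤ C / (ρ - r) := by
          apply div_le_div_of_nonneg_left hC0.le (by linarith)
          linarith
    exact (((isCompact_closedBall (0 : ℂ) ρ).image hWd.continuous).isBounded.union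
      (isBounded_closedBall)).subset hsub
  -- Liouville's theorem
  have hconst := hWd.apply_eq_apply_of_bounded hWb
  have hW0 : W 0 = 0 := by
    have hkey : ∀ ε : ℝ, 0 < ε → ‖W 0‖ ≤ ε := by
      intro ε hε
      set t : ℝ := max ρ (r + C / ε) with ht
      have htρ : ρ ≤ t := le_max_left _ _
      have htr : r + C / ε ≤ t := le_max_right _ _
      have ht0 : 0 < t := hρ0.trans_le htρ
      have hnt : ‖(t : ℂ)‖ = t := by
        rw [Complex.norm_real, Real.norm_eq_abs, abs_of_pos ht0]
      have hCε : 0 < C / ε := div_pos hC0 hε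
      have h2 : r < ‖(t : ℂ)‖ := by rw [hnt]; linarith
      have hR₁t : R₁ < ‖(t : ℂ)‖ := hr1.trans h2
      rw [hconst 0 (t : ℂ), hWF (t : ℂ) hR₁t]
      calc ‖Fc (t : ℂ)‖ ≤ C / (‖(t : ℂ)‖ - r) := hFb _ h2
      _ ≤ C / (C / ε) := by
        apply div_le_div_of_nonneg_left hC0.le hCε
        rw [hnt]; linarith
      _ = ε := by
        rw [div_div_eq_mul_div, mul_comm, mul_div_assoc, div_self hC0.ne', mul_one]
    have hle : ‖W 0‖ ≤ 0 := by
      refine le_of_forall_pos_le_add fun ε hε => ?_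
      rw [zero_add]
      exact hkey ε hε
    exact norm_le_zero_iff.1 hle
  -- computing W 0
  have hG0 : Gc 0 = T' f := by
    have hsum : Gc 0 = ∑' n : ℕ, (0 : ℂ) ^ n • (T' ^ (n + 1)) f := by
      simp only [hGc, FormalMultilinearSeries.sum, pser_apply]
    rw [hsum, tsum_eq_single 0 (fun n hn => by simp [zero_pow hn])]
    simp
  have hT'f : T' f = 0 := by
    have h0R₂ : ‖(0 : ℂ)‖ < R₂ := by simpa using hR₂
    have := hW0
    simp only [hW] at this
    rw [if_pos h0R₂, hG0] at this
    exact neg_eq_zero.1 this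
  have hffalse : f = 0 := by
    calc f = (1 : X →L[ℂ] X) f := (ContinuousLinearMap.one_apply f).symm
    _ = (T.comp T') f := by rw [hinv.1]
    _ = T (T' f) := rfl
    _ = 0 := by rw [hT'f, map_zero]
  exact hf hffalse
end

section
/- Let ψ be a hyperbolic automorphism of 𝔻 with fixed points a, b and let δ = −log ψ'(a) > 0. For k ∈ ℤ define g_k(z) = ((b−z)/(a−z))^{2πik/δ}. Then each g_k is a bounded holomorphic function on 𝔻 satisfying g_k ∘ ψ = g_k, and the family {g_k}_{k∈ℤ} is linearly independent. -/
open Complex Filter Metric Set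

noncomputable section

open scoped Topology

-- helper: cpow multiplicativity for positive real scalar
lemma real_mul_cpow {r : ℝ} (hr : 0 < r) {u : ℂ} (hu : u ≠ 0) (w : ℂ) :
    ((r : ℂ) * u) ^ w = (r : ℂ) ^ w * u ^ w := by
  have hr' : (r : ℂ) ≠ 0 := ofReal_ne_zero.mpr hr.ne'
  have hru : (r : ℂ) * u ≠ 0 := mul_ne_zero hr' hu
  have hlog : Complex.log ((r : ℂ) * u) = Complex.log r + Complex.log u := by
    rw [Complex.log, Complex.log, Complex.log]
    rw [norm_mul, Complex.norm_of_nonneg hr.le, Complex.arg_real_mul u hr,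
      Real.log_mul hr.ne' (by simpa using hu),
      Complex.arg_ofReal_of_nonneg hr.le]
    push_cast
    ring
  rw [cpow_def_of_ne_zero hru, cpow_def_of_ne_zero hr', cpow_def_of_ne_zero hu, hlog,
    add_mul, Complex.exp_add]

lemma blaschke_facts {α : ℂ} (hα : ‖α‖ < 1) {z : ℂ} (hz : z ∈ ball (0:ℂ) 1) :
    1 + (starRingEnd ℂ) α * z ≠ 0 ∧ (z + α) / (1 + (starRingEnd ℂ) α * z) ∈ ball (0:ℂ) 1 := by
  have hz1 : ‖z‖ < 1 := by simpa [mem_ball_zero_iff] using hz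
  set d := 1 + (starRingEnd ℂ) α * z with hd
  have key : (normSq d : ℂ) - normSq (z + α) = ((1 : ℂ) - normSq α) * (1 - normSq z) := by
    rw [← Complex.mul_conj, ← Complex.mul_conj, ← Complex.mul_conj, ← Complex.mul_conj]
    simp only [hd, map_add, map_mul, map_one, Complex.conj_conj]
    ring
  have keyR : normSq d - normSq (z + α) = (1 - normSq α) * (1 - normSq z) := by
    exact_mod_cast key
  have h1 : normSq α < 1 := by
    rw [Complex.normSq_eq_norm_sq]; nlinarith [norm_nonneg α]
  have h2 : normSq z < 1 := by
    rw [Complex.normSq_eq_norm_sq]; nlinarith [norm_nonneg z]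
  have hlt : normSq (z + α) < normSq d := by nlinarith
  have hd0 : d ≠ 0 := by
    intro h0
    rw [h0] at hlt
    simp only [normSq_zero] at hlt
    nlinarith [normSq_nonneg (z + α)]
  refine ⟨hd0, ?_⟩
  rw [mem_ball_zero_iff]
  have : ‖(z + α) / d‖ < 1 := by
    rw [norm_div, div_lt_one (by simpa [norm_pos_iff] using hd0)]
    have := Complex.normSq_eq_norm_sq (z + α) ▸ Complex.normSq_eq_norm_sq d ▸ hlt
    nlinarith [norm_nonneg (z + α), norm_nonneg d]
  simpa using this
noncomputable section

lemma inv_holo (h : HypAuto) :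
    ∃ g : ℂ → ℂ, (∀ z ∈ ball (0:ℂ) 1, g (h.ψ z) = z) ∧
      MapsTo g (ball (0:ℂ) 1) (ball (0:ℂ) 1) ∧
      (∀ w ∈ ball (0:ℂ) 1, h.ψ (g w) = w) ∧
      DifferentiableOn ℂ g (ball (0:ℂ) 1) := by
  obtain ⟨R, hR1, hψR⟩ := h.holo
  have hsub : ball (0:ℂ) 1 ⊆ ball (0:ℂ) R := ball_subset_ball hR1.le
  have hψ1 : DifferentiableOn ℂ h.ψ (ball (0:ℂ) 1) := hψR.mono hsub
  have hψa : AnalyticOnNhd ℂ h.ψ (ball (0:ℂ) R) := hψR.analyticOnNhd isOpen_ball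
  have hnc : ¬ ∃ w, ∀ z ∈ ball (0:ℂ) 1, h.ψ z = w := by
    rintro ⟨w, hw⟩
    have h0 : (0:ℂ) ∈ ball (0:ℂ) 1 := by simp
    have h2 : (1/2 : ℂ) ∈ ball (0:ℂ) 1 := by norm_num [mem_ball_zero_iff]
    have := h.bij.injOn h0 h2 ((hw _ h0).trans (hw _ h2).symm)
    norm_num at this
  have hopen : ∀ s ⊆ ball (0:ℂ) 1, IsOpen s → IsOpen (h.ψ '' s) := by
    rcases (hψa.mono hsub).is_constant_or_isOpen (convex_ball _ _).isPreconnected with hc | ho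
    · exact absurd hc hnc
    · exact ho
  set g := Function.invFunOn h.ψ (ball (0:ℂ) 1) with hgdef
  have hinv := h.bij.invOn_invFunOn
  have hgψ : ∀ z ∈ ball (0:ℂ) 1, g (h.ψ z) = z := fun z hz => hinv.1 hz
  have hψg : ∀ w ∈ ball (0:ℂ) 1, h.ψ (g w) = w := fun w hw => hinv.2 hw
  have hgm : MapsTo g (ball (0:ℂ) 1) (ball (0:ℂ) 1) := h.bij.surjOn.mapsTo_invFunOn
  have hgc : ∀ w ∈ ball (0:ℂ) 1, ContinuousAt g w := by
    intro w hw
    rw [continuousAt_def]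
    intro U hU
    obtain ⟨V, hVU, hVo, hVg⟩ := _root_.mem_nhds_iff.mp hU
    have hOpen : IsOpen (h.ψ '' (V ∩ ball (0:ℂ) 1)) :=
      hopen _ inter_subset_right (hVo.inter isOpen_ball)
    refine Filter.mem_of_superset (hOpen.mem_nhds ?_) ?_
    · exact ⟨g w, ⟨hVg, hgm hw⟩, hψg w hw⟩
    · rintro x ⟨z, ⟨hzV, hz1⟩, rfl⟩
      simpa [hgψ z hz1] using hVU hzV
  have hne : ∀ z₀ ∈ ball (0:ℂ) 1, ∀ᶠ z in 𝓝[≠] z₀, deriv h.ψ z ≠ 0 := by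
    intro z₀ hz₀
    have hda : AnalyticAt ℂ (deriv h.ψ) z₀ := hψa.deriv z₀ (hsub hz₀)
    rcases hda.eventually_eq_zero_or_eventually_ne_zero with hz | hz
    · exfalso
      have hEq : EqOn (deriv h.ψ) 0 (ball (0:ℂ) R) :=
        hψa.deriv.eqOn_zero_of_preconnected_of_eventuallyEq_zero
          (convex_ball _ _).isPreconnected (hsub hz₀) hz
      have hconst : h.ψ 0 = h.ψ (1/2) := by
        apply Convex.is_const_of_fderivWithin_eq_zero (convex_ball (0:ℂ) 1) hψ1 ?_
          (by simp) (by norm_num [mem_ball_zero_iff])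
        intro x hx
        rw [fderivWithin_of_isOpen isOpen_ball hx]
        apply ContinuousLinearMap.ext_ring
        rw [fderiv_apply_one_eq_deriv, hEq (hsub hx)]
        simp
      have h0 : (0:ℂ) ∈ ball (0:ℂ) 1 := by simp
      have h2 : (1/2 : ℂ) ∈ ball (0:ℂ) 1 := by norm_num [mem_ball_zero_iff]
      have := h.bij.injOn h0 h2 hconst
      norm_num at this
    · exact hz
  have hdiff : ∀ w ∈ ball (0:ℂ) 1, deriv h.ψ (g w) ≠ 0 → DifferentiableAt ℂ g w := by
    intro w hw hder
    have hball : ball (0:ℂ) 1 ∈ 𝓝 w := isOpen_ball.mem_nhds hw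
    have hev : ∀ᶠ y in 𝓝 w, h.ψ (g y) = y :=
      Filter.eventually_of_mem hball (fun y hy => hψg y hy)
    have hψd : HasDerivAt h.ψ (deriv h.ψ (g w)) (g w) :=
      (hψ1.differentiableAt (isOpen_ball.mem_nhds (hgm hw))).hasDerivAt
    exact (HasDerivAt.of_local_left_inverse (hgc w hw) hψd hder hev).differentiableAt
  refine ⟨g, hgψ, hgm, hψg, ?_⟩
  intro w hw
  have hev := hne (g w) (hgm hw)
  rw [eventually_nhdsWithin_iff] at hev
  have h1 : ∀ᶠ y in 𝓝 w, (g y ≠ g w → deriv h.ψ (g y) ≠ 0) := (hgc w hw).eventually hev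
  have h2 : ∀ᶠ y in 𝓝 w, y ∈ ball (0:ℂ) 1 := isOpen_ball.eventually_mem hw
  have hcomb : ∀ᶠ y in 𝓝[≠] w, DifferentiableAt ℂ g y := by
    rw [eventually_nhdsWithin_iff]
    filter_upwards [h1, h2] with y hy1 hy2 hy3
    apply hdiff y hy2
    apply hy1
    intro hgy
    apply hy3
    have : h.ψ (g y) = h.ψ (g w) := by rw [hgy]
    rwa [hψg y hy2, hψg w hw] at this
  exact ((analyticAt_of_differentiable_on_punctured_nhds_of_continuousAt hcomb
    (hgc w hw)).differentiableAt).differentiableWithinAt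
lemma mobius_form (h : HypAuto) :
    ∃ (C α : ℂ) (ρ : ℝ), 1 < ρ ∧ ‖α‖ < 1 ∧
      (∀ z ∈ ball (0:ℂ) ρ, 1 - (starRingEnd ℂ) α * z ≠ 0) ∧
      EqOn h.ψ (fun z => C * (z - α) / (1 - (starRingEnd ℂ) α * z)) (ball (0:ℂ) ρ) := by
  obtain ⟨g, hgψ, hgm, hψg, hgd⟩ := inv_holo h
  obtain ⟨R, hR1, hψR⟩ := h.holo
  have hsub : ball (0:ℂ) 1 ⊆ ball (0:ℂ) R := ball_subset_ball hR1.le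
  have hψ1 : DifferentiableOn ℂ h.ψ (ball (0:ℂ) 1) := hψR.mono hsub
  have h0mem : (0:ℂ) ∈ ball (0:ℂ) 1 := by simp
  set α := g 0 with hαdef
  have hαmem : α ∈ ball (0:ℂ) 1 := hgm h0mem
  have hα1 : ‖α‖ < 1 := by simpa [mem_ball_zero_iff] using hαmem
  have hψα : h.ψ α = 0 := hψg 0 h0mem
  set m : ℂ → ℂ := fun z => (z + α) / (1 + (starRingEnd ℂ) α * z) with hmdef
  set minv : ℂ → ℂ := fun w => (w + -α) / (1 + (starRingEnd ℂ) (-α) * w) with hminvdef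
  have hmB := fun z (hz : z ∈ ball (0:ℂ) 1) => blaschke_facts hα1 hz
  have hminvB := fun z (hz : z ∈ ball (0:ℂ) 1) =>
    blaschke_facts (α := -α) (by simpa using hα1) hz
  have hmmaps : MapsTo m (ball (0:ℂ) 1) (ball (0:ℂ) 1) := fun z hz => (hmB z hz).2
  have hminvmaps : MapsTo minv (ball (0:ℂ) 1) (ball (0:ℂ) 1) := fun z hz => (hminvB z hz).2
  have hmdiff : DifferentiableOn ℂ m (ball (0:ℂ) 1) := by
    apply DifferentiableOn.div
    · exact (differentiable_id.add_const α).differentiableOn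
    · exact ((differentiable_id.const_mul _).const_add 1).differentiableOn
    · exact fun z hz => (hmB z hz).1
  have hminvdiff : DifferentiableOn ℂ minv (ball (0:ℂ) 1) := by
    apply DifferentiableOn.div
    · exact (differentiable_id.add_const (-α)).differentiableOn
    · exact ((differentiable_id.const_mul _).const_add 1).differentiableOn
    · exact fun z hz => (hminvB z hz).1
  have hid1 : ∀ z ∈ ball (0:ℂ) 1, minv (m z) = z := by
    intro z hz
    obtain ⟨hd, hmem⟩ := hmB z hz
    have hd2 : 1 + (starRingEnd ℂ) (-α) * m z ≠ 0 := (hminvB (m z) hmem).1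
    have hgoal : m z + -α = z * (1 + (starRingEnd ℂ) (-α) * m z) := by
      simp only [hmdef, map_neg]
      linear_combination div_mul_cancel₀ (z + α) hd
    simp only [hminvdef]
    rw [div_eq_iff hd2, hgoal]
  have hid2 : ∀ w ∈ ball (0:ℂ) 1, m (minv w) = w := by
    intro w hw
    obtain ⟨hd, hmem⟩ := hminvB w hw
    have hd2 : 1 + (starRingEnd ℂ) α * minv w ≠ 0 := (hmB (minv w) hmem).1
    simp only [map_neg] at hd
    have hdm : minv w * (1 + -((starRingEnd ℂ) α) * w) = w + -α := by
      rw [hminvdef]; simp only [map_neg, neg_mul]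
      rw [div_mul_cancel₀]
      simpa [neg_mul] using hd
    have hgoal : minv w + α = w * (1 + (starRingEnd ℂ) α * minv w) := by
      apply mul_right_cancel₀ hd
      linear_combination (1 - (starRingEnd ℂ) α * w) * hdm
    simp only [hmdef]
    rw [div_eq_iff hd2, hgoal]
  set hfun : ℂ → ℂ := fun z => h.ψ (m z) with hfdef
  set kfun : ℂ → ℂ := fun w => minv (g w) with hkdef
  have hm0 : m 0 = α := by simp [hmdef]
  have hf0 : hfun 0 = 0 := by rw [hfdef]; simp only [hm0]; exact hψα
  have hminvα : minv α = 0 := by simp [hminvdef]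
  have hk0 : kfun 0 = 0 := by rw [hkdef]; simp only [← hαdef, hminvα]
  have hfdiff : DifferentiableOn ℂ hfun (ball (0:ℂ) 1) := hψ1.comp hmdiff hmmaps
  have hkdiff : DifferentiableOn ℂ kfun (ball (0:ℂ) 1) := hminvdiff.comp hgd hgm
  have hfmaps : MapsTo hfun (ball (0:ℂ) 1) (ball (0:ℂ) 1) :=
    fun z hz => h.bij.mapsTo (hmmaps hz)
  have hkmaps : MapsTo kfun (ball (0:ℂ) 1) (ball (0:ℂ) 1) :=
    fun z hz => hminvmaps (hgm hz)
  have hkh : ∀ z ∈ ball (0:ℂ) 1, kfun (hfun z) = z := by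
    intro z hz
    rw [hkdef, hfdef]
    simp only
    rw [hgψ (m z) (hmmaps hz)]
    exact hid1 z hz
  have hfd : DifferentiableAt ℂ hfun 0 := hfdiff.differentiableAt (isOpen_ball.mem_nhds h0mem)
  have hkd : DifferentiableAt ℂ kfun 0 := hkdiff.differentiableAt (isOpen_ball.mem_nhds h0mem)
  have hkd' : DifferentiableAt ℂ kfun (hfun 0) := by rw [hf0]; exact hkd
  have hchain : HasDerivAt (kfun ∘ hfun) (deriv kfun (hfun 0) * deriv hfun 0) 0 :=
    hkd'.hasDerivAt.comp 0 hfd.hasDerivAt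
  have hprod : deriv kfun 0 * deriv hfun 0 = 1 := by
    rw [hf0] at hchain
    have hev : (kfun ∘ hfun) =ᶠ[𝓝 (0:ℂ)] id :=
      Filter.eventuallyEq_of_mem (isOpen_ball.mem_nhds h0mem) (fun z hz => hkh z hz)
    exact hchain.unique ((hasDerivAt_id (0:ℂ)).congr_of_eventuallyEq hev)
  have hS1 : ‖deriv hfun 0‖ ≤ 1 :=
    Complex.norm_deriv_le_one_of_mapsTo_ball hfdiff
      (fun z hz => by rw [hf0]; exact ball_subset_closedBall (hfmaps hz)) one_pos
  have hS2 : ‖deriv kfun 0‖ ≤ 1 :=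
    Complex.norm_deriv_le_one_of_mapsTo_ball hkdiff
      (fun z hz => by rw [hk0]; exact ball_subset_closedBall (hkmaps hz)) one_pos
  have habs1 : ‖deriv hfun 0‖ = 1 := by
    have := congrArg norm hprod
    rw [norm_mul, norm_one] at this
    nlinarith [norm_nonneg (deriv hfun 0), norm_nonneg (deriv kfun 0)]
  set C := deriv hfun 0 with hCdef
  have heq : EqOn hfun (fun z => hfun 0 + (z - 0) • dslope hfun 0 0) (ball (0:ℂ) 1) := by
    apply Complex.affine_of_mapsTo_ball_of_exists_norm_dslope_eq_div hfdiff
      (show MapsTo hfun (ball (0:ℂ) 1) (closedBall (hfun 0) 1) from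
        fun z hz => by rw [hf0]; exact ball_subset_closedBall (hfmaps hz)) h0mem
    rw [dslope_same]
    simpa [div_one] using habs1
  have hψform : ∀ w ∈ ball (0:ℂ) 1,
      h.ψ w = C * (w - α) / (1 - (starRingEnd ℂ) α * w) := by
    intro w hw
    have h1 : hfun (minv w) = C * minv w := by
      have := heq (hminvmaps hw)
      rw [hf0, dslope_same] at this
      simpa [smul_eq_mul, mul_comm] using this
    have h2 : hfun (minv w) = h.ψ w := by rw [hfdef]; simp only [hid2 w hw]
    rw [← h2, h1, hminvdef]
    simp only [map_neg]
    rw [mul_div_assoc]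
    ring_nf
  set ρ : ℝ := min R (2 / (1 + ‖α‖)) with hρdef
  have habsα : 0 ≤ ‖α‖ := norm_nonneg α
  have hρ1 : 1 < ρ := by
    apply lt_min hR1
    rw [lt_div_iff₀ (by linarith)]
    linarith
  have hρR : ρ ≤ R := min_le_left _ _
  have hdenom : ∀ z ∈ ball (0:ℂ) ρ, 1 - (starRingEnd ℂ) α * z ≠ 0 := by
    intro z hz
    have hzρ : ‖z‖ < ρ := by simpa [mem_ball_zero_iff] using hz
    have hz' : ‖z‖ < 2 / (1 + ‖α‖) :=
      hzρ.trans_le (by rw [hρdef]; exact min_le_right _ _)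
    have h1 : ‖(starRingEnd ℂ) α * z‖ < 1 := by
      rw [norm_mul, Complex.norm_conj]
      calc ‖α‖ * ‖z‖
          ≤ ‖α‖ * (2 / (1 + ‖α‖)) :=
            mul_le_mul_of_nonneg_left hz'.le habsα
        _ = 2 * ‖α‖ / (1 + ‖α‖) := by ring
        _ < 1 := by rw [div_lt_one (by linarith)]; linarith
    intro h0
    rw [sub_eq_zero] at h0
    rw [← h0] at h1
    simp at h1
  have hψana : AnalyticOnNhd ℂ h.ψ (ball (0:ℂ) ρ) :=
    (hψR.analyticOnNhd isOpen_ball).mono (ball_subset_ball hρR)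
  have hMana : AnalyticOnNhd ℂ
      (fun z => C * (z - α) / (1 - (starRingEnd ℂ) α * z)) (ball (0:ℂ) ρ) := by
    apply DifferentiableOn.analyticOnNhd _ isOpen_ball
    apply DifferentiableOn.div
    · exact ((differentiable_id.sub_const α).const_mul C).differentiableOn
    · exact ((differentiable_id.const_mul _).const_sub 1).differentiableOn
    · exact hdenom
  have h0ρ : (0:ℂ) ∈ ball (0:ℂ) ρ := by rw [mem_ball_zero_iff]; simp; linarith
  have hev0 : h.ψ =ᶠ[𝓝 (0:ℂ)] (fun z => C * (z - α) / (1 - (starRingEnd ℂ) α * z)) :=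
    Filter.eventuallyEq_of_mem (isOpen_ball.mem_nhds h0mem) (fun z hz => hψform z hz)
  have hEqfin : EqOn h.ψ (fun z => C * (z - α) / (1 - (starRingEnd ℂ) α * z)) (ball (0:ℂ) ρ) :=
    hψana.eqOn_of_preconnected_of_eventuallyEq hMana (convex_ball _ _).isPreconnected h0ρ hev0
  exact ⟨C, α, ρ, hρ1, hα1, hdenom, hEqfin⟩
lemma cross_ratio (h : HypAuto) : ∀ z ∈ ball (0:ℂ) 1,
    (h.b - h.ψ z) * (h.a - z) = (h.db : ℂ) * ((h.b - z) * (h.a - h.ψ z)) := by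
  obtain ⟨C, α, ρ, hρ1, hα1, hden, hEq⟩ := mobius_form h
  set β := (starRingEnd ℂ) α with hβ
  have hamem : h.a ∈ ball (0:ℂ) ρ := by
    rw [mem_ball_zero_iff, h.ha]; exact hρ1
  have hbmem : h.b ∈ ball (0:ℂ) ρ := by
    rw [mem_ball_zero_iff, h.hb]; exact hρ1
  have hda' : 1 - β * h.a ≠ 0 := hden _ hamem
  have hdb' : 1 - β * h.b ≠ 0 := hden _ hbmem
  have e1 : C * (h.a - α) = h.a * (1 - β * h.a) := by
    have := hEq hamem
    simp only at this
    rw [h.fixa, eq_div_iff hda'] at this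
    linear_combination -this
  have e2 : C * (h.b - α) = h.b * (1 - β * h.b) := by
    have := hEq hbmem
    simp only at this
    rw [h.fixb, eq_div_iff hdb'] at this
    linear_combination -this
  have hevb : h.ψ =ᶠ[𝓝 h.b] (fun z => C * (z - α) / (1 - β * z)) :=
    Filter.eventuallyEq_of_mem (isOpen_ball.mem_nhds hbmem) hEq
  have hderM : HasDerivAt (fun z => C * (z - α) / (1 - β * z))
      ((C * (1 - β * h.b) - C * (h.b - α) * (-β)) / (1 - β * h.b) ^ 2) h.b := by
    have h1 : HasDerivAt (fun z => C * (z - α)) C h.b := by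
      simpa using ((hasDerivAt_id h.b).sub_const α).const_mul C
    have h2 : HasDerivAt (fun z : ℂ => 1 - β * z) (-β) h.b := by
      simpa using ((hasDerivAt_id h.b).const_mul β).const_sub 1
    exact h1.div h2 hdb'
  have e3 : (h.db : ℂ) * (1 - β * h.b) ^ 2 = C * (1 - β * h.b) + C * (h.b - α) * β := by
    have hd := hevb.deriv_eq
    rw [h.hdb, hderM.deriv] at hd
    rw [hd]
    field_simp
    ring
  have hsubab : h.a - h.b ≠ 0 := sub_ne_zero.mpr h.hab
  have hCval : C = 1 - β * (h.a + h.b) := by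
    apply mul_right_cancel₀ hsubab
    linear_combination e1 - e2
  have hCα : C * α = -(β * h.a * h.b) := by
    linear_combination h.a * hCval - e1
  have hd1 : (h.db : ℂ) * (1 - β * h.b) = 1 - β * h.a := by
    apply mul_right_cancel₀ hdb'
    linear_combination e3 + hCval - β * hCα
  intro z hz
  have hz' : z ∈ ball (0:ℂ) ρ := ball_subset_ball hρ1.le hz
  have hdz : 1 - β * z ≠ 0 := hden z hz'
  have hψz' : h.ψ z * (1 - β * z) = C * (z - α) := by
    rw [hEq hz']
    simp only
    exact div_mul_cancel₀ _ hdz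
  have f1 : h.b * (1 - β * z) - C * (z - α) = (h.b - z) * (1 - β * h.a) := by
    linear_combination (-z) * hCval + hCα
  have f2 : h.a * (1 - β * z) - C * (z - α) = (h.a - z) * (1 - β * h.b) := by
    linear_combination (-z) * hCval + hCα
  apply mul_right_cancel₀ hdz
  linear_combination ((h.db : ℂ) * (h.b - z) - (h.a - z)) * hψz' + (h.a - z) * f1
    - (h.db : ℂ) * (h.b - z) * f2 - (h.b - z) * (h.a - z) * hd1
/-- With `δ = -log ψ'(a) > 0`, the functions
`g_k(z) = ((b-z)/(a-z))^{2πik/δ}`, `k ∈ ℤ`, are bounded on `𝔻`, invariant under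
composition with `ψ` on `𝔻`, and linearly independent (as functions on `𝔻`). -/
theorem invariant_functions_gk (h : HypAuto) :
    0 < -Real.log h.da ∧
    (∀ k : ℤ, ∃ C : ℝ, ∀ z ∈ ball (0:ℂ) 1,
      ‖((h.b - z) / (h.a - z)) ^
        ((2 * Real.pi * k * Complex.I) / (-Real.log h.da : ℂ))‖ ≤ C) ∧
    (∀ k : ℤ, ∀ z ∈ ball (0:ℂ) 1,
      ((h.b - h.ψ z) / (h.a - h.ψ z)) ^
          ((2 * Real.pi * k * Complex.I) / (-Real.log h.da : ℂ)) =
        ((h.b - z) / (h.a - z)) ^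
          ((2 * Real.pi * k * Complex.I) / (-Real.log h.da : ℂ))) ∧
    LinearIndependent ℂ
      (fun k : ℤ => fun z : ball (0:ℂ) 1 =>
        ((h.b - (z : ℂ)) / (h.a - (z : ℂ))) ^
          ((2 * Real.pi * k * Complex.I) / (-Real.log h.da : ℂ))) := by
  obtain ⟨hda0, hda1⟩ := h.hda1
  set δ : ℝ := -Real.log h.da with hδdef
  have hδpos : 0 < δ := by
    rw [hδdef]
    simpa using Real.log_neg hda0 hda1
  have hδc : (-Real.log h.da : ℂ) = ((δ : ℝ) : ℂ) := by rw [hδdef]; push_cast; ring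
  have hdb0 : (0:ℝ) < h.db := lt_trans one_pos h.hdb1
  have hlogdb : Real.log h.db = δ := by
    have := Real.log_mul hda0.ne' hdb0.ne'
    rw [h.hmulder, Real.log_one] at this
    rw [hδdef]; linarith
  set τ : ℤ → ℝ := fun k => 2 * Real.pi * k / δ with hτdef
  have hε : ∀ k : ℤ, (2 * Real.pi * k * Complex.I) / (-Real.log h.da : ℂ)
      = Complex.I * ((τ k : ℝ) : ℂ) := by
    intro k
    have hδc0 : ((δ:ℝ):ℂ) ≠ 0 := by exact_mod_cast hδpos.ne'
    rw [hδc, hτdef]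
    push_cast
    field_simp
    try ring
  have hsub1 : ∀ c : ℂ, ‖c‖ = 1 → ∀ z ∈ ball (0:ℂ) 1, c - z ≠ 0 := by
    intro c hc z hz h0
    rw [sub_eq_zero] at h0
    rw [mem_ball_zero_iff, ← h0, hc] at hz
    exact lt_irrefl _ hz
  have hu : ∀ z ∈ ball (0:ℂ) 1, (h.b - z) / (h.a - z) ≠ 0 :=
    fun z hz => div_ne_zero (hsub1 h.b h.hb z hz) (hsub1 h.a h.ha z hz)
  refine ⟨hδpos, ?_, ?_, ?_⟩
  · -- boundedness
    intro k
    refine ⟨Real.exp (Real.pi * |τ k|), ?_⟩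
    intro z hz
    rw [hε k, Complex.norm_cpow_of_ne_zero (hu z hz)]
    have hre : (Complex.I * ((τ k : ℝ) : ℂ)).re = 0 := by simp
    have him : (Complex.I * ((τ k : ℝ) : ℂ)).im = τ k := by simp
    rw [hre, him, Real.rpow_zero]
    rw [div_le_iff₀ (Real.exp_pos _), ← Real.exp_add]
    calc (1:ℝ) = Real.exp 0 := Real.exp_zero.symm
      _ ≤ _ := by
          apply Real.exp_le_exp.mpr
          have h1 : |Complex.arg ((h.b - z) / (h.a - z)) * τ k| ≤ Real.pi * |τ k| := by
            rw [abs_mul]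
            exact mul_le_mul_of_nonneg_right (Complex.abs_arg_le_pi _) (abs_nonneg _)
          have h2 := neg_abs_le (Complex.arg ((h.b - z) / (h.a - z)) * τ k)
          linarith
  · -- invariance
    intro k z hz
    have hψmem : h.ψ z ∈ ball (0:ℂ) 1 := h.bij.mapsTo hz
    have hbase : (h.b - h.ψ z) / (h.a - h.ψ z) = (h.db : ℂ) * ((h.b - z) / (h.a - z)) := by
      rw [mul_div_assoc', div_eq_div_iff (hsub1 h.a h.ha _ hψmem) (hsub1 h.a h.ha z hz)]
      linear_combination cross_ratio h z hz
    have hone : (h.db : ℂ) ^ ((2 * Real.pi * k * Complex.I) / (-Real.log h.da : ℂ)) = 1 := by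
      rw [cpow_def_of_ne_zero (ofReal_ne_zero.mpr hdb0.ne'),
        ← Complex.ofReal_log hdb0.le, hlogdb, hδc]
      have harg : ((δ:ℝ):ℂ) * ((2 * Real.pi * k * Complex.I) / ((δ:ℝ):ℂ)) = (k:ℂ) * (2 * Real.pi * Complex.I) := by
        rw [mul_div_assoc']
        rw [mul_comm]
        rw [mul_div_assoc]
        rw [div_self (by exact_mod_cast hδpos.ne' : ((δ:ℝ):ℂ) ≠ 0), mul_one]
        push_cast
        ring
      rw [harg, Complex.exp_int_mul_two_pi_mul_I]
    rw [hbase, real_mul_cpow hdb0 (hu z hz), hone, one_mul]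
  · -- linear independence
    set ν : ℂ := h.a * (starRingEnd ℂ) h.b - 1 with hνdef
    have hb0 : h.b ≠ 0 := by
      intro h0
      have := h.hb
      rw [h0] at this
      simp at this
    have ha' : h.a * (starRingEnd ℂ) h.a = 1 := by
      rw [Complex.mul_conj, Complex.normSq_eq_norm_sq, h.ha]; norm_num
    have hb' : h.b * (starRingEnd ℂ) h.b = 1 := by
      rw [Complex.mul_conj, Complex.normSq_eq_norm_sq, h.hb]; norm_num
    have hν : ν ≠ 0 := by
      intro h0
      rw [hνdef, sub_eq_zero] at h0
      have hc : (starRingEnd ℂ) h.b ≠ 0 := by simpa using hb0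
      exact h.hab (mul_right_cancel₀ hc (h0.trans hb'.symm))
    have hνconj : (starRingEnd ℂ) ν ≠ 0 := by simpa using hν
    have hνsq : 0 < normSq ν := normSq_pos.mpr hν
    have hray : ∀ t : ℝ, 0 < t → ∃ z ∈ ball (0:ℂ) 1,
        (h.b - z) / (h.a - z) = (t:ℂ) * (starRingEnd ℂ) ν := by
      intro t ht
      set ζ : ℂ := (t:ℂ) * (starRingEnd ℂ) ν with hζdef
      have KC : (h.a * ζ - h.b) * (starRingEnd ℂ) (h.a * ζ - h.b)
            + 2*(t:ℂ)*(ν * (starRingEnd ℂ) ν)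
          = (ζ - 1) * (starRingEnd ℂ) (ζ - 1) := by
        simp only [hζdef, hνdef, map_mul, map_sub, map_one, Complex.conj_conj,
          Complex.conj_ofReal]
        linear_combination ((t:ℂ)^2 * ((starRingEnd ℂ) h.a * h.b - 1)
          * (h.a * (starRingEnd ℂ) h.b - 1)) * ha' + hb'
      have KR : normSq (h.a * ζ - h.b) + 2*t*normSq ν = normSq (ζ - 1) := by
        have hKC := KC
        rw [Complex.mul_conj, Complex.mul_conj, Complex.mul_conj] at hKC
        exact_mod_cast hKC
      have hζ1 : ζ - 1 ≠ 0 := by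
        intro h0
        rw [h0] at KR
        simp only [normSq_zero] at KR
        nlinarith [normSq_nonneg (h.a * ζ - h.b)]
      set z : ℂ := (h.a * ζ - h.b) / (ζ - 1) with hzdef
      have hzmem : z ∈ ball (0:ℂ) 1 := by
        rw [mem_ball_zero_iff, hzdef, norm_div,
          div_lt_one (by simpa [norm_pos_iff] using hζ1), Complex.norm_def,
          Complex.norm_def]
        apply Real.sqrt_lt_sqrt (normSq_nonneg _)
        nlinarith
      have heq2 : h.b - z = ζ * (h.a - z) := by
        rw [hzdef]
        field_simp
        ring
      have haz : h.a - z ≠ 0 := by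
        intro h0
        rw [h0, mul_zero, sub_eq_zero] at heq2
        rw [sub_eq_zero] at h0
        exact h.hab (h0.trans heq2.symm)
      exact ⟨z, hzmem, by rw [heq2, mul_div_assoc, div_self haz, mul_one]⟩
    set χ : ℤ → (Multiplicative ℝ →* ℂ) := fun k =>
      { toFun := fun x => Complex.exp (Complex.I * ((τ k : ℝ) : ℂ)
          * ((Multiplicative.toAdd x : ℝ) : ℂ)),
        map_one' := by simp
        map_mul' := by
          intro x y
          simp only [toAdd_mul, Complex.ofReal_add]
          rw [mul_add, Complex.exp_add] } with hχdef
    have hτinj : ∀ k k' : ℤ, k ≠ k' → τ k - τ k' ≠ 0 := by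
      intro k k' hkk
      rw [hτdef]
      simp only
      rw [div_sub_div_same]
      apply div_ne_zero _ hδpos.ne'
      rw [show 2 * Real.pi * (k:ℝ) - 2 * Real.pi * (k':ℝ) = 2 * Real.pi * ((k:ℝ) - (k':ℝ)) by ring]
      apply mul_ne_zero (by positivity)
      rw [sub_ne_zero]
      exact_mod_cast hkk
    have hχinj : Function.Injective χ := by
      intro k k' hkk
      by_contra hne
      have hd0 : τ k - τ k' ≠ 0 := hτinj k k' hne
      have happ := DFunLike.congr_fun hkk (Multiplicative.ofAdd (Real.pi / (τ k - τ k')))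
      simp only [hχdef, MonoidHom.coe_mk, OneHom.coe_mk, toAdd_ofAdd] at happ
      have hexp : Complex.exp (Complex.I * ((τ k : ℝ):ℂ) * ((Real.pi / (τ k - τ k') : ℝ):ℂ)
          - Complex.I * ((τ k' : ℝ):ℂ) * ((Real.pi / (τ k - τ k') : ℝ):ℂ)) = 1 := by
        rw [Complex.exp_sub, happ, div_self (Complex.exp_ne_zero _)]
      have hd0' : ((τ k : ℝ):ℂ) - ((τ k' : ℝ):ℂ) ≠ 0 := by
        rw [← Complex.ofReal_sub]
        exact_mod_cast hd0
      have harg2 : Complex.I * ((τ k : ℝ):ℂ) * ((Real.pi / (τ k - τ k') : ℝ):ℂ)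
          - Complex.I * ((τ k' : ℝ):ℂ) * ((Real.pi / (τ k - τ k') : ℝ):ℂ)
          = (Real.pi : ℂ) * Complex.I := by
        push_cast
        field_simp
      rw [harg2, Complex.exp_pi_mul_I] at hexp
      norm_num at hexp
    have hLI : LinearIndependent ℂ (fun k : ℤ => ⇑(χ k)) :=
      (linearIndependent_monoidHom (Multiplicative ℝ) ℂ).comp χ hχinj
    rw [linearIndependent_iff']
    intro s gcoef hsum k hk
    set dk : ℤ → ℂ := fun i => ((starRingEnd ℂ) ν) ^ (Complex.I * ((τ i : ℝ):ℂ)) with hdkdef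
    have hdk0 : ∀ i, dk i ≠ 0 := by
      intro i
      rw [hdkdef]
      simp only
      rw [cpow_def_of_ne_zero hνconj]
      exact Complex.exp_ne_zero _
    have hclaim : ∑ i ∈ s, (gcoef i * dk i) • ⇑(χ i) = 0 := by
      funext x
      set xr : ℝ := Multiplicative.toAdd x with hxrdef
      have ht : (0:ℝ) < Real.exp xr := Real.exp_pos xr
      obtain ⟨z, hzmem, hratio⟩ := hray (Real.exp xr) ht
      have hpt := congrFun hsum (⟨z, hzmem⟩ : ball (0:ℂ) 1)
      simp only [Finset.sum_apply, Pi.smul_apply, smul_eq_mul, Pi.zero_apply] at hpt ⊢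
      rw [← hpt]
      apply Finset.sum_congr rfl
      intro i hi
      rw [hε i, hratio, real_mul_cpow ht hνconj]
      rw [hdkdef, hχdef]
      simp only [MonoidHom.coe_mk, OneHom.coe_mk, ← hxrdef]
      rw [cpow_def_of_ne_zero (ofReal_ne_zero.mpr ht.ne'), ← Complex.ofReal_log ht.le,
        Real.log_exp]
      rw [show ((xr:ℝ):ℂ) * (Complex.I * ((τ i:ℝ):ℂ)) = Complex.I * ((τ i:ℝ):ℂ) * ((xr:ℝ):ℂ)
        from by ring]
      ring
    have hzero := linearIndependent_iff'.mp hLI s (fun i => gcoef i * dk i) hclaim k hk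
    rcases mul_eq_zero.mp hzero with h0 | h0
    · exact h0
    · exact absurd h0 (hdk0 k)
end
end
end
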